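/- arXiv:1104.3919 — 8 statements merged into one kernel-verified Lean document; each statement's English description precedes it below -/
import Mathlib

section
/- Let G be an interval graph on vertex set V whose right endpoints r(v) are pairwise distinct, let m = min_{v ∈ V} r(v), and let C1 = {v ∈ V : l(v) ≤ m}. Then there exists a triangle packing P of G of maximum cardinality such that the set U of vertices of C1 not covered by any triangle of P satisfies: |U| ≤ 2, and U is an initial segment of C1 under the ordering by right endpoints (that is, if v ∈ U and u ∈ C1 with r(u) < r(v), then u ∈ U). -/
/-- A triangle in a simple graph: a set of three pairwise adjacent vertices. -/
def IsTriangle {V : Type*} (G : SimpleGraph V) (T : Finset V) : Prop :=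
  T.card = 3 ∧ (T : Set V).Pairwise G.Adj

/-- A triangle packing: a collection of pairwise vertex-disjoint triangles. -/
def IsTrianglePacking {V : Type*} (G : SimpleGraph V) (P : Finset (Finset V)) : Prop :=
  (∀ T ∈ P, IsTriangle G T) ∧
    (P : Set (Finset V)).Pairwise fun S T => Disjoint S T

open scoped Classical

section Aux

variable {V : Type*} (l r : V → ℝ) (w : V) [Fintype V]

noncomputable def tpC1 : Finset V := Finset.univ.filter fun v => l v ≤ r w

noncomputable def tpRank (v : V) : ℕ :=
  ((tpC1 l r w).filter fun u => r u ≤ r v).card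

noncomputable def tpCov (P : Finset (Finset V)) : Finset V :=
  (tpC1 l r w).filter fun v => ∃ T ∈ P, v ∈ T

noncomputable def tpWt (P : Finset (Finset V)) : ℕ :=
  ∑ v ∈ tpCov l r w P, tpRank l r w v

noncomputable def tpKey (P : Finset (Finset V)) : ℕ :=
  P.card * ((tpC1 l r w).card * (tpC1 l r w).card + 1) + tpWt l r w P

lemma tpWt_le (P : Finset (Finset V)) :
    tpWt l r w P ≤ (tpC1 l r w).card * (tpC1 l r w).card := by
  have h1 : ∀ v ∈ tpCov l r w P, tpRank l r w v ≤ (tpC1 l r w).card := fun v _ =>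
    Finset.card_filter_le _ _
  calc tpWt l r w P ≤ (tpCov l r w P).card * (tpC1 l r w).card := by
        simpa [mul_comm, tpWt] using Finset.sum_le_card_nsmul _ _ _ h1
    _ ≤ (tpC1 l r w).card * (tpC1 l r w).card :=
        Nat.mul_le_mul_right _ (Finset.card_filter_le _ _)

lemma tpKey_card_le {P Q : Finset (Finset V)}
    (h : tpKey l r w Q ≤ tpKey l r w P) : Q.card ≤ P.card := by
  by_contra hc
  push_neg at hc
  have hB := tpWt_le l r w P
  have h1 : P.card + 1 ≤ Q.card := hc
  simp only [tpKey] at h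
  nlinarith [Nat.mul_le_mul_right ((tpC1 l r w).card * (tpC1 l r w).card + 1) h1]

end Aux

/-- Let `G` be an interval graph with pairwise distinct right endpoints,
`m = r w` the minimum right endpoint and `C1 = {v | l v ≤ m}` the first maximal clique.
There is a maximum triangle packing `P` such that the set `U` of vertices of `C1` not
covered by `P` has at most 2 elements and is an initial segment of `C1` in the ordering
by right endpoints. -/
theorem stmt1 {V : Type*} [Fintype V] (G : SimpleGraph V) (l r : V → ℝ)
    (hlr : ∀ v, l v ≤ r v)
    (hadj : ∀ u v, G.Adj u v ↔ u ≠ v ∧ l u ≤ r v ∧ l v ≤ r u)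
    (hinj : Function.Injective r)
    (w : V) (hw : ∀ v, r w ≤ r v) :
    ∃ P : Finset (Finset V), IsTrianglePacking G P ∧
      (∀ Q : Finset (Finset V), IsTrianglePacking G Q → Q.card ≤ P.card) ∧
      {v | l v ≤ r w ∧ ∀ T ∈ P, v ∉ T}.ncard ≤ 2 ∧
      (∀ v, (l v ≤ r w ∧ ∀ T ∈ P, v ∉ T) →
        ∀ u, l u ≤ r w → r u < r v → (l u ≤ r w ∧ ∀ T ∈ P, u ∉ T)) := by
  classical
  have hadjC1 : ∀ x y : V, x ≠ y → l x ≤ r w → l y ≤ r w → G.Adj x y := by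
    intro x y hxy hx hy
    exact (hadj x y).mpr ⟨hxy, hx.trans (hw y), hy.trans (hw x)⟩
  set S : Finset (Finset (Finset V)) :=
    Finset.univ.filter (fun P => IsTrianglePacking G P) with hS
  have hSne : S.Nonempty := ⟨∅, Finset.mem_filter.mpr ⟨Finset.mem_univ _, by simp [IsTrianglePacking]⟩⟩
  obtain ⟨P, hPS, hPmax⟩ := S.exists_max_image (tpKey l r w) hSne
  have hpack : IsTrianglePacking G P := (Finset.mem_filter.mp hPS).2
  have hmaxcard : ∀ Q, IsTrianglePacking G Q → Q.card ≤ P.card := by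
    intro Q hQ
    exact tpKey_card_le l r w (hPmax Q (by simp [hS, hQ]))
  refine ⟨P, hpack, hmaxcard, ?_, ?_⟩
  · -- at most 2 uncovered clique vertices
    have hUeq : {v | l v ≤ r w ∧ ∀ T ∈ P, v ∉ T} =
        ↑((tpC1 l r w).filter fun v => ∀ T ∈ P, v ∉ T) := by
      ext v; simp [tpC1]
    rw [hUeq, Set.ncard_coe_finset]
    by_contra hcard
    push_neg at hcard
    obtain ⟨t, hts, ht3⟩ := Finset.exists_subset_card_eq (show 3 ≤ ((tpC1 l r w).filter fun v => ∀ T ∈ P, v ∉ T).card by omega)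
    have htU : ∀ x ∈ t, l x ≤ r w ∧ ∀ T ∈ P, x ∉ T := by
      intro x hx
      have := hts hx
      simp only [tpC1, Finset.mem_filter, Finset.mem_univ, true_and] at this
      exact this
    have htri : IsTriangle G t := by
      refine ⟨ht3, ?_⟩
      intro x hx y hy hxy
      exact hadjC1 x y hxy (htU x hx).1 (htU y hy).1
    have htP : t ∉ P := by
      intro habs
      obtain ⟨x, hx⟩ := Finset.card_pos.mp (by omega : 0 < t.card)
      exact (htU x hx).2 t habs hx
    have hQpack : IsTrianglePacking G (insert t P) := by
      constructor
      · intro T hT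
        rcases Finset.mem_insert.mp hT with h | h
        · exact h ▸ htri
        · exact hpack.1 T h
      · intro S1 h1 S2 h2 hne
        simp only [Finset.coe_insert, Set.mem_insert_iff, Finset.mem_coe] at h1 h2
        have hdisj : ∀ T ∈ P, Disjoint t T := by
          intro T hT
          rw [Finset.disjoint_left]
          intro x hx
          exact (htU x hx).2 T hT
        rcases h1 with h1 | h1 <;> rcases h2 with h2 | h2
        · exact absurd (h1.trans h2.symm) hne
        · exact h1 ▸ hdisj S2 h2
        · exact h2 ▸ (hdisj S1 h1).symm
        · exact hpack.2 h1 h2 hne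
    have := hmaxcard _ hQpack
    rw [Finset.card_insert_of_notMem htP] at this
    omega
  · -- initial segment
    intro v hv u hu1 hu2
    refine ⟨hu1, ?_⟩
    by_contra hcov
    push_neg at hcov
    obtain ⟨T, hTP, huT⟩ := hcov
    have hvnot := hv.2
    have hvT : v ∉ T := fun h => hvnot T hTP h
    set T' : Finset V := insert v (T.erase u) with hT'
    have hTtri : IsTriangle G T := hpack.1 T hTP
    have hvnT'e : v ∉ T.erase u := fun h => hvT (Finset.mem_of_mem_erase h)
    have hT'card : T'.card = 3 := by
      rw [hT', Finset.card_insert_of_notMem hvnT'e, Finset.card_erase_of_mem huT, hTtri.1]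
    have hadjvx : ∀ x ∈ T.erase u, G.Adj v x := by
      intro x hx
      have hxT : x ∈ T := Finset.mem_of_mem_erase hx
      have hxu : x ≠ u := Finset.ne_of_mem_erase hx
      have hux : G.Adj u x := hTtri.2 huT hxT (fun h => hxu h.symm)
      obtain ⟨-, -, hlx⟩ := (hadj u x).mp hux
      exact (hadj v x).mpr ⟨fun h => hvT (h ▸ hxT), hv.1.trans (hw x),
        hlx.trans (le_of_lt hu2)⟩
    have hT'tri : IsTriangle G T' := by
      refine ⟨hT'card, ?_⟩
      intro x hx y hy hxy
      simp only [hT', Finset.coe_insert, Set.mem_insert_iff, Finset.mem_coe] at hx hy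
      rcases hx with hx | hx <;> rcases hy with hy | hy
      · exact absurd (hx.trans hy.symm) hxy
      · exact hx ▸ hadjvx y hy
      · exact hy ▸ (hadjvx x hx).symm
      · exact hTtri.2 (Finset.mem_of_mem_erase hx) (Finset.mem_of_mem_erase hy) hxy
    set Q : Finset (Finset V) := insert T' (P.erase T) with hQ
    have hT'notP : T' ∉ P := by
      intro habs
      exact hvnot T' habs (Finset.mem_insert_self _ _)
    have hQpack : IsTrianglePacking G Q := by
      constructor
      · intro S' hSQ
        rcases Finset.mem_insert.mp hSQ with h | h
        · exact h ▸ hT'tri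
        · exact hpack.1 _ (Finset.mem_of_mem_erase h)
      · intro S1 h1 S2 h2 hne
        simp only [hQ, Finset.coe_insert, Set.mem_insert_iff, Finset.mem_coe] at h1 h2
        have hdisj : ∀ S' ∈ P.erase T, Disjoint T' S' := by
          intro S' hSP
          have hSP' : S' ∈ P := Finset.mem_of_mem_erase hSP
          have hST : S' ≠ T := Finset.ne_of_mem_erase hSP
          rw [hT', Finset.disjoint_insert_left]
          exact ⟨fun h => hvnot S' hSP' h,
            Finset.disjoint_of_subset_left (Finset.erase_subset _ _)
              (hpack.2 hTP hSP' (fun h => hST h.symm))⟩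
        rcases h1 with h1 | h1 <;> rcases h2 with h2 | h2
        · exact absurd (h1.trans h2.symm) hne
        · exact h1 ▸ hdisj S2 h2
        · exact h2 ▸ (hdisj S1 h1).symm
        · exact hpack.2 (Finset.mem_of_mem_erase h1) (Finset.mem_of_mem_erase h2) hne
    have hQcard : Q.card = P.card := by
      rw [hQ, Finset.card_insert_of_notMem (fun h => hT'notP (Finset.mem_of_mem_erase h)),
        Finset.card_erase_of_mem hTP]
      have : 0 < P.card := Finset.card_pos.mpr ⟨T, hTP⟩
      omega
    have hcovEq : tpCov l r w Q = insert v ((tpCov l r w P).erase u) := by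
      ext x
      simp only [tpCov, tpC1, Finset.mem_filter, Finset.mem_univ, true_and,
        Finset.mem_insert, Finset.mem_erase]
      constructor
      · rintro ⟨hxC, S', hSQ, hxS⟩
        rcases Finset.mem_insert.mp hSQ with h | h
        · subst h
          rcases Finset.mem_insert.mp hxS with h | h
          · exact Or.inl h
          · exact Or.inr ⟨Finset.ne_of_mem_erase h, hxC, T, hTP, Finset.mem_of_mem_erase h⟩
        · refine Or.inr ⟨?_, hxC, S', Finset.mem_of_mem_erase h, hxS⟩
          intro hxu
          subst hxu
          exact (Finset.disjoint_left.mp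
            (hpack.2 hTP (Finset.mem_of_mem_erase h)
              (fun he => Finset.ne_of_mem_erase h he.symm)) huT) hxS
      · rintro (rfl | ⟨hxu, hxC, S', hSP, hxS⟩)
        · exact ⟨hv.1, T', Finset.mem_insert_self _ _, by simp [hT']⟩
        · by_cases hST : S' = T
          · subst hST
            refine ⟨hxC, T', Finset.mem_insert_self _ _, ?_⟩
            rw [hT']
            exact Finset.mem_insert_of_mem (Finset.mem_erase.mpr ⟨hxu, hxS⟩)
          · exact ⟨hxC, S', Finset.mem_insert_of_mem (Finset.mem_erase.mpr ⟨hST, hSP⟩), hxS⟩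
    have huCov : u ∈ tpCov l r w P := by
      simp only [tpCov, tpC1, Finset.mem_filter, Finset.mem_univ, true_and]
      exact ⟨hu1, T, hTP, huT⟩
    have hvCov : v ∉ tpCov l r w P := by
      simp only [tpCov, tpC1, Finset.mem_filter, Finset.mem_univ, true_and]
      rintro ⟨-, S', hSP, hvS⟩
      exact hvnot S' hSP hvS
    have hrank : tpRank l r w u < tpRank l r w v := by
      apply Finset.card_lt_card
      rw [Finset.ssubset_iff_of_subset]
      · refine ⟨v, ?_, ?_⟩
        · simp only [tpC1, Finset.mem_filter, Finset.mem_univ, true_and]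
          exact ⟨hv.1, le_refl _⟩
        · simp only [tpC1, Finset.mem_filter, Finset.mem_univ, true_and, not_and]
          intro _
          exact not_le.mpr hu2
      · intro x hx
        simp only [tpC1, Finset.mem_filter, Finset.mem_univ, true_and] at hx ⊢
        exact ⟨hx.1, hx.2.trans (le_of_lt hu2)⟩
    have hwt : tpWt l r w P < tpWt l r w Q := by
      rw [tpWt, tpWt, hcovEq,
        Finset.sum_insert (fun h => hvCov (Finset.mem_of_mem_erase h)),
        ← Finset.add_sum_erase _ _ huCov]
      exact Nat.add_lt_add_right hrank _
    have hQS : Q ∈ S := by simp [hS, hQpack]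
    have hle := hPmax Q hQS
    simp only [tpKey] at hle
    rw [hQcard] at hle
    linarith
end

section
/- Let G be an interval graph on vertex set V whose right endpoints r(v) are pairwise distinct, let m = min_{v ∈ V} r(v), and let C1 = {v ∈ V : l(v) ≤ m}. Suppose |C1| ≥ 3 and let α, β, γ be the three vertices of C1 with the smallest right endpoints, with r(α) < r(β) < r(γ). If P is a triangle packing of G such that α is covered by a triangle of P, then there exists a triangle packing P′ of G with |P′| = |P| such that {α, β, γ} is a triangle of P′. -/
/-- Auxiliary swapping lemma: if `T ∈ P` is the triangle containing `α` and `x, y ∈ T`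
can play the roles of `β` and `γ` (they inherit all relevant adjacencies outside `T`),
then we can rearrange `P` into a packing of the same size containing `{α, β, γ}`. -/
lemma aux_swap {V : Type*} [Fintype V] [DecidableEq V] (G : SimpleGraph V)
    (P : Finset (Finset V)) (hP : IsTrianglePacking G P)
    (T : Finset V) (hT : T ∈ P) (α β γ x y : V)
    (habc : IsTriangle G ({α, β, γ} : Finset V))
    (hαβ : α ≠ β) (hαγ : α ≠ γ) (hβγ : β ≠ γ)
    (hαT : α ∈ T) (hxT : x ∈ T) (hyT : y ∈ T)
    (hxy : x ≠ y) (hxα : x ≠ α) (hyα : y ≠ α) (hxγ : x ≠ γ) (hyβ : y ≠ β)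
    (hadjx : ∀ z, z ∉ T → G.Adj β z → G.Adj x z)
    (hadjy : ∀ z, z ∉ T → G.Adj γ z → G.Adj y z) :
    ∃ P' : Finset (Finset V), IsTrianglePacking G P' ∧ P'.card = P.card ∧
      ({α, β, γ} : Finset V) ∈ P' := by
  classical
  set σ : Equiv.Perm V := (Equiv.swap γ y).trans (Equiv.swap β x) with hσdef
  have hσβ : σ β = x := by
    have h1 : Equiv.swap γ y β = β := Equiv.swap_apply_of_ne_of_ne hβγ (Ne.symm hyβ)
    simp [hσdef, Equiv.trans_apply, h1]
  have hσγ : σ γ = y := by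
    have h1 : Equiv.swap β x y = y :=
      Equiv.swap_apply_of_ne_of_ne hyβ (Ne.symm hxy)
    simp [hσdef, Equiv.trans_apply, h1]
  have hσα : σ α = α := by
    have h1 : Equiv.swap γ y α = α := Equiv.swap_apply_of_ne_of_ne hαγ (Ne.symm hyα)
    have h2 : Equiv.swap β x α = α := Equiv.swap_apply_of_ne_of_ne hαβ (Ne.symm hxα)
    simp [hσdef, Equiv.trans_apply, h1, h2]
  have hσx : σ x = β := by
    have h1 : Equiv.swap γ y x = x := Equiv.swap_apply_of_ne_of_ne hxγ hxy
    simp [hσdef, Equiv.trans_apply, h1]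
  have hσy : σ y = γ := by
    have h1 : Equiv.swap β x γ = γ :=
      Equiv.swap_apply_of_ne_of_ne (Ne.symm hβγ) (Ne.symm hxγ)
    simp [hσdef, Equiv.trans_apply, h1]
  have hσfix : ∀ u, u ≠ β → u ≠ γ → u ≠ x → u ≠ y → σ u = u := by
    intro u h1 h2 h3 h4
    have e1 : Equiv.swap γ y u = u := Equiv.swap_apply_of_ne_of_ne h2 h4
    have e2 : Equiv.swap β x u = u := Equiv.swap_apply_of_ne_of_ne h1 h3
    simp [hσdef, Equiv.trans_apply, e1, e2]
  -- triangles other than T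
  have hdisjT : ∀ S ∈ P.erase T, Disjoint S T := fun S hS =>
    hP.2 (Finset.mem_coe.mpr (Finset.mem_of_mem_erase hS)) (Finset.mem_coe.mpr hT)
      (Finset.ne_of_mem_erase hS)
  have hσS : ∀ S ∈ P.erase T, ∀ u ∈ S, σ u = if u = β then x else if u = γ then y else u := by
    intro S hS u hu
    have hunT : u ∉ T := Finset.disjoint_left.mp (hdisjT S hS) hu
    by_cases h1 : u = β
    · subst h1; simp [hσβ]
    · by_cases h2 : u = γ
      · subst h2; simp [hσγ, h1]
      · rw [if_neg h1, if_neg h2]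
        exact hσfix u h1 h2 (fun e => hunT (e ▸ hxT)) (fun e => hunT (e ▸ hyT))
  have hTtri : IsTriangle G T := hP.1 T hT
  have hadjxy : G.Adj x y :=
    hTtri.2 (Finset.mem_coe.mpr hxT) (Finset.mem_coe.mpr hyT) hxy
  -- images of other triangles are triangles
  have himg_tri : ∀ S ∈ P.erase T, IsTriangle G (S.image σ) := by
    intro S hS
    have hStri : IsTriangle G S := hP.1 S (Finset.mem_of_mem_erase hS)
    constructor
    · rw [Finset.card_image_of_injective _ σ.injective, hStri.1]
    · intro a ha b hb hne
      rw [Finset.mem_coe, Finset.mem_image] at ha hb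
      obtain ⟨u, hu, rfl⟩ := ha
      obtain ⟨v, hv, rfl⟩ := hb
      have huv : u ≠ v := fun e => hne (e ▸ rfl)
      have hAdjuv : G.Adj u v :=
        hStri.2 (Finset.mem_coe.mpr hu) (Finset.mem_coe.mpr hv) huv
      have hunT : u ∉ T := Finset.disjoint_left.mp (hdisjT S hS) hu
      have hvnT : v ∉ T := Finset.disjoint_left.mp (hdisjT S hS) hv
      rw [hσS S hS u hu, hσS S hS v hv]
      by_cases h1 : u = β <;> by_cases h2 : v = β <;>
        by_cases h3 : u = γ <;> by_cases h4 : v = γ <;>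
        simp_all <;>
        first
          | exact hadjxy
          | exact hadjxy.symm
          | exact hadjx v hvnT (by simpa [h1] using hAdjuv)
          | exact (hadjx u hunT (by simpa [h2] using hAdjuv.symm)).symm
          | exact hadjy v hvnT (by simpa [h3] using hAdjuv)
          | exact (hadjy u hunT (by simpa [h4] using hAdjuv.symm)).symm
  -- {α, β, γ} is disjoint from every image
  have hdisj_abc : ∀ S ∈ P.erase T, Disjoint ({α, β, γ} : Finset V) (S.image σ) := by
    intro S hS
    rw [Finset.disjoint_left]
    intro z hz hz2
    rw [Finset.mem_image] at hz2
    obtain ⟨u, hu, rfl⟩ := hz2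
    have hunT : u ∉ T := Finset.disjoint_left.mp (hdisjT S hS) hu
    simp only [Finset.mem_insert, Finset.mem_singleton] at hz
    rcases hz with h | h | h
    · exact hunT (by rw [σ.injective (h.trans hσα.symm)]; exact hαT)
    · exact hunT (by rw [σ.injective (h.trans hσx.symm)]; exact hxT)
    · exact hunT (by rw [σ.injective (h.trans hσy.symm)]; exact hyT)
  refine ⟨insert ({α, β, γ} : Finset V) ((P.erase T).image (fun S => S.image σ)), ?_, ?_, ?_⟩
  · constructor
    · intro S' hS'
      rw [Finset.mem_insert] at hS'
      rcases hS' with rfl | hS'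
      · exact habc
      · rw [Finset.mem_image] at hS'
        obtain ⟨S, hS, rfl⟩ := hS'
        exact himg_tri S hS
    · intro S1 h1 S2 h2 hne
      rw [Finset.mem_coe, Finset.mem_insert] at h1 h2
      rcases h1 with rfl | h1 <;> rcases h2 with rfl | h2
      · exact absurd rfl hne
      · rw [Finset.mem_image] at h2
        obtain ⟨S, hS, rfl⟩ := h2
        exact hdisj_abc S hS
      · rw [Finset.mem_image] at h1
        obtain ⟨S, hS, rfl⟩ := h1
        exact (hdisj_abc S hS).symm
      · rw [Finset.mem_image] at h1 h2
        obtain ⟨S1, hS1, rfl⟩ := h1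
        obtain ⟨S2, hS2, rfl⟩ := h2
        have hS12 : S1 ≠ S2 := fun e => hne (e ▸ rfl)
        exact (Finset.disjoint_image σ.injective).mpr
          (hP.2 (Finset.mem_coe.mpr (Finset.mem_of_mem_erase hS1))
            (Finset.mem_coe.mpr (Finset.mem_of_mem_erase hS2)) hS12)
  · have hnm : ({α, β, γ} : Finset V) ∉ (P.erase T).image (fun S => S.image σ) := by
      intro h
      rw [Finset.mem_image] at h
      obtain ⟨S, hS, heq⟩ := h
      have := hdisj_abc S hS
      rw [heq] at this
      have hαmem : α ∈ ({α, β, γ} : Finset V) := by simp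
      exact (Finset.disjoint_left.mp this hαmem) hαmem
    rw [Finset.card_insert_of_notMem hnm,
      Finset.card_image_of_injective _ (Finset.image_injective σ.injective),
      Finset.card_erase_of_mem hT]
    have : 1 ≤ P.card := Finset.card_pos.mpr ⟨T, hT⟩
    omega
  · exact Finset.mem_insert_self _ _

/-- Let `G` be an interval graph with pairwise distinct right endpoints,
`m = r w` the minimum right endpoint, `C1 = {v | l v ≤ m}`, and let `α, β, γ` be the
three vertices of `C1` with the smallest right endpoints (in this order). If `P` is a
triangle packing covering `α`, then there is a triangle packing `P'` of the same
cardinality containing the triangle `{α, β, γ}`. -/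
theorem stmt2 {V : Type*} [Fintype V] [DecidableEq V] (G : SimpleGraph V) (l r : V → ℝ)
    (hlr : ∀ v, l v ≤ r v)
    (hadj : ∀ u v, G.Adj u v ↔ u ≠ v ∧ l u ≤ r v ∧ l v ≤ r u)
    (hinj : Function.Injective r)
    (w : V) (hw : ∀ v, r w ≤ r v)
    (α β γ : V) (hα : l α ≤ r w) (hβ : l β ≤ r w) (hγ : l γ ≤ r w)
    (hαβ : r α < r β) (hβγ : r β < r γ)
    (hsmall : ∀ v, l v ≤ r w → v ≠ α → v ≠ β → v ≠ γ → r γ < r v)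
    (P : Finset (Finset V)) (hP : IsTrianglePacking G P)
    (hcov : ∃ T ∈ P, α ∈ T) :
    ∃ P' : Finset (Finset V), IsTrianglePacking G P' ∧ P'.card = P.card ∧
      ({α, β, γ} : Finset V) ∈ P' := by
  classical
  obtain ⟨T, hT, hαT⟩ := hcov
  -- distinctness of α, β, γ
  have hαβ' : α ≠ β := by rintro rfl; exact lt_irrefl _ hαβ
  have hβγ' : β ≠ γ := by rintro rfl; exact lt_irrefl _ hβγ
  have hαγ' : α ≠ γ := by rintro rfl; exact lt_irrefl _ (hαβ.trans hβγ)
  -- w = α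
  have hwα : w = α := by
    by_contra h
    have hwβ : w ≠ β := by rintro rfl; exact absurd hαβ (not_lt.mpr (hw α))
    have hwγ : w ≠ γ := by
      rintro rfl; exact absurd (hαβ.trans hβγ) (not_lt.mpr (hw α))
    exact absurd (hw γ) (not_le.mpr (hsmall w (hlr w) h hwβ hwγ))
  rw [hwα] at hw hα hβ hγ hsmall
  clear hwα
  -- basic facts about T
  have hTtri : IsTriangle G T := hP.1 T hT
  have hC1 : ∀ u ∈ T, u ≠ α → l u ≤ r α := by
    intro u hu hne
    have hA : G.Adj α u :=
      hTtri.2 (Finset.mem_coe.mpr hαT) (Finset.mem_coe.mpr hu) (Ne.symm hne)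
    exact ((hadj α u).mp hA).2.2
  -- C1 is a clique
  have hclq : ∀ u v : V, u ≠ v → l u ≤ r α → l v ≤ r α → G.Adj u v := by
    intro u v hne hu hv
    exact (hadj u v).mpr ⟨hne, hu.trans (hw v), hv.trans (hw u)⟩
  have habc : IsTriangle G ({α, β, γ} : Finset V) := by
    constructor
    · exact Finset.card_eq_three.mpr ⟨α, β, γ, hαβ', hαγ', hβγ', rfl⟩
    · intro u hu v hv hne
      simp only [Finset.coe_insert, Set.mem_insert_iff, Finset.coe_singleton,
        Set.mem_singleton_iff] at hu hv
      rcases hu with rfl | rfl | rfl <;> rcases hv with rfl | rfl | rfl <;>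
        first
          | exact absurd rfl hne
          | exact hclq _ _ hne (by assumption) (by assumption)
  -- spare vertices
  have hadj_spare : ∀ x δ, x ∈ T → x ≠ α → x ≠ β → x ≠ γ → r δ ≤ r γ →
      ∀ z, z ∉ T → G.Adj δ z → G.Adj x z := by
    intro x δ hx h1 h2 h3 hδ z hz hδz
    have hbig : r γ < r x := hsmall x (hC1 x hx h1) h1 h2 h3
    refine (hadj x z).mpr ⟨fun e => hz (e ▸ hx), (hC1 x hx h1).trans (hw z), ?_⟩
    exact le_of_lt (lt_of_le_of_lt (le_trans ((hadj δ z).mp hδz).2.2 hδ) hbig)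
  -- find the two other vertices of T
  have h2card : (T.erase α).card = 2 := by
    rw [Finset.card_erase_of_mem hαT, hTtri.1]
  obtain ⟨a, b, hab, hTe⟩ := Finset.card_eq_two.mp h2card
  have haE : a ∈ T.erase α := by rw [hTe]; simp
  have hbE : b ∈ T.erase α := by rw [hTe]; simp
  have ha : a ∈ T := Finset.mem_of_mem_erase haE
  have hb : b ∈ T := Finset.mem_of_mem_erase hbE
  have haα : a ≠ α := Finset.ne_of_mem_erase haE
  have hbα : b ≠ α := Finset.ne_of_mem_erase hbE
  have htriv : ∀ δ : V, ∀ z, z ∉ T → G.Adj δ z → G.Adj δ z := fun _ _ _ h => h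
  by_cases hγa : γ = a
  · subst hγa
    by_cases hβb : β = b
    · subst hβb
      -- T = {α, γ, β} ; x := β, y := γ
      exact aux_swap G P hP T hT α β γ β γ habc hαβ' hαγ' hβγ' hαT hb ha
        hβγ' (Ne.symm hαβ') (Ne.symm hαγ') hβγ' (Ne.symm hβγ')
        (htriv β) (htriv γ)
    · -- β ∉ T ; x := b (spare), y := γ
      have hbβ : b ≠ β := Ne.symm hβb
      have hbγ : b ≠ γ := Ne.symm hab
      exact aux_swap G P hP T hT α β γ b γ habc hαβ' hαγ' hβγ' hαT hb ha
        hbγ hbα (Ne.symm hαγ') hbγ (Ne.symm hβγ')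
        (hadj_spare b β hb hbα hbβ hbγ hβγ.le) (htriv γ)
  · by_cases hγb : γ = b
    · subst hγb
      by_cases hβa : β = a
      · subst hβa
        exact aux_swap G P hP T hT α β γ β γ habc hαβ' hαγ' hβγ' hαT ha hb
          hβγ' (Ne.symm hαβ') (Ne.symm hαγ') hβγ' (Ne.symm hβγ')
          (htriv β) (htriv γ)
      · -- x := a (spare), y := γ
        have haβ : a ≠ β := Ne.symm hβa
        have haγ : a ≠ γ := hab
        exact aux_swap G P hP T hT α β γ a γ habc hαβ' hαγ' hβγ' hαT ha hb
          haγ haα (Ne.symm hαγ') haγ (Ne.symm hβγ')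
          (hadj_spare a β ha haα haβ haγ hβγ.le) (htriv γ)
    · -- γ ∉ T
      have haγ : a ≠ γ := fun e => hγa e.symm
      have hbγ : b ≠ γ := fun e => hγb e.symm
      by_cases hβa : β = a
      · subst hβa
        -- x := β, y := b (spare)
        have hbβ : b ≠ β := Ne.symm hab
        exact aux_swap G P hP T hT α β γ β b habc hαβ' hαγ' hβγ' hαT ha hb
          hab (Ne.symm hαβ') hbα hβγ' hbβ
          (htriv β) (hadj_spare b γ hb hbα hbβ hbγ le_rfl)
      · by_cases hβb : β = b
        · subst hβb
          -- x := β, y := a (spare)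
          have haβ : a ≠ β := hab
          exact aux_swap G P hP T hT α β γ β a habc hαβ' hαγ' hβγ' hαT hb ha
            (Ne.symm hab) (Ne.symm hαβ') haα hβγ' haβ
            (htriv β) (hadj_spare a γ ha haα haβ haγ le_rfl)
        · -- x := a (spare), y := b (spare)
          have haβ : a ≠ β := fun e => hβa e.symm
          have hbβ : b ≠ β := fun e => hβb e.symm
          exact aux_swap G P hP T hT α β γ a b habc hαβ' hαγ' hβγ' hαT ha hb
            hab haα hbα haγ hbβ
            (hadj_spare a β ha haα haβ haγ hβγ.le)
            (hadj_spare b γ hb hbα hbβ hbγ le_rfl)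
end

section
/- Let G be an interval graph on vertex set V whose right endpoints r(v) are pairwise distinct, let m = min_{v ∈ V} r(v), and let C1 = {v ∈ V : l(v) ≤ m}. Suppose |C1| ≥ 3 and let α, β, γ be the three vertices of C1 with the smallest right endpoints, with r(α) < r(β) < r(γ). Then {α, β, γ} is a triangle of G, and τ(G) = max( τ(G − α), 1 + τ(G − {α, β, γ}) ), where G − S denotes the subgraph of G induced on V ∖ S. -/
/-- τ(G): the maximum number of triangles in a triangle packing of G. -/
noncomputable def triangleNumber {V : Type*} (G : SimpleGraph V) : ℕ :=
  sSup {n | ∃ P : Finset (Finset V), IsTrianglePacking G P ∧ P.card = n}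

lemma packSet_bddAbove {V : Type*} [Finite V] (G : SimpleGraph V) :
    BddAbove {n | ∃ P : Finset (Finset V), IsTrianglePacking G P ∧ P.card = n} := by
  cases nonempty_fintype V
  classical
  refine ⟨Fintype.card (Finset V), ?_⟩
  rintro n ⟨P, _, rfl⟩
  exact Finset.card_le_univ P

lemma packSet_zero {V : Type*} (G : SimpleGraph V) :
    0 ∈ {n | ∃ P : Finset (Finset V), IsTrianglePacking G P ∧ P.card = n} :=
  ⟨∅, ⟨fun T hT => absurd hT (Finset.notMem_empty T), by simp⟩, rfl⟩

lemma le_triangleNumber {V : Type*} [Finite V] (G : SimpleGraph V) {n : ℕ}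
    (h : n ∈ {n | ∃ P : Finset (Finset V), IsTrianglePacking G P ∧ P.card = n}) :
    n ≤ triangleNumber G :=
  le_csSup (packSet_bddAbove G) h

lemma triangleNumber_mem {V : Type*} [Finite V] (G : SimpleGraph V) :
    triangleNumber G ∈
      {n | ∃ P : Finset (Finset V), IsTrianglePacking G P ∧ P.card = n} :=
  Nat.sSup_mem ⟨0, packSet_zero G⟩ (packSet_bddAbove G)

lemma lift_packing {V : Type*} [DecidableEq V] (G : SimpleGraph V) (S : Set V)
    (P : Finset (Finset S)) (hP : IsTrianglePacking (G.induce S) P) :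
    IsTrianglePacking G (P.image (Finset.image (Subtype.val : S → V))) ∧
      (P.image (Finset.image (Subtype.val : S → V))).card = P.card ∧
      ∀ T ∈ P.image (Finset.image (Subtype.val : S → V)), ∀ x ∈ T, x ∈ S := by
  classical
  have hvinj : Function.Injective (Subtype.val : S → V) := Subtype.val_injective
  refine ⟨⟨?_, ?_⟩, ?_, ?_⟩
  · rintro T hT
    rcases Finset.mem_image.mp hT with ⟨T0, hT0, rfl⟩
    obtain ⟨hcard, hpair⟩ := hP.1 T0 hT0
    refine ⟨by rw [Finset.card_image_of_injective _ hvinj, hcard], ?_⟩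
    rintro x hx y hy hxy
    simp only [Finset.coe_image, Set.mem_image, Finset.mem_coe] at hx hy
    rcases hx with ⟨a, ha, rfl⟩
    rcases hy with ⟨b, hb, rfl⟩
    have hab : a ≠ b := fun h => hxy (by rw [h])
    exact hpair (Finset.mem_coe.mpr ha) (Finset.mem_coe.mpr hb) hab
  · rintro A hA B hB hAB
    simp only [Finset.coe_image, Set.mem_image, Finset.mem_coe] at hA hB
    rcases hA with ⟨A0, hA0, rfl⟩
    rcases hB with ⟨B0, hB0, rfl⟩
    have hne : A0 ≠ B0 := fun h => hAB (by rw [h])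
    exact (Finset.disjoint_image hvinj).mpr
      (hP.2 (Finset.mem_coe.mpr hA0) (Finset.mem_coe.mpr hB0) hne)
  · exact Finset.card_image_of_injective _ (Finset.image_injective hvinj)
  · rintro T hT x hx
    rcases Finset.mem_image.mp hT with ⟨T0, _, rfl⟩
    rcases Finset.mem_image.mp hx with ⟨a, _, rfl⟩
    exact a.2

lemma restrict_packing {V : Type*} [DecidableEq V] (G : SimpleGraph V) (S : Set V)
    (P : Finset (Finset V)) (hP : IsTrianglePacking G P)
    (hS : ∀ T ∈ P, ∀ x ∈ T, x ∈ S) :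
    ∃ Q : Finset (Finset S), IsTrianglePacking (G.induce S) Q ∧ Q.card = P.card := by
  classical
  have hrec : ∀ T ∈ P, (T.subtype (· ∈ S)).map (Function.Embedding.subtype _) = T :=
    fun T hT => Finset.subtype_map_of_mem (hS T hT)
  refine ⟨P.image (fun T => T.subtype (· ∈ S)), ⟨?_, ?_⟩, ?_⟩
  · rintro T hT
    rcases Finset.mem_image.mp hT with ⟨T0, hT0, rfl⟩
    obtain ⟨hcard, hpair⟩ := hP.1 T0 hT0
    constructor
    · have := congrArg Finset.card (hrec T0 hT0)
      rwa [Finset.card_map, hcard] at this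
    · rintro a ha b hb hab
      have ha' : (a : V) ∈ T0 := Finset.mem_subtype.mp (Finset.mem_coe.mp ha)
      have hb' : (b : V) ∈ T0 := Finset.mem_subtype.mp (Finset.mem_coe.mp hb)
      have : (a : V) ≠ (b : V) := fun h => hab (Subtype.ext h)
      exact hpair (Finset.mem_coe.mpr ha') (Finset.mem_coe.mpr hb') this
  · rintro A hA B hB hAB
    simp only [Finset.coe_image, Set.mem_image, Finset.mem_coe] at hA hB
    rcases hA with ⟨A0, hA0, rfl⟩
    rcases hB with ⟨B0, hB0, rfl⟩
    have hne : A0 ≠ B0 := fun h => hAB (by rw [h])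
    have hd : Disjoint A0 B0 := hP.2 (Finset.mem_coe.mpr hA0) (Finset.mem_coe.mpr hB0) hne
    rw [Finset.disjoint_left] at hd ⊢
    intro a ha hb
    exact hd (Finset.mem_subtype.mp ha) (Finset.mem_subtype.mp hb)
  · apply Finset.card_image_of_injOn
    intro T1 h1 T2 h2 heq
    rw [← hrec T1 h1, ← hrec T2 h2]
    exact congrArg (Finset.map (Function.Embedding.subtype fun x => x ∈ S)) heq

lemma swap_packing {V : Type*} [DecidableEq V] (G : SimpleGraph V) (l r : V → ℝ)
    (hadj : ∀ u v, G.Adj u v ↔ u ≠ v ∧ l u ≤ r v ∧ l v ≤ r u)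
    (w : V) (hw : ∀ v, r w ≤ r v)
    (P : Finset (Finset V)) (hP : IsTrianglePacking G P) (b s : V)
    (hb : l b ≤ r w) (hs : l s ≤ r w) (hbs : r b < r s)
    (hT : ∀ T ∈ P, s ∈ T → ∀ x ∈ T, l x ≤ r w) :
    IsTrianglePacking G (P.image (Finset.image (⇑(Equiv.swap b s)))) ∧
      (P.image (Finset.image (⇑(Equiv.swap b s)))).card = P.card := by
  classical
  set σ : V ≃ V := Equiv.swap b s with hσ
  have hσinj : Function.Injective (⇑σ) := σ.injective
  have key : ∀ T ∈ P, ∀ x ∈ T, ∀ y ∈ T, G.Adj x y → G.Adj (σ x) (σ y) := by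
    intro T hTP x hx y hy hxy
    obtain ⟨hne, h1, h2⟩ := (hadj x y).mp hxy
    rcases eq_or_ne x b with rfl | hxb
    · rcases eq_or_ne y s with rfl | hys
      · -- x = b, y = s
        rw [hσ, Equiv.swap_apply_left, Equiv.swap_apply_right]
        exact ((hadj _ _).mpr ⟨hne.symm, h2, h1⟩)
      · -- x = b, y ≠ s, y ≠ b (hne.symm)
        rw [hσ, Equiv.swap_apply_left, Equiv.swap_apply_of_ne_of_ne hne.symm hys]
        exact (hadj _ _).mpr ⟨fun h => hys h.symm, hs.trans (hw y), h2.trans_lt hbs |>.le⟩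
    · rcases eq_or_ne x s with rfl | hxs
      · rcases eq_or_ne y b with rfl | hyb
        · rw [hσ, Equiv.swap_apply_right, Equiv.swap_apply_left]
          exact ((hadj _ _).mpr ⟨hne.symm, h2, h1⟩)
        · -- x = s, y ∉ {b, s}
          rw [hσ, Equiv.swap_apply_right, Equiv.swap_apply_of_ne_of_ne hyb (fun h => hne h.symm)]
          have hly : l y ≤ r w := hT T hTP hx y hy
          exact (hadj _ _).mpr ⟨fun h => hyb h.symm, hb.trans (hw y), hly.trans (hw b)⟩
      · rcases eq_or_ne y b with rfl | hyb
        · rw [hσ, Equiv.swap_apply_left, Equiv.swap_apply_of_ne_of_ne hxb hxs]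
          exact (hadj _ _).mpr ⟨hxs, h1.trans_lt hbs |>.le, hs.trans (hw x)⟩
        · rcases eq_or_ne y s with rfl | hys
          · rw [hσ, Equiv.swap_apply_right, Equiv.swap_apply_of_ne_of_ne hxb hxs]
            have hlx : l x ≤ r w := hT T hTP hy x hx
            exact (hadj _ _).mpr ⟨hxb, hlx.trans (hw b), hb.trans (hw x)⟩
          · rw [hσ, Equiv.swap_apply_of_ne_of_ne hxb hxs,
              Equiv.swap_apply_of_ne_of_ne hyb hys]
            exact hxy
  constructor
  · constructor
    · rintro T hT'
      rcases Finset.mem_image.mp hT' with ⟨T0, hT0, rfl⟩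
      obtain ⟨hcard, hpair⟩ := hP.1 T0 hT0
      refine ⟨by rw [Finset.card_image_of_injective _ hσinj, hcard], ?_⟩
      rintro x hx y hy hxy
      simp only [Finset.coe_image, Set.mem_image, Finset.mem_coe] at hx hy
      rcases hx with ⟨a, ha, rfl⟩
      rcases hy with ⟨c, hc, rfl⟩
      have hac : a ≠ c := fun h => hxy (by rw [h])
      exact key T0 hT0 a ha c hc (hpair (Finset.mem_coe.mpr ha) (Finset.mem_coe.mpr hc) hac)
    · rintro A hA B hB hAB
      simp only [Finset.coe_image, Set.mem_image, Finset.mem_coe] at hA hB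
      rcases hA with ⟨A0, hA0, rfl⟩
      rcases hB with ⟨B0, hB0, rfl⟩
      have hne : A0 ≠ B0 := fun h => hAB (by rw [h])
      exact (Finset.disjoint_image hσinj).mpr
        (hP.2 (Finset.mem_coe.mpr hA0) (Finset.mem_coe.mpr hB0) hne)
  · exact Finset.card_image_of_injective _ (Finset.image_injective hσinj)

lemma step_lemma {V : Type*} [DecidableEq V] (G : SimpleGraph V) (l r : V → ℝ)
    (hadj : ∀ u v, G.Adj u v ↔ u ≠ v ∧ l u ≤ r v ∧ l v ≤ r u)
    (w : V) (hw : ∀ v, r w ≤ r v) (α β γ : V)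
    (hα : l α ≤ r w) (hβ : l β ≤ r w) (hγ : l γ ≤ r w)
    (hβγ : r β < r γ) (hrw : r w = r α)
    (hsmall : ∀ v, l v ≤ r w → v ≠ α → v ≠ β → v ≠ γ → r γ < r v)
    (P : Finset (Finset V)) (hP : IsTrianglePacking G P)
    (T : Finset V) (hTP : T ∈ P) (hαT : α ∈ T)
    (c : V) (hc : c = β ∨ c = γ) (hcT : c ∉ T) (hcα : c ≠ α) :
    ∃ P' T', IsTrianglePacking G P' ∧ P'.card = P.card ∧ T' ∈ P' ∧ α ∈ T' ∧ c ∈ T' ∧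
      ∀ x, (x = β ∨ x = γ) → x ∈ T → x ∈ T' := by
  classical
  obtain ⟨hTcard, hTpair⟩ := hP.1 T hTP
  -- all vertices of any triangle containing α lie in C1
  have TC1 : ∀ x ∈ T, l x ≤ r w := by
    intro x hx
    rcases eq_or_ne x α with rfl | hxα
    · exact hα
    · have hadj' := hTpair (Finset.mem_coe.mpr hαT) (Finset.mem_coe.mpr hx) (Ne.symm hxα)
      obtain ⟨_, _, h2⟩ := (hadj α x).mp hadj'
      rw [hrw]; exact h2
  -- choose s ∈ T outside {α, β, γ}
  have hex : ∃ s ∈ T, s ∉ ({α, β, γ} : Finset V) := by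
    by_contra h
    push_neg at h
    have hsub : T ⊆ {α, β, γ} := h
    have hcard3 : ({α, β, γ} : Finset V).card ≤ T.card := by
      calc ({α, β, γ} : Finset V).card ≤ ({β, γ} : Finset V).card + 1 :=
            Finset.card_insert_le _ _
        _ ≤ (({γ} : Finset V).card + 1) + 1 := by
            exact Nat.add_le_add_right (Finset.card_insert_le _ _) 1
        _ = 3 := by simp
        _ = T.card := hTcard.symm
    have := Finset.eq_of_subset_of_card_le hsub hcard3
    rw [this] at hcT
    rcases hc with rfl | rfl
    · exact hcT (by simp)
    · exact hcT (by simp)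
  obtain ⟨s, hsT, hsnot⟩ := hex
  simp only [Finset.mem_insert, Finset.mem_singleton, not_or] at hsnot
  obtain ⟨hsα, hsβ, hsγ⟩ := hsnot
  have hls : l s ≤ r w := TC1 s hsT
  have hγs : r γ < r s := hsmall s hls hsα hsβ hsγ
  have hcs : r c < r s := by
    rcases hc with rfl | rfl
    · exact hβγ.trans hγs
    · exact hγs
  have hlc : l c ≤ r w := by rcases hc with rfl | rfl; exacts [hβ, hγ]
  have hTs : ∀ T' ∈ P, s ∈ T' → ∀ x ∈ T', l x ≤ r w := by
    intro T' hT' hsT' x hx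
    have hTT : T' = T := by
      by_contra hne
      have := hP.2 (Finset.mem_coe.mpr hT') (Finset.mem_coe.mpr hTP) hne
      exact (Finset.disjoint_left.mp this hsT') hsT
    exact TC1 x (hTT ▸ hx)
  obtain ⟨hP', hcard'⟩ := swap_packing G l r hadj w hw P hP c s hlc hls hcs hTs
  refine ⟨P.image (Finset.image (⇑(Equiv.swap c s))), T.image (⇑(Equiv.swap c s)),
    hP', hcard', Finset.mem_image_of_mem _ hTP, ?_, ?_, ?_⟩
  · exact Finset.mem_image.mpr ⟨α, hαT, Equiv.swap_apply_of_ne_of_ne (Ne.symm hcα) (Ne.symm hsα)⟩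
  · exact Finset.mem_image.mpr ⟨s, hsT, Equiv.swap_apply_right c s⟩
  · intro x hx hxT
    have hxc : x ≠ c := fun h => hcT (h ▸ hxT)
    have hxs : x ≠ s := by
      rcases hx with rfl | rfl
      · exact Ne.symm hsβ
      · exact Ne.symm hsγ
    exact Finset.mem_image.mpr ⟨x, hxT, Equiv.swap_apply_of_ne_of_ne hxc hxs⟩

lemma put_triangle {V : Type*} [DecidableEq V] (G : SimpleGraph V) (l r : V → ℝ)
    (hadj : ∀ u v, G.Adj u v ↔ u ≠ v ∧ l u ≤ r v ∧ l v ≤ r u)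
    (w : V) (hw : ∀ v, r w ≤ r v) (α β γ : V)
    (hα : l α ≤ r w) (hβ : l β ≤ r w) (hγ : l γ ≤ r w)
    (hαβ : r α < r β) (hβγ : r β < r γ) (hrw : r w = r α)
    (hsmall : ∀ v, l v ≤ r w → v ≠ α → v ≠ β → v ≠ γ → r γ < r v)
    (P : Finset (Finset V)) (hP : IsTrianglePacking G P)
    (T : Finset V) (hTP : T ∈ P) (hαT : α ∈ T) :
    ∃ P', IsTrianglePacking G P' ∧ P'.card = P.card ∧ ({α, β, γ} : Finset V) ∈ P' := by
  classical
  have hab : α ≠ β := fun h => absurd (h ▸ hαβ) (lt_irrefl _)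
  have hbc : β ≠ γ := fun h => absurd (h ▸ hβγ) (lt_irrefl _)
  have hac : α ≠ γ := fun h => absurd (h ▸ (hαβ.trans hβγ)) (lt_irrefl _)
  have habc_card : ({α, β, γ} : Finset V).card = 3 := by
    rw [Finset.card_insert_of_notMem (by simp [hab, hac]),
      Finset.card_insert_of_notMem (by simp [hbc]), Finset.card_singleton]
  have claim : ∃ P' T', IsTrianglePacking G P' ∧ P'.card = P.card ∧ T' ∈ P' ∧
      α ∈ T' ∧ β ∈ T' ∧ γ ∈ T' := by
    by_cases hβT : β ∈ T
    · by_cases hγT : γ ∈ T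
      · exact ⟨P, T, hP, rfl, hTP, hαT, hβT, hγT⟩
      · obtain ⟨P', T', h1, h2, h3, h4, h5, h6⟩ :=
          step_lemma G l r hadj w hw α β γ hα hβ hγ hβγ hrw hsmall P hP T hTP hαT
            γ (Or.inr rfl) hγT (Ne.symm hac)
        exact ⟨P', T', h1, h2, h3, h4, h6 β (Or.inl rfl) hβT, h5⟩
    · obtain ⟨P1, T1, h1, h2, h3, h4, h5, h6⟩ :=
        step_lemma G l r hadj w hw α β γ hα hβ hγ hβγ hrw hsmall P hP T hTP hαT
          β (Or.inl rfl) hβT (Ne.symm hab)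
      by_cases hγT1 : γ ∈ T1
      · exact ⟨P1, T1, h1, h2, h3, h4, h5, hγT1⟩
      · obtain ⟨P2, T2, g1, g2, g3, g4, g5, g6⟩ :=
          step_lemma G l r hadj w hw α β γ hα hβ hγ hβγ hrw hsmall P1 h1 T1 h3 h4
            γ (Or.inr rfl) hγT1 (Ne.symm hac)
        exact ⟨P2, T2, g1, g2.trans h2, g3, g4, g6 β (Or.inl rfl) h5, g5⟩
  obtain ⟨P', T', h1, h2, h3, h4, h5, h6⟩ := claim
  have hTcard : T'.card = 3 := (h1.1 T' h3).1
  have hsub : ({α, β, γ} : Finset V) ⊆ T' := by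
    intro x hx
    simp only [Finset.mem_insert, Finset.mem_singleton] at hx
    rcases hx with rfl | rfl | rfl
    exacts [h4, h5, h6]
  have : ({α, β, γ} : Finset V) = T' :=
    Finset.eq_of_subset_of_card_le hsub (by rw [hTcard, habc_card])
  exact ⟨P', h1, h2, this ▸ h3⟩

/-- Let `G` be an interval graph with pairwise distinct right endpoints,
`m = r w` the minimum right endpoint, `C1 = {v | l v ≤ m}`, and let `α, β, γ` be the
three vertices of `C1` with the smallest right endpoints (in this order). Then
`{α, β, γ}` is a triangle of `G` and `τ(G) = max (τ(G - α)) (1 + τ(G - {α, β, γ}))`. -/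
theorem stmt3 {V : Type*} [Fintype V] [DecidableEq V] (G : SimpleGraph V) (l r : V → ℝ)
    (hlr : ∀ v, l v ≤ r v)
    (hadj : ∀ u v, G.Adj u v ↔ u ≠ v ∧ l u ≤ r v ∧ l v ≤ r u)
    (hinj : Function.Injective r)
    (w : V) (hw : ∀ v, r w ≤ r v)
    (α β γ : V) (hα : l α ≤ r w) (hβ : l β ≤ r w) (hγ : l γ ≤ r w)
    (hαβ : r α < r β) (hβγ : r β < r γ)
    (hsmall : ∀ v, l v ≤ r w → v ≠ α → v ≠ β → v ≠ γ → r γ < r v) :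
    IsTriangle G ({α, β, γ} : Finset V) ∧
      triangleNumber G =
        max (triangleNumber (G.induce {v | v ≠ α}))
          (1 + triangleNumber (G.induce {v | v ≠ α ∧ v ≠ β ∧ v ≠ γ})) := by
  classical
  have hab : α ≠ β := fun h => absurd (h ▸ hαβ) (lt_irrefl _)
  have hbc : β ≠ γ := fun h => absurd (h ▸ hβγ) (lt_irrefl _)
  have hac : α ≠ γ := fun h => absurd (h ▸ (hαβ.trans hβγ)) (lt_irrefl _)
  -- the minimal vertex w is α
  have hwα : w = α := by
    by_contra hne
    by_cases h1 : w = β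
    · exact absurd (h1 ▸ hw α) (not_le.mpr hαβ)
    by_cases h2 : w = γ
    · exact absurd (h2 ▸ hw α) (not_le.mpr (hαβ.trans hβγ))
    exact absurd (hw γ) (not_le.mpr (hsmall w (hlr w) hne h1 h2))
  have hrw : r w = r α := by rw [hwα]
  have habc_card : ({α, β, γ} : Finset V).card = 3 := by
    rw [Finset.card_insert_of_notMem (by simp [hab, hac]),
      Finset.card_insert_of_notMem (by simp [hbc]), Finset.card_singleton]
  have htri : IsTriangle G ({α, β, γ} : Finset V) := by
    refine ⟨habc_card, ?_⟩
    intro x hx y hy hxy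
    have hx' : l x ≤ r w := by
      simp only [Finset.coe_insert, Set.mem_insert_iff, Finset.coe_singleton,
        Set.mem_singleton_iff] at hx
      rcases hx with rfl | rfl | rfl
      exacts [hα, hβ, hγ]
    have hy' : l y ≤ r w := by
      simp only [Finset.coe_insert, Set.mem_insert_iff, Finset.coe_singleton,
        Set.mem_singleton_iff] at hy
      rcases hy with rfl | rfl | rfl
      exacts [hα, hβ, hγ]
    exact (hadj x y).mpr ⟨hxy, hx'.trans (hw y), hy'.trans (hw x)⟩
  refine ⟨htri, ?_⟩
  set S1 : Set V := {v | v ≠ α} with hS1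
  set S3 : Set V := {v | v ≠ α ∧ v ≠ β ∧ v ≠ γ} with hS3
  apply le_antisymm
  · -- τ(G) ≤ max
    obtain ⟨P, hP, hPcard⟩ := triangleNumber_mem G
    by_cases hex : ∃ T ∈ P, α ∈ T
    · obtain ⟨T, hTP, hαT⟩ := hex
      obtain ⟨P', hP', hcard', habcP⟩ :=
        put_triangle G l r hadj w hw α β γ hα hβ hγ hαβ hβγ hrw hsmall P hP T hTP hαT
      have hQmem : ∀ T' ∈ P'.erase {α, β, γ}, ∀ x ∈ T', x ∈ S3 := by
        intro T' hT' x hx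
        have hT'P := Finset.mem_of_mem_erase hT'
        have hne := Finset.ne_of_mem_erase hT'
        have hd := hP'.2 (Finset.mem_coe.mpr hT'P) (Finset.mem_coe.mpr habcP) hne
        have hnot : x ∉ ({α, β, γ} : Finset V) := Finset.disjoint_left.mp hd hx
        simp only [Finset.mem_insert, Finset.mem_singleton, not_or] at hnot
        exact ⟨hnot.1, hnot.2.1, hnot.2.2⟩
      have hPe : IsTrianglePacking G (P'.erase {α, β, γ}) := by
        refine ⟨fun T hT => hP'.1 T (Finset.mem_of_mem_erase hT), ?_⟩
        exact hP'.2.mono (Finset.coe_subset.mpr (Finset.erase_subset _ _))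
      obtain ⟨Q, hQpack, hQcard⟩ := restrict_packing G S3 _ hPe hQmem
      have hce : (P'.erase {α, β, γ}).card = P.card - 1 := by
        rw [Finset.card_erase_of_mem habcP, hcard']
      have h1le : 1 ≤ P.card := by
        rw [← hcard']
        exact Finset.card_pos.mpr ⟨_, habcP⟩
      have hle3 : P.card - 1 ≤ triangleNumber (G.induce S3) :=
        le_triangleNumber _ ⟨Q, hQpack, by rw [hQcard, hce]⟩
      have : P.card ≤ 1 + triangleNumber (G.induce S3) := by omega
      rw [← hPcard]
      exact this.trans (le_max_right _ _)
    · have hQmem : ∀ T ∈ P, ∀ x ∈ T, x ∈ S1 := fun T hT x hx h => hex ⟨T, hT, h ▸ hx⟩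
      obtain ⟨Q, hQpack, hQcard⟩ := restrict_packing G S1 P hP hQmem
      have : P.card ≤ triangleNumber (G.induce S1) :=
        le_triangleNumber _ ⟨Q, hQpack, hQcard⟩
      rw [← hPcard]
      exact this.trans (le_max_left _ _)
  · apply max_le
    · obtain ⟨Q, hQ, hQc⟩ := triangleNumber_mem (G.induce S1)
      obtain ⟨hpack, hcard, _⟩ := lift_packing G S1 Q hQ
      exact le_triangleNumber G ⟨_, hpack, by rw [hcard, hQc]⟩
    · obtain ⟨Q, hQ, hQc⟩ := triangleNumber_mem (G.induce S3)
      obtain ⟨hpack, hcard, hmem⟩ := lift_packing G S3 Q hQ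
      set P := Q.image (Finset.image (Subtype.val : S3 → V)) with hPdef
      have habc_not : ({α, β, γ} : Finset V) ∉ P := fun h =>
        (hmem _ h α (by simp)).1 rfl
      have hdisj : ∀ T ∈ P, Disjoint ({α, β, γ} : Finset V) T := by
        intro T hT
        rw [Finset.disjoint_left]
        intro x hx hxT
        have hx3 := hmem T hT x hxT
        simp only [Finset.mem_insert, Finset.mem_singleton] at hx
        rcases hx with rfl | rfl | rfl
        exacts [hx3.1 rfl, hx3.2.1 rfl, hx3.2.2 rfl]
      have hpack' : IsTrianglePacking G (insert ({α, β, γ} : Finset V) P) := by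
        constructor
        · intro T hT
          rcases Finset.mem_insert.mp hT with rfl | hT
          exacts [htri, hpack.1 T hT]
        · rw [Finset.coe_insert]
          refine Set.Pairwise.insert hpack.2 ?_
          intro T hT hne
          have hd := hdisj T (Finset.mem_coe.mp hT)
          exact ⟨hd, hd.symm⟩
      have hci : (insert ({α, β, γ} : Finset V) P).card =
          triangleNumber (G.induce S3) + 1 := by
        rw [Finset.card_insert_of_notMem habc_not, hcard, hQc]
      have := le_triangleNumber G ⟨_, hpack', hci⟩
      omega
end

section
/- Let n be a positive integer, let π be a permutation of {1, …, n}, and let c : {1, …, n} → {1, 2, 3}. Define the bipartite graph G12 on vertex set {i : c(π(i)) = 1} ∪ {j : c(π(j)) = 2}, where a vertex i with c(π(i)) = 1 is adjacent to a vertex j with c(π(j)) = 2 if and only if i < j and π(i) < π(j); define the bipartite graph G23 on vertex set {j : c(π(j)) = 2} ∪ {k : c(π(k)) = 3}, where a vertex j with c(π(j)) = 2 is adjacent to a vertex k with c(π(k)) = 3 if and only if j < k and π(j) < π(k). Then there exists a partition of {1, …, n} into triples {i, j, k} with i < j < k such that π(i) < π(j) < π(k), c(π(i)) = 1, c(π(j))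 = 2 and c(π(k)) = 3, if and only if both G12 and G23 have perfect matchings. -/
/-- The bipartite graph `G12`: vertices are the positions with colors 1 and 2; a position
`i` of color 1 is adjacent to a position `j` of color 2 iff `i < j` and `π i < π j`. -/
def G12 (n : ℕ) (π : Equiv.Perm (Fin n)) (c : Fin n → ℕ) :
    SimpleGraph {i : Fin n // c (π i) = 1 ∨ c (π i) = 2} :=
  SimpleGraph.fromRel fun a b =>
    c (π a.1) = 1 ∧ c (π b.1) = 2 ∧ a.1 < b.1 ∧ π a.1 < π b.1

/-- The bipartite graph `G23`: vertices are the positions with colors 2 and 3; a position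
`j` of color 2 is adjacent to a position `k` of color 3 iff `j < k` and `π j < π k`. -/
def G23 (n : ℕ) (π : Equiv.Perm (Fin n)) (c : Fin n → ℕ) :
    SimpleGraph {i : Fin n // c (π i) = 2 ∨ c (π i) = 3} :=
  SimpleGraph.fromRel fun a b =>
    c (π a.1) = 2 ∧ c (π b.1) = 3 ∧ a.1 < b.1 ∧ π a.1 < π b.1

/-- There is a partition of `{1, …, n}` into colored increasing triples
for the permutation `π` if and only if both `G12` and `G23` have perfect matchings. -/
theorem stmt5 (n : ℕ) (hn : 0 < n) (π : Equiv.Perm (Fin n)) (c : Fin n → ℕ)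
    (hc : ∀ i, c i = 1 ∨ c i = 2 ∨ c i = 3) :
    (∃ P : Finset (Finset (Fin n)),
        (∀ T ∈ P, ∃ i j k : Fin n, i < j ∧ j < k ∧ T = {i, j, k} ∧
          π i < π j ∧ π j < π k ∧ c (π i) = 1 ∧ c (π j) = 2 ∧ c (π k) = 3) ∧
        ((P : Set (Finset (Fin n))).Pairwise fun S T => Disjoint S T) ∧
        (∀ v : Fin n, ∃ T ∈ P, v ∈ T)) ↔
      ((∃ M : (G12 n π c).Subgraph, M.IsPerfectMatching) ∧
        (∃ M : (G23 n π c).Subgraph, M.IsPerfectMatching)) := by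
  constructor
  · rintro ⟨P, hP1, hP2, hP3⟩
    have huniq : ∀ T ∈ P, ∀ T' ∈ P, ∀ v : Fin n, v ∈ T → v ∈ T' → T = T' := by
      intro T hT T' hT' v hv hv'
      by_contra h
      exact (Finset.disjoint_left.mp (hP2 hT hT' h)) hv hv'
    constructor
    · -- perfect matching of G12
      refine ⟨{ verts := Set.univ
                Adj := fun a b => (G12 n π c).Adj a b ∧ ∃ T ∈ P, a.1 ∈ T ∧ b.1 ∈ T
                adj_sub := fun h => h.1
                edge_vert := fun _ => Set.mem_univ _
                symm := ⟨fun a b h => ⟨h.1.symm, by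
                  obtain ⟨T, hT, h1, h2⟩ := h.2; exact ⟨T, hT, h2, h1⟩⟩⟩ },
              SimpleGraph.Subgraph.isPerfectMatching_iff.mpr ?_⟩
      intro v
      obtain ⟨T, hT, hvT⟩ := hP3 v.1
      obtain ⟨i, j, k, hij, hjk, hTe, hπij, hπjk, hci, hcj, hck⟩ := hP1 T hT
      subst hTe
      have hvmem : v.1 = i ∨ v.1 = j ∨ v.1 = k := by
        simpa using hvT
      rcases v.2 with hv1 | hv2
      · -- v = i, partner is j
        have hvi : v.1 = i := by
          rcases hvmem with h|h|h
          · exact h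
          · rw [h] at hv1; omega
          · rw [h] at hv1; omega
        refine ⟨⟨j, Or.inr hcj⟩, ⟨?_, ⟨{i,j,k}, hT, hvT, by simp⟩⟩, ?_⟩
        · show (SimpleGraph.fromRel _).Adj _ _
          rw [SimpleGraph.fromRel_adj]
          constructor
          · intro he
            have := congrArg Subtype.val he
            simp only [hvi] at this
            exact hij.ne this
          · left; exact ⟨hv1, hcj, hvi ▸ hij, hvi ▸ hπij⟩
        · rintro w ⟨hadj, T', hT', hvT', hwT'⟩
          have hTT : T' = ({i,j,k} : Finset (Fin n)) := huniq _ hT' _ hT _ hvT' hvT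
          subst hTT
          have hadj' := hadj
          rw [show (G12 n π c) = SimpleGraph.fromRel _ from rfl,
            SimpleGraph.fromRel_adj] at hadj'
          have hw2 : c (π w.1) = 2 := by
            rcases hadj'.2 with ⟨_, h, _⟩ | ⟨_, h, _⟩
            · exact h
            · rw [hv1] at h; omega
          have hwj : w.1 = j := by
            have : w.1 = i ∨ w.1 = j ∨ w.1 = k := by simpa using hwT'
            rcases this with h|h|h
            · rw [h] at hw2; omega
            · exact h
            · rw [h] at hw2; omega
          exact Subtype.ext hwj
      · -- v = j, partner is i
        have hvj : v.1 = j := by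
          rcases hvmem with h|h|h
          · rw [h] at hv2; omega
          · exact h
          · rw [h] at hv2; omega
        refine ⟨⟨i, Or.inl hci⟩, ⟨?_, ⟨{i,j,k}, hT, hvT, by simp⟩⟩, ?_⟩
        · show (SimpleGraph.fromRel _).Adj _ _
          rw [SimpleGraph.fromRel_adj]
          constructor
          · intro he
            have := congrArg Subtype.val he
            simp only [hvj] at this
            exact hij.ne this.symm
          · right; exact ⟨hci, hv2, hvj ▸ hij, hvj ▸ hπij⟩
        · rintro w ⟨hadj, T', hT', hvT', hwT'⟩
          have hTT : T' = ({i,j,k} : Finset (Fin n)) := huniq _ hT' _ hT _ hvT' hvT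
          subst hTT
          have hadj' := hadj
          rw [show (G12 n π c) = SimpleGraph.fromRel _ from rfl,
            SimpleGraph.fromRel_adj] at hadj'
          have hw1 : c (π w.1) = 1 := by
            rcases hadj'.2 with ⟨h, -, -⟩ | ⟨h, -, -⟩
            · rw [hv2] at h; omega
            · exact h
          have hwi : w.1 = i := by
            have : w.1 = i ∨ w.1 = j ∨ w.1 = k := by simpa using hwT'
            rcases this with h|h|h
            · exact h
            · rw [h] at hw1; omega
            · rw [h] at hw1; omega
          exact Subtype.ext hwi
    · -- perfect matching of G23
      refine ⟨{ verts := Set.univ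
                Adj := fun a b => (G23 n π c).Adj a b ∧ ∃ T ∈ P, a.1 ∈ T ∧ b.1 ∈ T
                adj_sub := fun h => h.1
                edge_vert := fun _ => Set.mem_univ _
                symm := ⟨fun a b h => ⟨h.1.symm, by
                  obtain ⟨T, hT, h1, h2⟩ := h.2; exact ⟨T, hT, h2, h1⟩⟩⟩ },
              SimpleGraph.Subgraph.isPerfectMatching_iff.mpr ?_⟩
      intro v
      obtain ⟨T, hT, hvT⟩ := hP3 v.1
      obtain ⟨i, j, k, hij, hjk, hTe, hπij, hπjk, hci, hcj, hck⟩ := hP1 T hT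
      subst hTe
      have hvmem : v.1 = i ∨ v.1 = j ∨ v.1 = k := by
        simpa using hvT
      rcases v.2 with hv2 | hv3
      · -- v = j, partner is k
        have hvj : v.1 = j := by
          rcases hvmem with h|h|h
          · rw [h] at hv2; omega
          · exact h
          · rw [h] at hv2; omega
        refine ⟨⟨k, Or.inr hck⟩, ⟨?_, ⟨{i,j,k}, hT, hvT, by simp⟩⟩, ?_⟩
        · show (SimpleGraph.fromRel _).Adj _ _
          rw [SimpleGraph.fromRel_adj]
          constructor
          · intro he
            have := congrArg Subtype.val he
            simp only [hvj] at this
            exact hjk.ne this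
          · left; exact ⟨hv2, hck, hvj ▸ hjk, hvj ▸ hπjk⟩
        · rintro w ⟨hadj, T', hT', hvT', hwT'⟩
          have hTT : T' = ({i,j,k} : Finset (Fin n)) := huniq _ hT' _ hT _ hvT' hvT
          subst hTT
          have hadj' := hadj
          rw [show (G23 n π c) = SimpleGraph.fromRel _ from rfl,
            SimpleGraph.fromRel_adj] at hadj'
          have hw3 : c (π w.1) = 3 := by
            rcases hadj'.2 with ⟨_, h, _⟩ | ⟨_, h, _⟩
            · exact h
            · rw [hv2] at h; omega
          have hwk : w.1 = k := by
            have : w.1 = i ∨ w.1 = j ∨ w.1 = k := by simpa using hwT'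
            rcases this with h|h|h
            · rw [h] at hw3; omega
            · rw [h] at hw3; omega
            · exact h
          exact Subtype.ext hwk
      · -- v = k, partner is j
        have hvk : v.1 = k := by
          rcases hvmem with h|h|h
          · rw [h] at hv3; omega
          · rw [h] at hv3; omega
          · exact h
        refine ⟨⟨j, Or.inl hcj⟩, ⟨?_, ⟨{i,j,k}, hT, hvT, by simp⟩⟩, ?_⟩
        · show (SimpleGraph.fromRel _).Adj _ _
          rw [SimpleGraph.fromRel_adj]
          constructor
          · intro he
            have := congrArg Subtype.val he
            simp only [hvk] at this
            exact hjk.ne this.symm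
          · right; exact ⟨hcj, hv3, hvk ▸ hjk, hvk ▸ hπjk⟩
        · rintro w ⟨hadj, T', hT', hvT', hwT'⟩
          have hTT : T' = ({i,j,k} : Finset (Fin n)) := huniq _ hT' _ hT _ hvT' hvT
          subst hTT
          have hadj' := hadj
          rw [show (G23 n π c) = SimpleGraph.fromRel _ from rfl,
            SimpleGraph.fromRel_adj] at hadj'
          have hw2 : c (π w.1) = 2 := by
            rcases hadj'.2 with ⟨h, -, -⟩ | ⟨h, -, -⟩
            · rw [hv3] at h; omega
            · exact h
          have hwj : w.1 = j := by
            have : w.1 = i ∨ w.1 = j ∨ w.1 = k := by simpa using hwT'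
            rcases this with h|h|h
            · rw [h] at hw2; omega
            · exact h
            · rw [h] at hw2; omega
          exact Subtype.ext hwj
  · rintro ⟨⟨M12, hM12⟩, ⟨M23, hM23⟩⟩
    rw [SimpleGraph.Subgraph.isPerfectMatching_iff] at hM12 hM23
    -- partner functions
    have H12 : ∀ j : Fin n, ∃ i : Fin n, ∀ hj : c (π j) = 2,
        ∃ h1 : c (π i) = 1, i < j ∧ π i < π j ∧
          M12.Adj ⟨i, Or.inl h1⟩ ⟨j, Or.inr hj⟩ := by
      intro j
      by_cases hj : c (π j) = 2
      · obtain ⟨w, hw, -⟩ := hM12 ⟨j, Or.inr hj⟩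
        have hadj := M12.adj_sub hw
        rw [show (G12 n π c) = SimpleGraph.fromRel _ from rfl,
          SimpleGraph.fromRel_adj] at hadj
        rcases hadj.2 with ⟨h, _, _⟩ | ⟨h1, _, hlt, hπlt⟩
        · rw [hj] at h; omega
        · exact ⟨w.1, fun hj' => ⟨h1, hlt, hπlt, by
            have : (⟨w.1, Or.inl h1⟩ : {i : Fin n // c (π i) = 1 ∨ c (π i) = 2}) = w :=
              Subtype.ext rfl
            rw [this]
            exact M12.adj_symm hw⟩⟩
      · exact ⟨j, fun hj' => absurd hj' hj⟩
    have H23 : ∀ j : Fin n, ∃ k : Fin n, ∀ hj : c (π j) = 2,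
        ∃ h3 : c (π k) = 3, j < k ∧ π j < π k ∧
          M23.Adj ⟨j, Or.inl hj⟩ ⟨k, Or.inr h3⟩ := by
      intro j
      by_cases hj : c (π j) = 2
      · obtain ⟨w, hw, -⟩ := hM23 ⟨j, Or.inl hj⟩
        have hadj := M23.adj_sub hw
        rw [show (G23 n π c) = SimpleGraph.fromRel _ from rfl,
          SimpleGraph.fromRel_adj] at hadj
        rcases hadj.2 with ⟨_, h3, hlt, hπlt⟩ | ⟨_, h, _⟩
        · exact ⟨w.1, fun hj' => ⟨h3, hlt, hπlt, by
            have : (⟨w.1, Or.inr h3⟩ : {i : Fin n // c (π i) = 2 ∨ c (π i) = 3}) = w :=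
              Subtype.ext rfl
            rw [this]
            exact hw⟩⟩
        · rw [hj] at h; omega
      · exact ⟨j, fun hj' => absurd hj' hj⟩
    choose p12 hp12 using H12
    choose p23 hp23 using H23
    -- injectivity
    have hinj12 : ∀ j j', c (π j) = 2 → c (π j') = 2 → p12 j = p12 j' → j = j' := by
      intro j j' hj hj' he
      obtain ⟨h1, -, -, hadj⟩ := hp12 j hj
      obtain ⟨h1', -, -, hadj'⟩ := hp12 j' hj'
      have hv : (⟨p12 j', Or.inl h1'⟩ : {i : Fin n // c (π i) = 1 ∨ c (π i) = 2}) =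
          ⟨p12 j, Or.inl h1⟩ := Subtype.ext he.symm
      rw [hv] at hadj'
      obtain ⟨w, -, hwu⟩ := hM12 ⟨p12 j, Or.inl h1⟩
      have := (hwu _ hadj).trans (hwu _ hadj').symm
      exact congrArg Subtype.val this
    have hinj23 : ∀ j j', c (π j) = 2 → c (π j') = 2 → p23 j = p23 j' → j = j' := by
      intro j j' hj hj' he
      obtain ⟨h3, -, -, hadj⟩ := hp23 j hj
      obtain ⟨h3', -, -, hadj'⟩ := hp23 j' hj'
      have hv : (⟨p23 j', Or.inr h3'⟩ : {i : Fin n // c (π i) = 2 ∨ c (π i) = 3}) =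
          ⟨p23 j, Or.inr h3⟩ := Subtype.ext he.symm
      rw [hv] at hadj'
      obtain ⟨w, -, hwu⟩ := hM23 ⟨p23 j, Or.inr h3⟩
      have := (hwu _ (M23.adj_symm hadj)).trans (hwu _ (M23.adj_symm hadj')).symm
      exact congrArg Subtype.val this
    -- surjectivity
    have hsurj12 : ∀ i : Fin n, c (π i) = 1 → ∃ j, c (π j) = 2 ∧ p12 j = i := by
      intro i hi
      obtain ⟨w, hw, -⟩ := hM12 ⟨i, Or.inl hi⟩
      have hadj := M12.adj_sub hw
      rw [show (G12 n π c) = SimpleGraph.fromRel _ from rfl,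
        SimpleGraph.fromRel_adj] at hadj
      have hw2 : c (π w.1) = 2 := by
        rcases hadj.2 with ⟨_, h, _⟩ | ⟨_, h, _⟩
        · exact h
        · rw [hi] at h; omega
      refine ⟨w.1, hw2, ?_⟩
      obtain ⟨h1, -, -, hadjp⟩ := hp12 w.1 hw2
      obtain ⟨u, -, huu⟩ := hM12 ⟨w.1, Or.inr hw2⟩
      have hw' : (⟨w.1, Or.inr hw2⟩ : {i : Fin n // c (π i) = 1 ∨ c (π i) = 2}) = w :=
        Subtype.ext rfl
      have e1 := huu _ (M12.adj_symm hadjp)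
      have e2 := huu _ (by rw [hw']; exact M12.adj_symm hw)
      have := e1.trans e2.symm
      exact congrArg Subtype.val this
    have hsurj23 : ∀ k : Fin n, c (π k) = 3 → ∃ j, c (π j) = 2 ∧ p23 j = k := by
      intro k hk
      obtain ⟨w, hw, -⟩ := hM23 ⟨k, Or.inr hk⟩
      have hadj := M23.adj_sub hw
      rw [show (G23 n π c) = SimpleGraph.fromRel _ from rfl,
        SimpleGraph.fromRel_adj] at hadj
      have hw2 : c (π w.1) = 2 := by
        rcases hadj.2 with ⟨h, -, -⟩ | ⟨h, -, -⟩
        · rw [hk] at h; omega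
        · exact h
      refine ⟨w.1, hw2, ?_⟩
      obtain ⟨h3, -, -, hadjp⟩ := hp23 w.1 hw2
      obtain ⟨u, -, huu⟩ := hM23 ⟨w.1, Or.inl hw2⟩
      have hw' : (⟨w.1, Or.inl hw2⟩ : {i : Fin n // c (π i) = 2 ∨ c (π i) = 3}) = w :=
        Subtype.ext rfl
      have e1 := huu _ hadjp
      have e2 := huu _ (by rw [hw']; exact M23.adj_symm hw)
      have := e1.trans e2.symm
      exact congrArg Subtype.val this
    -- the partition
    refine ⟨Finset.image (fun j => ({p12 j, j, p23 j} : Finset (Fin n)))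
      (Finset.univ.filter fun j => c (π j) = 2), ?_, ?_, ?_⟩
    · intro T hT
      simp only [Finset.mem_image, Finset.mem_filter, Finset.mem_univ, true_and] at hT
      obtain ⟨j, hj, rfl⟩ := hT
      obtain ⟨h1, hlt, hπlt, -⟩ := hp12 j hj
      obtain ⟨h3, hlt', hπlt', -⟩ := hp23 j hj
      exact ⟨p12 j, j, p23 j, hlt, hlt', rfl, hπlt, hπlt', h1, hj, h3⟩
    · intro S hS T hT hST
      simp only [Finset.coe_image, Set.mem_image, Finset.coe_filter, Set.mem_setOf_eq,
        Finset.mem_univ, true_and] at hS hT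
      obtain ⟨j, hj, rfl⟩ := hS
      obtain ⟨j', hj', rfl⟩ := hT
      rw [Finset.disjoint_left]
      intro v hvS hvT
      obtain ⟨h1, -, -, -⟩ := hp12 j hj
      obtain ⟨h3, -, -, -⟩ := hp23 j hj
      obtain ⟨h1', -, -, -⟩ := hp12 j' hj'
      obtain ⟨h3', -, -, -⟩ := hp23 j' hj'
      have hvS' : v = p12 j ∨ v = j ∨ v = p23 j := by simpa using hvS
      have hvT' : v = p12 j' ∨ v = j' ∨ v = p23 j' := by simpa using hvT
      have hjj : j = j' := by
        rcases hvS' with rfl|rfl|rfl <;> rcases hvT' with h|h|h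
        · exact hinj12 j j' hj hj' h
        · rw [h] at h1; omega
        · rw [h] at h1; omega
        · rw [h] at hj; omega
        · exact h
        · rw [h] at hj; omega
        · rw [h] at h3; omega
        · rw [h] at h3; omega
        · exact hinj23 j j' hj hj' h
      exact hST (by rw [hjj])
    · intro v
      rcases hc (π v) with hv | hv | hv
      · obtain ⟨j, hj, hpj⟩ := hsurj12 v hv
        refine ⟨{p12 j, j, p23 j}, ?_, ?_⟩
        · simp only [Finset.mem_image, Finset.mem_filter, Finset.mem_univ, true_and]
          exact ⟨j, hj, rfl⟩
        · simp [hpj]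
      · refine ⟨{p12 v, v, p23 v}, ?_, ?_⟩
        · simp only [Finset.mem_image, Finset.mem_filter, Finset.mem_univ, true_and]
          exact ⟨v, hv, rfl⟩
        · simp
      · obtain ⟨j, hj, hpj⟩ := hsurj23 v hv
        refine ⟨{p12 j, j, p23 j}, ?_, ?_⟩
        · simp only [Finset.mem_image, Finset.mem_filter, Finset.mem_univ, true_and]
          exact ⟨j, hj, rfl⟩
        · simp [hpj]
end

section
/- Let G be a complete multipartite graph with color classes A1, …, At, where t ≥ 3, and suppose G has a triangle partition. Let B1, B2, B3 be three pairwise distinct classes such that every class other than B1, B2, B3 has cardinality at most min(|B1|, |B2|, |B3|), and let T consist of one vertex chosen from each of B1, B2, B3. Then the subgraph of G induced on the complement of T has a triangle partition. -/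
open Finset in

lemma key {V ι : Type*} [DecidableEq V] [DecidableEq ι] (f : V → ι) :
    ∀ (m : ℕ) (s : Finset V), s.card = 3 * m →
    (∀ j, 3 * (s.filter fun v => f v = j).card ≤ s.card) →
    ∃ P : Finset (Finset V),
      (∀ T ∈ P, T.card = 3 ∧ T ⊆ s ∧ (T : Set V).Pairwise fun u v => f u ≠ f v) ∧
      ((P : Set (Finset V)).Pairwise fun S T => Disjoint S T) ∧
      (∀ v ∈ s, ∃ T ∈ P, v ∈ T) := by
  intro m
  induction m with
  | zero =>
    intro s hc _
    have : s = ∅ := card_eq_zero.mp (by omega)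
    subst this
    exact ⟨∅, by simp, by simp, by simp⟩
  | succ m ih =>
    intro s hc hb
    have hcle : ∀ j, (s.filter fun v => f v = j).card ≤ m + 1 := by
      intro j; have := hb j; omega
    have hsum : ∑ j ∈ s.image f, (s.filter fun v => f v = j).card = s.card :=
      (card_eq_sum_card_fiberwise (fun v hv => mem_image_of_mem f hv)).symm
    have hIcard : 3 ≤ (s.image f).card := by
      have h1 : ∑ j ∈ s.image f, (s.filter fun v => f v = j).card
          ≤ (s.image f).card * (m + 1) := by
        calc ∑ j ∈ s.image f, (s.filter fun v => f v = j).card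
            ≤ ∑ _j ∈ s.image f, (m+1) := sum_le_sum fun j _ => hcle j
          _ = (s.image f).card * (m+1) := by rw [sum_const, smul_eq_mul]
      have h2 : 3 * (m+1) ≤ (s.image f).card * (m+1) := by omega
      exact Nat.le_of_mul_le_mul_right h2 (by omega)
    have hInem : (s.image f).Nonempty := card_pos.mp (by omega)
    obtain ⟨j1, hj1I, hj1max⟩ :=
      (s.image f).exists_max_image (fun j => (s.filter fun v => f v = j).card) hInem
    have hI1nem : ((s.image f).erase j1).Nonempty :=
      card_pos.mp (by rw [card_erase_of_mem hj1I]; omega)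
    obtain ⟨j2, hj2I1, hj2max⟩ :=
      ((s.image f).erase j1).exists_max_image (fun j => (s.filter fun v => f v = j).card) hI1nem
    have hj2I : j2 ∈ s.image f := mem_of_mem_erase hj2I1
    have hj21 : j2 ≠ j1 := ne_of_mem_erase hj2I1
    have hI2nem : (((s.image f).erase j1).erase j2).Nonempty := card_pos.mp (by
      rw [card_erase_of_mem hj2I1, card_erase_of_mem hj1I]; omega)
    obtain ⟨j3, hj3I2, hj3max⟩ :=
      (((s.image f).erase j1).erase j2).exists_max_image
        (fun j => (s.filter fun v => f v = j).card) hI2nem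
    have hj32 : j3 ≠ j2 := ne_of_mem_erase hj3I2
    have hj3I1 : j3 ∈ (s.image f).erase j1 := mem_of_mem_erase hj3I2
    have hj31 : j3 ≠ j1 := ne_of_mem_erase hj3I1
    have hj3I : j3 ∈ s.image f := mem_of_mem_erase hj3I1
    obtain ⟨u1, hu1s, hu1⟩ := mem_image.mp hj1I
    obtain ⟨u2, hu2s, hu2⟩ := mem_image.mp hj2I
    obtain ⟨u3, hu3s, hu3⟩ := mem_image.mp hj3I
    have hu12 : u1 ≠ u2 := fun h => hj21 (by rw [← hu1, ← hu2, h])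
    have hu13 : u1 ≠ u3 := fun h => hj31 (by rw [← hu1, ← hu3, h])
    have hu23 : u2 ≠ u3 := fun h => hj32 (by rw [← hu2, ← hu3, h])
    have hT0card : ({u1, u2, u3} : Finset V).card = 3 := by
      rw [card_insert_of_notMem (by simp [hu12, hu13]),
        card_insert_of_notMem (by simp [hu23]), card_singleton]
    have hT0s : ({u1, u2, u3} : Finset V) ⊆ s := by
      intro x hx
      simp only [mem_insert, mem_singleton] at hx
      rcases hx with h | h | h <;> subst h <;> assumption
    have hs'card : (s \ {u1, u2, u3}).card = 3 * m := by
      rw [card_sdiff_of_subset hT0s, hT0card]; omega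
    have hb' : ∀ j, 3 * ((s \ {u1, u2, u3}).filter fun v => f v = j).card
        ≤ (s \ {u1, u2, u3}).card := by
      intro j
      rw [hs'card]
      by_cases hj : j = j1 ∨ j = j2 ∨ j = j3
      · obtain ⟨u, hus, huv, huj⟩ :
            ∃ u, u ∈ s ∧ u ∈ ({u1, u2, u3} : Finset V) ∧ f u = j := by
          rcases hj with h | h | h <;> subst h
          · exact ⟨u1, hu1s, by simp, hu1⟩
          · exact ⟨u2, hu2s, by simp, hu2⟩
          · exact ⟨u3, hu3s, by simp, hu3⟩
        have hsub : ((s \ {u1, u2, u3}).filter fun v => f v = j)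
            ⊆ (s.filter fun v => f v = j).erase u := by
          intro x hx
          simp only [mem_filter, mem_sdiff] at hx
          exact mem_erase.mpr ⟨fun h => hx.1.2 (h ▸ huv), mem_filter.mpr ⟨hx.1.1, hx.2⟩⟩
        have h1 := card_le_card hsub
        rw [card_erase_of_mem (mem_filter.mpr ⟨hus, huj⟩)] at h1
        have h2 := hcle j
        have hpos : 1 ≤ (s.filter fun v => f v = j).card :=
          card_pos.mpr ⟨u, mem_filter.mpr ⟨hus, huj⟩⟩
        omega
      · push_neg at hj
        obtain ⟨hne1, hne2, hne3⟩ := hj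
        have hsub : ((s \ {u1, u2, u3}).filter fun v => f v = j).card
            ≤ (s.filter fun v => f v = j).card :=
          card_le_card (filter_subset_filter _ sdiff_subset)
        have hjm : (s.filter fun v => f v = j).card ≤ m := by
          by_cases hjI : j ∈ s.image f
          · have hle3 := hj3max j (by simp [mem_erase, hne1, hne2, hjI])
            have hle2 := hj2max j3 hj3I1
            have hle1 := hj1max j2 hj2I
            have hJsub : ({j, j1, j2, j3} : Finset ι) ⊆ s.image f := by
              intro x hx
              simp only [mem_insert, mem_singleton] at hx
              rcases hx with h | h | h | h <;> subst h <;> assumption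
            have hJsum : ∑ j' ∈ ({j, j1, j2, j3} : Finset ι),
                (s.filter fun v => f v = j').card ≤ s.card :=
              le_trans (sum_le_sum_of_subset hJsub) (le_of_eq hsum)
            have hexp : ∑ j' ∈ ({j, j1, j2, j3} : Finset ι),
                (s.filter fun v => f v = j').card
                = (s.filter fun v => f v = j).card + ((s.filter fun v => f v = j1).card
                  + ((s.filter fun v => f v = j2).card + (s.filter fun v => f v = j3).card)) := by
              rw [sum_insert (by simp [hne1, hne2, hne3]),
                sum_insert (by simp [hj21.symm, hj31.symm]),
                sum_insert (by simp [hj32.symm]), sum_singleton]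
            omega
          · have hemp : (s.filter fun v => f v = j) = ∅ :=
              filter_eq_empty_iff.mpr fun x hx hfx => hjI (hfx ▸ mem_image_of_mem f hx)
            rw [hemp]; simp
        omega
    obtain ⟨P', hP'tri, hP'disj, hP'cov⟩ := ih (s \ {u1, u2, u3}) hs'card hb'
    have hT0nm : ∀ x ∈ ({u1, u2, u3} : Finset V), f x = j1 ∨ f x = j2 ∨ f x = j3 := by
      intro x hx
      simp only [mem_insert, mem_singleton] at hx
      rcases hx with h | h | h <;> rw [h] <;> simp [hu1, hu2, hu3]
    refine ⟨insert {u1, u2, u3} P', ?_, ?_, ?_⟩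
    · intro T hT
      rcases mem_insert.mp hT with h | h
      · subst h
        refine ⟨hT0card, hT0s, ?_⟩
        intro a ha b hb2 hab
        simp only [coe_insert, coe_singleton, Set.mem_insert_iff,
          Set.mem_singleton_iff] at ha hb2
        rcases ha with h | h | h <;> rcases hb2 with h' | h' | h' <;>
          first
            | exact absurd (h.trans h'.symm) hab
            | (rw [h, h', hu1, hu2]; exact fun hh => hj21 hh.symm)
            | (rw [h, h', hu1, hu3]; exact fun hh => hj31 hh.symm)
            | (rw [h, h', hu2, hu1]; exact hj21)
            | (rw [h, h', hu2, hu3]; exact fun hh => hj32 hh.symm)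
            | (rw [h, h', hu3, hu1]; exact hj31)
            | (rw [h, h', hu3, hu2]; exact hj32)
      · obtain ⟨h1, h2, h3⟩ := hP'tri T h
        exact ⟨h1, h2.trans sdiff_subset, h3⟩
    · rw [coe_insert]
      haveI : Std.Symm (fun S T : Finset V => Disjoint S T) := ⟨fun a b h => h.symm⟩
      refine Set.pairwise_insert_of_symm.mpr ⟨hP'disj, ?_⟩
      intro T hT _
      have hTs' : T ⊆ s \ {u1, u2, u3} := (hP'tri T hT).2.1
      rw [disjoint_left]
      intro x hx hxT
      exact (mem_sdiff.mp (hTs' hxT)).2 hx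
    · intro v hv
      by_cases hvT : v ∈ ({u1, u2, u3} : Finset V)
      · exact ⟨{u1, u2, u3}, mem_insert_self _ _, hvT⟩
      · obtain ⟨T, hT, hvT'⟩ := hP'cov v (mem_sdiff.mpr ⟨hv, hvT⟩)
        exact ⟨T, mem_insert_of_mem hT, hvT'⟩

/-- A triangle partition: a triangle packing covering every vertex. -/
def IsTrianglePartition {V : Type*} (G : SimpleGraph V) (P : Finset (Finset V)) : Prop :=
  IsTrianglePacking G P ∧ ∀ v, ∃ T ∈ P, v ∈ T

/-- Let `G` be the complete multipartite graph whose color classes are the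
fibers of `f : V → Fin t` (all nonempty), `t ≥ 3`, and suppose `G` has a triangle
partition. Let `i1, i2, i3` be three distinct classes such that every other class is no
larger than each of them, and pick one vertex `v1, v2, v3` from each. Then the subgraph
of `G` induced on the complement of `{v1, v2, v3}` has a triangle partition. -/
theorem stmt7 {V : Type*} [Fintype V] (t : ℕ) (ht : 3 ≤ t) (f : V → Fin t)
    (hf : Function.Surjective f) (G : SimpleGraph V)
    (hG : ∀ u v, G.Adj u v ↔ f u ≠ f v)
    (hpart : ∃ P : Finset (Finset V), IsTrianglePartition G P)
    (i1 i2 i3 : Fin t) (h12 : i1 ≠ i2) (h13 : i1 ≠ i3) (h23 : i2 ≠ i3)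
    (hmax : ∀ j : Fin t, j ≠ i1 → j ≠ i2 → j ≠ i3 →
      {v | f v = j}.ncard ≤
        min {v | f v = i1}.ncard (min {v | f v = i2}.ncard {v | f v = i3}.ncard))
    (v1 v2 v3 : V) (hv1 : f v1 = i1) (hv2 : f v2 = i2) (hv3 : f v3 = i3) :
    ∃ P : Finset (Finset {v : V // v ≠ v1 ∧ v ≠ v2 ∧ v ≠ v3}),
      IsTrianglePartition (G.induce {v | v ≠ v1 ∧ v ≠ v2 ∧ v ≠ v3}) P := by
  classical
  obtain ⟨P0, ⟨⟨htri, hdisj⟩, hcov⟩⟩ := hpart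
  have hbiU : P0.biUnion id = Finset.univ := by
    ext v
    simp only [Finset.mem_biUnion, id, Finset.mem_univ, iff_true]
    exact hcov v
  have hcardV : Fintype.card V = 3 * P0.card := by
    have h1 : (P0.biUnion id).card = ∑ T ∈ P0, T.card :=
      Finset.card_biUnion fun x hx y hy hxy =>
        hdisj (Finset.mem_coe.mpr hx) (Finset.mem_coe.mpr hy) hxy
    have h2 : ∑ T ∈ P0, T.card = P0.card * 3 := by
      rw [Finset.sum_congr rfl fun T hT => ((htri T hT).1 : T.card = 3),
        Finset.sum_const, smul_eq_mul]
    rw [hbiU, Finset.card_univ] at h1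
    omega
  have hclass : ∀ j, (Finset.univ.filter fun v => f v = j).card ≤ P0.card := by
    intro j
    choose g hg1 hg2 using hcov
    refine Finset.card_le_card_of_injOn g (fun v _ => hg1 v) ?_
    intro v hv w hw hvw
    by_contra hne
    have hT := htri (g v) (hg1 v)
    have hadj : G.Adj v w :=
      hT.2 (Finset.mem_coe.mpr (hg2 v)) (Finset.mem_coe.mpr (hvw ▸ hg2 w)) hne
    have hfne := (hG v w).mp hadj
    simp only [Finset.mem_coe, Finset.mem_filter] at hv hw
    exact hfne (hv.2.trans hw.2.symm)
  have hd12 : v1 ≠ v2 := fun h => h12 (by rw [← hv1, ← hv2, h])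
  have hd13 : v1 ≠ v3 := fun h => h13 (by rw [← hv1, ← hv3, h])
  have hd23 : v2 ≠ v3 := fun h => h23 (by rw [← hv2, ← hv3, h])
  have hm0 : 1 ≤ P0.card := by
    have : 0 < Fintype.card V := Fintype.card_pos_iff.mpr ⟨v1⟩
    omega
  have hs0card : (Finset.univ \ {v1, v2, v3} : Finset V).card = Fintype.card V - 3 := by
    rw [Finset.card_sdiff_of_subset (Finset.subset_univ _), Finset.card_univ]
    congr 1
    rw [Finset.card_insert_of_notMem (by simp [hd12, hd13]),
      Finset.card_insert_of_notMem (by simp [hd23]), Finset.card_singleton]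
  have hs0' : (Finset.univ \ {v1, v2, v3} : Finset V).card = 3 * (P0.card - 1) := by omega
  -- fiber computations
  have hfibk : ∀ (i : Fin t) (vk : V), f vk = i → (vk = v1 ∨ vk = v2 ∨ vk = v3) →
      ((Finset.univ \ {v1, v2, v3} : Finset V).filter fun v => f v = i)
        ⊆ (Finset.univ.filter fun v => f v = i).erase vk := by
    intro i vk hfk hvk x hx
    simp only [Finset.mem_filter, Finset.mem_sdiff, Finset.mem_univ, true_and,
      Finset.mem_insert, Finset.mem_singleton, not_or] at hx
    refine Finset.mem_erase.mpr ⟨?_, Finset.mem_filter.mpr ⟨Finset.mem_univ _, hx.2⟩⟩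
    rcases hvk with h | h | h <;> subst h
    · exact hx.1.1
    · exact hx.1.2.1
    · exact hx.1.2.2
  have hbound : ∀ j, 3 * (((Finset.univ \ {v1, v2, v3} : Finset V)).filter
      fun v => f v = j).card ≤ (Finset.univ \ {v1, v2, v3} : Finset V).card := by
    intro j
    rw [hs0']
    by_cases hj : j = i1 ∨ j = i2 ∨ j = i3
    · obtain ⟨vk, hfk, hvk⟩ : ∃ vk, f vk = j ∧ (vk = v1 ∨ vk = v2 ∨ vk = v3) := by
        rcases hj with h | h | h <;> subst h
        · exact ⟨v1, hv1, Or.inl rfl⟩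
        · exact ⟨v2, hv2, Or.inr (Or.inl rfl)⟩
        · exact ⟨v3, hv3, Or.inr (Or.inr rfl)⟩
      have hsub := Finset.card_le_card (hfibk j vk hfk hvk)
      have hvkm : vk ∈ Finset.univ.filter fun v => f v = j :=
        Finset.mem_filter.mpr ⟨Finset.mem_univ _, hfk⟩
      rw [Finset.card_erase_of_mem hvkm] at hsub
      have h1 := hclass j
      have hpos : 1 ≤ (Finset.univ.filter fun v => f v = j).card :=
        Finset.card_pos.mpr ⟨vk, Finset.mem_filter.mpr ⟨Finset.mem_univ _, hfk⟩⟩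
      omega
    · push_neg at hj
      obtain ⟨hne1, hne2, hne3⟩ := hj
      have heq : ((Finset.univ \ {v1, v2, v3} : Finset V).filter fun v => f v = j)
          = Finset.univ.filter fun v => f v = j := by
        ext x
        simp only [Finset.mem_filter, Finset.mem_sdiff, Finset.mem_univ, true_and,
          Finset.mem_insert, Finset.mem_singleton, not_or]
        constructor
        · exact fun h => h.2
        · intro hfx
          refine ⟨⟨fun h => hne1 ?_, fun h => hne2 ?_, fun h => hne3 ?_⟩, hfx⟩
          · rw [← hfx, h, hv1]
          · rw [← hfx, h, hv2]
          · rw [← hfx, h, hv3]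
      rw [heq]
      have hnc : ∀ i : Fin t, {v | f v = i}.ncard = (Finset.univ.filter fun v => f v = i).card := by
        intro i
        rw [show {v | f v = i} = ((Finset.univ.filter fun v => f v = i : Finset V) : Set V) by
          ext x; simp, Set.ncard_coe_finset]
      have hmj := hmax j hne1 hne2 hne3
      rw [hnc, hnc, hnc, hnc] at hmj
      have hj1 : (Finset.univ.filter fun v => f v = j).card
          ≤ (Finset.univ.filter fun v => f v = i1).card := le_trans hmj (min_le_left _ _)
      have hj2 : (Finset.univ.filter fun v => f v = j).card
          ≤ (Finset.univ.filter fun v => f v = i2).card :=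
        le_trans hmj (le_trans (min_le_right _ _) (min_le_left _ _))
      have hj3 : (Finset.univ.filter fun v => f v = j).card
          ≤ (Finset.univ.filter fun v => f v = i3).card :=
        le_trans hmj (le_trans (min_le_right _ _) (min_le_right _ _))
      have huniv : ∑ j' ∈ (Finset.univ : Finset (Fin t)),
          (Finset.univ.filter fun v => f v = j').card = Fintype.card V := by
        rw [← Finset.card_univ]
        exact (Finset.card_eq_sum_card_fiberwise fun v _ => Finset.mem_univ _).symm
      have hsub4 : ∑ j' ∈ ({j, i1, i2, i3} : Finset (Fin t)),
          (Finset.univ.filter fun v => f v = j').card ≤ Fintype.card V :=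
        le_trans (Finset.sum_le_sum_of_subset (Finset.subset_univ _)) (le_of_eq huniv)
      have hexp : ∑ j' ∈ ({j, i1, i2, i3} : Finset (Fin t)),
          (Finset.univ.filter fun v => f v = j').card
          = (Finset.univ.filter fun v => f v = j).card
            + ((Finset.univ.filter fun v => f v = i1).card
            + ((Finset.univ.filter fun v => f v = i2).card
            + (Finset.univ.filter fun v => f v = i3).card)) := by
        rw [Finset.sum_insert (by simp [hne1, hne2, hne3]),
          Finset.sum_insert (by simp [h12, h13]),
          Finset.sum_insert (by simp [h23]), Finset.sum_singleton]
      omega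
  obtain ⟨P, hPtri, hPdisj, hPcov⟩ := key f (P0.card - 1) (Finset.univ \ {v1, v2, v3}) hs0' hbound
  have hmem : ∀ v : V, v ∈ (Finset.univ \ {v1, v2, v3} : Finset V)
      ↔ (v ≠ v1 ∧ v ≠ v2 ∧ v ≠ v3) := by
    intro v
    simp [not_or]
  refine ⟨P.image (fun T => T.subtype fun v => v ≠ v1 ∧ v ≠ v2 ∧ v ≠ v3), ⟨⟨?_, ?_⟩, ?_⟩⟩
  · intro T' hT'
    obtain ⟨T, hTP, rfl⟩ := Finset.mem_image.mp hT'
    obtain ⟨hc3, hTs, hTp⟩ := hPtri T hTP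
    constructor
    · rw [Finset.card_subtype, Finset.filter_true_of_mem fun x hx => (hmem x).mp (hTs hx)]
      exact hc3
    · intro a ha b hb hab
      have ha' : (a : V) ∈ T := Finset.mem_subtype.mp (Finset.mem_coe.mp ha)
      have hb' : (b : V) ∈ T := Finset.mem_subtype.mp (Finset.mem_coe.mp hb)
      have hne : (a : V) ≠ (b : V) := fun h => hab (Subtype.ext h)
      exact (hG a.1 b.1).mpr (hTp (Finset.mem_coe.mpr ha') (Finset.mem_coe.mpr hb') hne)
  · intro S' hS' T' hT' hne
    obtain ⟨S, hSP, rfl⟩ := Finset.mem_image.mp (Finset.mem_coe.mp hS')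
    obtain ⟨T, hTP, rfl⟩ := Finset.mem_image.mp (Finset.mem_coe.mp hT')
    have hST : S ≠ T := fun h => hne (by rw [h])
    have hd : Disjoint S T := hPdisj (Finset.mem_coe.mpr hSP) (Finset.mem_coe.mpr hTP) hST
    rw [Finset.disjoint_left] at hd ⊢
    intro a haS haT
    exact hd (Finset.mem_subtype.mp haS) (Finset.mem_subtype.mp haT)
  · intro v
    obtain ⟨T, hT, hvT⟩ := hPcov v.1 ((hmem v.1).mpr v.2)
    exact ⟨T.subtype _, Finset.mem_image_of_mem _ hT, Finset.mem_subtype.mpr hvT⟩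
end

section
/- Let G be a bipartite permutation graph with bipartition (X, Y), given by a permutation diagram t, b : V → ℝ. Let P be a C4-packing of G containing two squares C1 = {a, b̂, r, s} and C2 = {c, d, p, q} with a, b̂, c, d ∈ X and p, q, r, s ∈ Y, such that t(a) < t(b̂) < t(c) < t(d) and t(p) < t(q) < t(r) < t(s). Then there exists a C4-packing P′ of G with |P′| = |P| such that {a, b̂, p, q} and {c, d, r, s} are squares of P′. -/
/-- A square: a set of four vertices inducing a 4-cycle `C4`. -/
def IsC4Square {V : Type*} [DecidableEq V] (G : SimpleGraph V) (S : Finset V) : Prop :=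
  ∃ v1 v2 v3 v4 : V, S = {v1, v2, v3, v4} ∧ S.card = 4 ∧
    G.Adj v1 v2 ∧ G.Adj v2 v3 ∧ G.Adj v3 v4 ∧ G.Adj v4 v1 ∧
    ¬G.Adj v1 v3 ∧ ¬G.Adj v2 v4

/-- A `C4`-packing: a collection of pairwise vertex-disjoint squares. -/
def IsC4Packing {V : Type*} [DecidableEq V] (G : SimpleGraph V)
    (P : Finset (Finset V)) : Prop :=
  (∀ S ∈ P, IsC4Square G S) ∧
    (P : Set (Finset V)).Pairwise fun S T => Disjoint S T


/-- In a square of a bipartite graph, every `X`-vertex is adjacent to every `Y`-vertex. -/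
lemma cross_adj {V : Type*} [DecidableEq V] (G : SimpleGraph V)
    (X Y : Set V) (hdisj : Disjoint X Y) (hunion : X ∪ Y = Set.univ)
    (hX : ∀ u ∈ X, ∀ v ∈ X, ¬G.Adj u v) (hY : ∀ u ∈ Y, ∀ v ∈ Y, ¬G.Adj u v)
    {S : Finset V} (hS : IsC4Square G S) {u v : V} (hu : u ∈ S) (hv : v ∈ S)
    (huX : u ∈ X) (hvY : v ∈ Y) : G.Adj u v := by
  obtain ⟨v1, v2, v3, v4, hset, hcard, h12, h23, h34, h41, h13, h24⟩ := hS
  have key : ∀ w z t : V, G.Adj w z → G.Adj z t → w ∈ X → t ∈ Y → False := by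
    intro w z t hwz hzt hw ht
    have hz : z ∈ X ∪ Y := by rw [hunion]; trivial
    rcases hz with hz | hz
    · exact hX w hw z hz hwz
    · exact hY z hz t ht hzt
  have hne : u ≠ v := fun h => Set.disjoint_left.1 hdisj huX (h ▸ hvY)
  rw [hset] at hu hv
  simp only [Finset.mem_insert, Finset.mem_singleton] at hu hv
  rcases hu with rfl | rfl | rfl | rfl <;> rcases hv with rfl | rfl | rfl | rfl <;>
    first
    | exact absurd rfl hne
    | exact h12 | exact h23 | exact h34 | exact h41
    | exact h12.symm | exact h23.symm | exact h34.symm | exact h41.symm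
    | exact (key _ _ _ h12 h23 huX hvY).elim
    | exact (key _ _ _ h23 h34 huX hvY).elim
    | exact (key _ _ _ h34 h41 huX hvY).elim
    | exact (key _ _ _ h41 h12 huX hvY).elim

/-- Uncrossing lemma. -/
lemma uncross {V : Type*} (G : SimpleGraph V) (top bot : V → ℝ)
    (hbot : Function.Injective bot)
    (hadj : ∀ u v, G.Adj u v ↔
      (top u < top v ∧ bot v < bot u) ∨ (top v < top u ∧ bot u < bot v))
    (X Y : Set V)
    (hX : ∀ u ∈ X, ∀ v ∈ X, ¬G.Adj u v) (hY : ∀ u ∈ Y, ∀ v ∈ Y, ¬G.Adj u v)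
    {x1 x2 y1 y2 : V} (hx1 : x1 ∈ X) (hx2 : x2 ∈ X) (hy1 : y1 ∈ Y) (hy2 : y2 ∈ Y)
    (htx : top x1 < top x2) (hty : top y1 < top y2)
    (h12 : G.Adj x1 y2) (h21 : G.Adj x2 y1) : G.Adj x1 y1 ∧ G.Adj x2 y2 := by
  have hbx : bot x1 < bot x2 := by
    have hne : bot x1 ≠ bot x2 := fun h => by
      exact absurd (hbot h ▸ htx) (lt_irrefl _)
    rcases hne.lt_or_gt with h | h
    · exact h
    · exact absurd ((hadj x1 x2).2 (Or.inl ⟨htx, h⟩)) (hX x1 hx1 x2 hx2)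
  have hby : bot y1 < bot y2 := by
    have hne : bot y1 ≠ bot y2 := fun h => by
      exact absurd (hbot h ▸ hty) (lt_irrefl _)
    rcases hne.lt_or_gt with h | h
    · exact h
    · exact absurd ((hadj y1 y2).2 (Or.inl ⟨hty, h⟩)) (hY y1 hy1 y2 hy2)
  rw [hadj] at h12 h21
  constructor <;> rw [hadj] <;>
    rcases h12 with ⟨t1, b1⟩ | ⟨t1, b1⟩ <;> rcases h21 with ⟨t2, b2⟩ | ⟨t2, b2⟩ <;>
    first
    | exact Or.inl ⟨by linarith, by linarith⟩
    | exact Or.inr ⟨by linarith, by linarith⟩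

set_option maxHeartbeats 1000000 in
/-- Let `G` be a bipartite permutation graph with bipartition `(X, Y)` given
by a permutation diagram `top, bot`, and let `P` be a `C4`-packing containing two squares
`{a, b', r, s}` and `{c, d, p, q}` with `a, b', c, d ∈ X`, `p, q, r, s ∈ Y`,
`top a < top b' < top c < top d` and `top p < top q < top r < top s`. Then there is a
`C4`-packing of the same cardinality containing the squares `{a, b', p, q}` and
`{c, d, r, s}`. -/
theorem stmt9 {V : Type*} [Fintype V] [DecidableEq V] (G : SimpleGraph V)
    (top bot : V → ℝ) (htop : Function.Injective top) (hbot : Function.Injective bot)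
    (hadj : ∀ u v, G.Adj u v ↔
      (top u < top v ∧ bot v < bot u) ∨ (top v < top u ∧ bot u < bot v))
    (X Y : Set V) (hdisj : Disjoint X Y) (hunion : X ∪ Y = Set.univ)
    (hX : ∀ u ∈ X, ∀ v ∈ X, ¬G.Adj u v) (hY : ∀ u ∈ Y, ∀ v ∈ Y, ¬G.Adj u v)
    (P : Finset (Finset V)) (hP : IsC4Packing G P)
    (a b' c d p q r s : V)
    (haX : a ∈ X) (hb'X : b' ∈ X) (hcX : c ∈ X) (hdX : d ∈ X)
    (hpY : p ∈ Y) (hqY : q ∈ Y) (hrY : r ∈ Y) (hsY : s ∈ Y)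
    (hC1 : ({a, b', r, s} : Finset V) ∈ P) (hC2 : ({c, d, p, q} : Finset V) ∈ P)
    (h1 : top a < top b') (h2 : top b' < top c) (h3 : top c < top d)
    (h4 : top p < top q) (h5 : top q < top r) (h6 : top r < top s) :
    ∃ P' : Finset (Finset V), IsC4Packing G P' ∧ P'.card = P.card ∧
      ({a, b', p, q} : Finset V) ∈ P' ∧ ({c, d, r, s} : Finset V) ∈ P' := by
  -- distinctness facts
  have hXY : ∀ x ∈ X, ∀ y ∈ Y, x ≠ y := fun x hx y hy hxy =>
    Set.disjoint_left.1 hdisj hx (hxy ▸ hy)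
  have hab : a ≠ b' := fun h => (h1.ne (congrArg top h))
  have hac : a ≠ c := fun h => ((h1.trans h2).ne (congrArg top h))
  have had : a ≠ d := fun h => (((h1.trans h2).trans h3).ne (congrArg top h))
  have hbc : b' ≠ c := fun h => (h2.ne (congrArg top h))
  have hbd : b' ≠ d := fun h => ((h2.trans h3).ne (congrArg top h))
  have hcd : c ≠ d := fun h => (h3.ne (congrArg top h))
  have hpq : p ≠ q := fun h => (h4.ne (congrArg top h))
  have hpr : p ≠ r := fun h => ((h4.trans h5).ne (congrArg top h))
  have hps : p ≠ s := fun h => (((h4.trans h5).trans h6).ne (congrArg top h))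
  have hqr : q ≠ r := fun h => (h5.ne (congrArg top h))
  have hqs : q ≠ s := fun h => ((h5.trans h6).ne (congrArg top h))
  have hrs : r ≠ s := fun h => (h6.ne (congrArg top h))
  have hap : a ≠ p := hXY a haX p hpY
  have haq : a ≠ q := hXY a haX q hqY
  have har0 : a ≠ r := hXY a haX r hrY
  have has0 : a ≠ s := hXY a haX s hsY
  have hbp : b' ≠ p := hXY b' hb'X p hpY
  have hbq : b' ≠ q := hXY b' hb'X q hqY
  have hbr0 : b' ≠ r := hXY b' hb'X r hrY
  have hbs0 : b' ≠ s := hXY b' hb'X s hsY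
  have hcp : c ≠ p := hXY c hcX p hpY
  have hcq : c ≠ q := hXY c hcX q hqY
  have hcr0 : c ≠ r := hXY c hcX r hrY
  have hcs0 : c ≠ s := hXY c hcX s hsY
  have hdp : d ≠ p := hXY d hdX p hpY
  have hdq : d ≠ q := hXY d hdX q hqY
  have hdr0 : d ≠ r := hXY d hdX r hrY
  have hds0 : d ≠ s := hXY d hdX s hsY
  -- adjacencies from the two squares
  have hsq1 := hP.1 _ hC1
  have hsq2 := hP.1 _ hC2
  have har : G.Adj a r := cross_adj G X Y hdisj hunion hX hY hsq1 (by simp) (by simp) haX hrY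
  have has : G.Adj a s := cross_adj G X Y hdisj hunion hX hY hsq1 (by simp) (by simp) haX hsY
  have hbr : G.Adj b' r := cross_adj G X Y hdisj hunion hX hY hsq1 (by simp) (by simp) hb'X hrY
  have hbs : G.Adj b' s := cross_adj G X Y hdisj hunion hX hY hsq1 (by simp) (by simp) hb'X hsY
  have hcp' : G.Adj c p := cross_adj G X Y hdisj hunion hX hY hsq2 (by simp) (by simp) hcX hpY
  have hcq' : G.Adj c q := cross_adj G X Y hdisj hunion hX hY hsq2 (by simp) (by simp) hcX hqY
  have hdp' : G.Adj d p := cross_adj G X Y hdisj hunion hX hY hsq2 (by simp) (by simp) hdX hpY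
  have hdq' : G.Adj d q := cross_adj G X Y hdisj hunion hX hY hsq2 (by simp) (by simp) hdX hqY
  -- uncross to get the new adjacencies
  obtain ⟨hap', hcr'⟩ := uncross G top bot hbot hadj X Y hX hY haX hcX hpY hrY
    (h1.trans h2) (h4.trans h5) har hcp'
  obtain ⟨haq', hcs'⟩ := uncross G top bot hbot hadj X Y hX hY haX hcX hqY hsY
    (h1.trans h2) (h5.trans h6) has hcq'
  obtain ⟨hbp', -⟩ := uncross G top bot hbot hadj X Y hX hY hb'X hcX hpY hrY
    h2 (h4.trans h5) hbr hcp'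
  obtain ⟨hbq', -⟩ := uncross G top bot hbot hadj X Y hX hY hb'X hcX hqY hsY
    h2 (h5.trans h6) hbs hcq'
  obtain ⟨-, hdr'⟩ := uncross G top bot hbot hadj X Y hX hY hb'X hdX hpY hrY
    (h2.trans h3) (h4.trans h5) hbr hdp'
  obtain ⟨-, hds'⟩ := uncross G top bot hbot hadj X Y hX hY haX hdX hqY hsY
    (h1.trans (h2.trans h3)) (h5.trans h6) has hdq'
  -- the new squares
  have cardS1 : ({a, b', p, q} : Finset V).card = 4 := by
    rw [Finset.card_insert_of_notMem (by simp [hab, hap, haq]),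
      Finset.card_insert_of_notMem (by simp [hbp, hbq]),
      Finset.card_insert_of_notMem (by simp [hpq]), Finset.card_singleton]
  have cardS2 : ({c, d, r, s} : Finset V).card = 4 := by
    rw [Finset.card_insert_of_notMem (by simp [hcd, hcr0, hcs0]),
      Finset.card_insert_of_notMem (by simp [hdr0, hds0]),
      Finset.card_insert_of_notMem (by simp [hrs]), Finset.card_singleton]
  have sqS1 : IsC4Square G ({a, b', p, q} : Finset V) := by
    refine ⟨a, p, b', q, ?_, cardS1, hap', hbp'.symm, hbq', haq'.symm,
      hX a haX b' hb'X, hY p hpY q hqY⟩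
    ext x; simp only [Finset.mem_insert, Finset.mem_singleton]; tauto
  have sqS2 : IsC4Square G ({c, d, r, s} : Finset V) := by
    refine ⟨c, r, d, s, ?_, cardS2, hcr', hdr'.symm, hds', hcs'.symm,
      hX c hcX d hdX, hY r hrY s hsY⟩
    ext x; simp only [Finset.mem_insert, Finset.mem_singleton]; tauto
  have hC1C2 : ({a, b', r, s} : Finset V) ≠ {c, d, p, q} := fun h => by
    have : a ∈ ({c, d, p, q} : Finset V) := h ▸ (by simp : a ∈ ({a, b', r, s} : Finset V))
    simp only [Finset.mem_insert, Finset.mem_singleton] at this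
    rcases this with h' | h' | h' | h'
    exacts [hac h', had h', hap h', haq h']
  -- the leftover packing
  have hQsub : (P.erase {a, b', r, s}).erase {c, d, p, q} ⊆ P :=
    (Finset.erase_subset _ _).trans (Finset.erase_subset _ _)
  have hQC1 : ∀ T ∈ (P.erase {a, b', r, s}).erase {c, d, p, q},
      T ≠ ({a, b', r, s} : Finset V) := fun T hT =>
    Finset.ne_of_mem_erase (Finset.mem_of_mem_erase hT)
  have hQC2 : ∀ T ∈ (P.erase {a, b', r, s}).erase {c, d, p, q},
      T ≠ ({c, d, p, q} : Finset V) := fun T hT => Finset.ne_of_mem_erase hT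
  have hTdisj : ∀ T ∈ (P.erase {a, b', r, s}).erase {c, d, p, q},
      Disjoint T ({a, b', p, q} : Finset V) ∧ Disjoint T ({c, d, r, s} : Finset V) := by
    intro T hT
    have d1 : Disjoint T ({a, b', r, s} : Finset V) := hP.2 (hQsub hT) hC1 (hQC1 T hT)
    have d2 : Disjoint T ({c, d, p, q} : Finset V) := hP.2 (hQsub hT) hC2 (hQC2 T hT)
    constructor <;> rw [Finset.disjoint_left] <;> intro x hx hx' <;>
      simp only [Finset.mem_insert, Finset.mem_singleton] at hx'
    · rcases hx' with rfl | rfl | rfl | rfl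
      · exact Finset.disjoint_left.1 d1 hx (by simp)
      · exact Finset.disjoint_left.1 d1 hx (by simp)
      · exact Finset.disjoint_left.1 d2 hx (by simp)
      · exact Finset.disjoint_left.1 d2 hx (by simp)
    · rcases hx' with rfl | rfl | rfl | rfl
      · exact Finset.disjoint_left.1 d2 hx (by simp)
      · exact Finset.disjoint_left.1 d2 hx (by simp)
      · exact Finset.disjoint_left.1 d1 hx (by simp)
      · exact Finset.disjoint_left.1 d1 hx (by simp)
  have hS1S2 : Disjoint ({a, b', p, q} : Finset V) ({c, d, r, s} : Finset V) := by
    rw [Finset.disjoint_left]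
    intro x hx hx'
    simp only [Finset.mem_insert, Finset.mem_singleton] at hx hx'
    rcases hx with rfl | rfl | rfl | rfl <;> rcases hx' with h' | h' | h' | h'
    exacts [hac h', had h', har0 h', has0 h', hbc h', hbd h', hbr0 h', hbs0 h',
      hcp h'.symm, hdp h'.symm, hpr h', hps h', hcq h'.symm, hdq h'.symm, hqr h', hqs h']
  have hS1Q : ({a, b', p, q} : Finset V) ∉ (P.erase {a, b', r, s}).erase {c, d, p, q} := by
    intro h
    exact Finset.disjoint_left.1 (hTdisj _ h).1 (by simp : a ∈ ({a, b', p, q} : Finset V))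
      (by simp)
  have hS2Q : ({c, d, r, s} : Finset V) ∉ (P.erase {a, b', r, s}).erase {c, d, p, q} := by
    intro h
    exact Finset.disjoint_left.1 (hTdisj _ h).2 (by simp : c ∈ ({c, d, r, s} : Finset V))
      (by simp)
  have hS1S2ne : ({a, b', p, q} : Finset V) ≠ {c, d, r, s} := fun h => by
    have : a ∈ ({c, d, r, s} : Finset V) := h ▸ (by simp : a ∈ ({a, b', p, q} : Finset V))
    simp only [Finset.mem_insert, Finset.mem_singleton] at this
    rcases this with h' | h' | h' | h'
    exacts [hac h', had h', har0 h', has0 h']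
  refine ⟨insert {a, b', p, q} (insert {c, d, r, s}
    ((P.erase {a, b', r, s}).erase {c, d, p, q})), ⟨?_, ?_⟩, ?_, by simp, by simp⟩
  · intro S hS
    rcases Finset.mem_insert.1 hS with rfl | hS
    · exact sqS1
    rcases Finset.mem_insert.1 hS with rfl | hS
    · exact sqS2
    exact hP.1 S (hQsub hS)
  · intro T1 hT1 T2 hT2 hne
    simp only [Finset.coe_insert, Set.mem_insert_iff, Finset.mem_coe] at hT1 hT2
    rcases hT1 with rfl | rfl | hT1 <;> rcases hT2 with rfl | rfl | hT2
    · exact absurd rfl hne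
    · exact hS1S2
    · exact ((hTdisj _ hT2).1).symm
    · exact hS1S2.symm
    · exact absurd rfl hne
    · exact ((hTdisj _ hT2).2).symm
    · exact (hTdisj _ hT1).1
    · exact (hTdisj _ hT1).2
    · exact hP.2 (hQsub hT1) (hQsub hT2) hne
  · have h2le : 2 ≤ P.card := Finset.one_lt_card.2 ⟨_, hC1, _, hC2, hC1C2⟩
    have hQcard : ((P.erase {a, b', r, s}).erase {c, d, p, q}).card = P.card - 2 := by
      rw [Finset.card_erase_of_mem, Finset.card_erase_of_mem hC1]
      · omega
      · exact Finset.mem_erase.2 ⟨hC1C2.symm, hC2⟩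
    rw [Finset.card_insert_of_notMem (by
        simp only [Finset.mem_insert]
        rintro (h | h)
        exacts [hS1S2ne h, hS1Q h]),
      Finset.card_insert_of_notMem hS2Q, hQcard]
    omega
end

section
/- Let G be a bipartite permutation graph with bipartition (X, Y), given by a permutation diagram t, b : V → ℝ. Then there exists a C4-packing P of G of maximum cardinality such that for every square S ∈ P, the two vertices of S ∩ X are consecutive in X under the ordering by t (no vertex of X lies strictly between them in t-value), and the two vertices of S ∩ Y are consecutive in Y under the ordering by t. -/
set_option linter.unusedSectionVars false
set_option linter.unusedVariables false
set_option maxHeartbeats 1600000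

open scoped Classical

namespace Stmt10

variable {V : Type*} [Fintype V] [DecidableEq V]
variable {G : SimpleGraph V} {top bot : V → ℝ} {X Y : Set V}

/-- number of elements of `X` strictly between `u` and `v` in `t`-order -/
noncomputable def btwn (X : Set V) (t : V → ℝ) (u v : V) : ℕ :=
  ({w | w ∈ X ∧ t u < t w ∧ t w < t v}).ncard

/-- rank of `v` among `X` in `t`-order -/
noncomputable def rk (X : Set V) (t : V → ℝ) (v : V) : ℕ :=
  ({w | w ∈ X ∧ t w < t v}).ncard

noncomputable def sqCost (X : Set V) (t : V → ℝ) (S : Finset V) : ℕ :=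
  ({w | w ∈ X ∧ ∃ u ∈ S, ∃ v ∈ S, u ∈ X ∧ v ∈ X ∧ t u < t w ∧ t w < t v}).ncard

noncomputable def PhiP (X Y : Set V) (t : V → ℝ) (P : Finset (Finset V)) : ℕ :=
  ∑ S ∈ P, (sqCost X t S + sqCost Y t S)

lemma PhiP_comm (X Y : Set V) (t : V → ℝ) (P : Finset (Finset V)) :
    PhiP X Y t P = PhiP Y X t P :=
  Finset.sum_congr rfl (fun S _ => add_comm _ _)

lemma rk_eq (X : Set V) {t : V → ℝ} (ht : Function.Injective t) {u v : V}
    (hu : u ∈ X) (huv : t u < t v) :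
    rk X t v = rk X t u + 1 + btwn X t u v := by
  unfold rk btwn
  have hset : {w | w ∈ X ∧ t w < t v} =
      {w | w ∈ X ∧ t w < t u} ∪ insert u {w | w ∈ X ∧ t u < t w ∧ t w < t v} := by
    ext w
    simp only [Set.mem_setOf_eq, Set.mem_union, Set.mem_insert_iff]
    constructor
    · rintro ⟨hw, hlt⟩
      rcases lt_trichotomy (t w) (t u) with h | h | h
      · exact Or.inl ⟨hw, h⟩
      · exact Or.inr (Or.inl (ht h))
      · exact Or.inr (Or.inr ⟨hw, h, hlt⟩)
    · rintro (⟨hw, h⟩ | rfl | ⟨hw, h1, h2⟩)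
      · exact ⟨hw, h.trans huv⟩
      · exact ⟨hu, huv⟩
      · exact ⟨hw, h2⟩
  rw [hset, Set.ncard_union_eq ?hd (Set.toFinite _) (Set.toFinite _),
    Set.ncard_insert_of_notMem (by simp) (Set.toFinite _)]
  · ring
  case hd =>
    rw [Set.disjoint_left]
    rintro w ⟨hw, hlt⟩ hmem
    rcases hmem with rfl | ⟨_, h1, _⟩
    · exact lt_irrefl _ hlt
    · exact lt_irrefl _ (hlt.trans h1)

lemma sqCost_eval (X : Set V) (t : V → ℝ) {p q r s : V} (hp : p ∈ X) (hq : q ∈ X)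
    (hr : r ∉ X) (hs : s ∉ X) (hpq : t p < t q) :
    sqCost X t {p, q, r, s} = btwn X t p q := by
  unfold sqCost btwn
  congr 1
  ext w
  simp only [Set.mem_setOf_eq, Finset.mem_insert, Finset.mem_singleton]
  constructor
  · rintro ⟨hw, u, hu, v, hv, hux, hvx, h1, h2⟩
    rcases hu with rfl | rfl | rfl | rfl
    · rcases hv with rfl | rfl | rfl | rfl
      · exact absurd (h1.trans h2) (lt_irrefl _)
      · exact ⟨hw, h1, h2⟩
      · exact absurd hvx hr
      · exact absurd hvx hs
    · rcases hv with rfl | rfl | rfl | rfl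
      · exact absurd (hpq.trans (h1.trans h2)) (lt_irrefl _)
      · exact absurd (h1.trans h2) (lt_irrefl _)
      · exact absurd hvx hr
      · exact absurd hvx hs
    · exact absurd hux hr
    · exact absurd hux hs
  · rintro ⟨hw, h1, h2⟩
    exact ⟨hw, p, Or.inl rfl, q, Or.inr (Or.inl rfl), hp, hq, h1, h2⟩


section Exchange

variable {G : SimpleGraph V}

lemma exchange2 {P : Finset (Finset V)} {S T S' T' : Finset V}
    (hP : IsC4Packing G P) (hS : S ∈ P) (hT : T ∈ P) (hST : S ≠ T)
    (hS' : IsC4Square G S') (hT' : IsC4Square G T')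
    (hsubS : S' ⊆ S ∪ T) (hsubT : T' ⊆ S ∪ T) (hd : Disjoint S' T')
    (hSne : S'.Nonempty) (hTne : T'.Nonempty) :
    ∃ P' : Finset (Finset V), IsC4Packing G P' ∧ P'.card = P.card ∧
      ∀ f : Finset V → ℕ, ∑ A ∈ P', f A + (f S + f T) = ∑ A ∈ P, f A + (f S' + f T') := by
  classical
  set R := (P.erase S).erase T with hR
  have hTS : T ∈ P.erase S := Finset.mem_erase.2 ⟨fun h => hST h.symm, hT⟩
  have hRP : R ⊆ P := (Finset.erase_subset _ _).trans (Finset.erase_subset _ _)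
  have hmemR : ∀ Q ∈ R, Q ∈ P ∧ Q ≠ S ∧ Q ≠ T := by
    intro Q hQ
    rw [hR, Finset.mem_erase, Finset.mem_erase] at hQ
    exact ⟨hQ.2.2, hQ.2.1, hQ.1⟩
  have hQd : ∀ Q ∈ R, Disjoint (S ∪ T) Q := by
    intro Q hQ
    obtain ⟨hQP, hQS, hQT⟩ := hmemR Q hQ
    rw [Finset.disjoint_union_left]
    exact ⟨hP.2 hS hQP (Ne.symm hQS), hP.2 hT hQP (Ne.symm hQT)⟩
  have hS'T' : S' ≠ T' := by
    rintro rfl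
    exact hSne.ne_empty (by simpa using disjoint_self.mp hd)
  have hS'R : S' ∉ R := by
    intro h
    obtain ⟨w, hw⟩ := hSne
    exact Finset.disjoint_right.mp (hQd S' h) hw (hsubS hw)
  have hT'R : T' ∉ R := by
    intro h
    obtain ⟨w, hw⟩ := hTne
    exact Finset.disjoint_right.mp (hQd T' h) hw (hsubT hw)
  have hS'mem : S' ∉ insert T' R := by
    simp only [Finset.mem_insert]
    rintro (h | h)
    · exact hS'T' h
    · exact hS'R h
  refine ⟨insert S' (insert T' R), ⟨?_, ?_⟩, ?_, ?_⟩
  · intro Q hQ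
    simp only [Finset.mem_insert] at hQ
    rcases hQ with rfl | rfl | hQ
    · exact hS'
    · exact hT'
    · exact hP.1 Q (hRP hQ)
  · rw [Finset.coe_insert, Finset.coe_insert]
    haveI : Std.Symm (fun S T : Finset V => Disjoint S T) := ⟨fun a b h => h.symm⟩
    rw [Set.pairwise_insert_of_symm]
    constructor
    · rw [Set.pairwise_insert_of_symm]
      refine ⟨hP.2.mono (by exact_mod_cast hRP), ?_⟩
      intro B hB _
      exact (Finset.disjoint_of_subset_left hsubT (hQd B hB)).symm.symm
    · intro B hB _
      rcases hB with rfl | hB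
      · exact hd
      · exact Finset.disjoint_of_subset_left hsubS (hQd B hB)
  · rw [Finset.card_insert_of_notMem hS'mem, Finset.card_insert_of_notMem hT'R]
    have h1 : R.card = (P.erase S).card - 1 := Finset.card_erase_of_mem hTS
    have h2 : (P.erase S).card = P.card - 1 := Finset.card_erase_of_mem hS
    have h3 : 1 < P.card := Finset.one_lt_card.2 ⟨S, hS, T, hT, hST⟩
    omega
  · intro f
    rw [Finset.sum_insert hS'mem, Finset.sum_insert hT'R]
    have e1 : ∑ A ∈ P, f A = f S + ∑ A ∈ P.erase S, f A := (Finset.add_sum_erase _ f hS).symm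
    have e2 : ∑ A ∈ P.erase S, f A = f T + ∑ A ∈ R, f A := (Finset.add_sum_erase _ f hTS).symm
    rw [e1, e2]
    ring

lemma exchange1 {P : Finset (Finset V)} {S S' : Finset V} {x : V}
    (hP : IsC4Packing G P) (hS : S ∈ P) (hS' : IsC4Square G S')
    (hxfree : ∀ Q ∈ P, x ∉ Q) (hsub : S' ⊆ insert x S)
    (hmarker : ∃ w ∈ S', w ∈ S) :
    ∃ P' : Finset (Finset V), IsC4Packing G P' ∧ P'.card = P.card ∧
      ∀ f : Finset V → ℕ, ∑ A ∈ P', f A + f S = ∑ A ∈ P, f A + f S' := by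
  classical
  set R := P.erase S with hR
  have hmemR : ∀ Q ∈ R, Q ∈ P ∧ Q ≠ S := by
    intro Q hQ
    rw [hR, Finset.mem_erase] at hQ
    exact ⟨hQ.2, hQ.1⟩
  have hQd : ∀ Q ∈ R, Disjoint (insert x S) Q := by
    intro Q hQ
    obtain ⟨hQP, hQS⟩ := hmemR Q hQ
    rw [Finset.insert_eq, Finset.disjoint_union_left]
    refine ⟨?_, hP.2 hS hQP (Ne.symm hQS)⟩
    simp only [Finset.disjoint_singleton_left]
    exact hxfree Q hQP
  have hS'R : S' ∉ R := by
    intro h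
    obtain ⟨w, hwS', hwS⟩ := hmarker
    exact Finset.disjoint_right.mp (hQd S' h) hwS' (hsub hwS')
  refine ⟨insert S' R, ⟨?_, ?_⟩, ?_, ?_⟩
  · intro Q hQ
    simp only [Finset.mem_insert] at hQ
    rcases hQ with rfl | hQ
    · exact hS'
    · exact hP.1 Q (hmemR Q hQ).1
  · rw [Finset.coe_insert]
    haveI : Std.Symm (fun S T : Finset V => Disjoint S T) := ⟨fun a b h => h.symm⟩
    rw [Set.pairwise_insert_of_symm]
    refine ⟨hP.2.mono (by exact_mod_cast Finset.erase_subset _ _), ?_⟩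
    intro B hB _
    exact Finset.disjoint_of_subset_left hsub (hQd B hB)
  · rw [Finset.card_insert_of_notMem hS'R]
    have h2 : R.card = P.card - 1 := by rw [hR]; exact Finset.card_erase_of_mem hS
    have h3 : 0 < P.card := Finset.card_pos.2 ⟨S, hS⟩
    omega
  · intro f
    rw [Finset.sum_insert hS'R]
    have e1 : ∑ A ∈ P, f A = f S + ∑ A ∈ P.erase S, f A := (Finset.add_sum_erase _ f hS).symm
    rw [e1]
    ring

end Exchange

section Graph

variable (htop : Function.Injective top) (hbot : Function.Injective bot)
  (hadj : ∀ u v, G.Adj u v ↔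
      (top u < top v ∧ bot v < bot u) ∨ (top v < top u ∧ bot u < bot v))
  (hdisj : Disjoint X Y)
  (hX : ∀ u ∈ X, ∀ v ∈ X, ¬G.Adj u v) (hY : ∀ u ∈ Y, ∀ v ∈ Y, ¬G.Adj u v)

include htop hbot hadj hdisj hX hY

/-- within X, bot order agrees with top order -/
lemma bot_mono {u v : V} (hu : u ∈ X) (hv : v ∈ X) (huv : top u < top v) :
    bot u < bot v := by
  have hne : u ≠ v := fun h => lt_irrefl _ (h ▸ huv)
  have hnadj := hX u hu v hv
  rw [hadj] at hnadj
  push_neg at hnadj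
  exact lt_of_le_of_ne (hnadj.1 huv) (fun h => hne (hbot h))

/-- within Y, consistency: smaller bot implies smaller top -/
lemma top_mono_Y {u v : V} (hu : u ∈ Y) (hv : v ∈ Y) (huv : bot u < bot v) :
    top u < top v := by
  have hne : u ≠ v := fun h => lt_irrefl _ (h ▸ huv)
  have hnadj := hY u hu v hv
  rw [hadj] at hnadj
  push_neg at hnadj
  rcases lt_trichotomy (top u) (top v) with h | h | h
  · exact h
  · exact absurd (htop h) hne
  · exact absurd huv (not_lt.2 (hnadj.2 h))

/-- interval lemma -/
lemma interval {x1 x x2 y : V} (hx1 : x1 ∈ X) (hx : x ∈ X) (hx2 : x2 ∈ X) (hy : y ∈ Y)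
    (h1 : top x1 < top x) (h2 : top x < top x2)
    (ha1 : G.Adj x1 y) (ha2 : G.Adj x2 y) : G.Adj x y := by
  have hb1 : bot x1 < bot x := bot_mono htop hbot hadj hdisj hX hY hx1 hx h1
  have hb2 : bot x < bot x2 := bot_mono htop hbot hadj hdisj hX hY hx hx2 h2
  rw [hadj] at ha1 ha2 ⊢
  rcases ha1 with ⟨c1, c2⟩ | ⟨c1, c2⟩
  · rcases ha2 with ⟨d1, d2⟩ | ⟨d1, d2⟩
    · exact Or.inl ⟨by linarith, by linarith⟩
    · exact absurd (by linarith : bot x2 < bot x2) (lt_irrefl _)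
  · rcases ha2 with ⟨d1, d2⟩ | ⟨d1, d2⟩
    · exact absurd (by linarith : top x2 < top x2) (lt_irrefl _)
    · exact Or.inr ⟨by linarith, by linarith⟩

/-- y adjacent to x1 < x2 (both in X) is "L-type" or "R-type" -/
lemma LR_type {x1 x2 y : V} (hx1 : x1 ∈ X) (hx2 : x2 ∈ X) (h12 : top x1 < top x2)
    (ha1 : G.Adj x1 y) (ha2 : G.Adj x2 y) :
    (top y < top x1 ∧ bot x2 < bot y) ∨ (top x2 < top y ∧ bot y < bot x1) := by
  have hb : bot x1 < bot x2 := bot_mono htop hbot hadj hdisj hX hY hx1 hx2 h12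
  rw [hadj] at ha1 ha2
  rcases ha1 with ⟨c1, c2⟩ | ⟨c1, c2⟩
  · rcases ha2 with ⟨d1, d2⟩ | ⟨d1, d2⟩
    · exact Or.inr ⟨d1, c2⟩
    · exact absurd (by linarith : bot x2 < bot x2) (lt_irrefl _)
  · rcases ha2 with ⟨d1, d2⟩ | ⟨d1, d2⟩
    · exact absurd (by linarith : top x2 < top x2) (lt_irrefl _)
    · exact Or.inl ⟨c1, d2⟩

/-- In the nested situation, u adjacent to b with x1<b<x2 is adjacent to x1 or x2. -/
lemma adj_one_end {x1 b x2 u y : V}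
    (hx1 : x1 ∈ X) (hb : b ∈ X) (hx2 : x2 ∈ X) (hu : u ∈ Y) (hy : y ∈ Y)
    (h1 : top x1 < top b) (h3 : top b < top x2)
    (hub : G.Adj b u) (hy1 : G.Adj x1 y) (hy2 : G.Adj x2 y) :
    G.Adj x1 u ∨ G.Adj x2 u := by
  by_contra hcon
  push_neg at hcon
  obtain ⟨hn1, hn2⟩ := hcon
  have hbx1b : bot x1 < bot b := bot_mono htop hbot hadj hdisj hX hY hx1 hb h1
  have hbbx2 : bot b < bot x2 := bot_mono htop hbot hadj hdisj hX hY hb hx2 h3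
  have h13 : top x1 < top x2 := by linarith
  have hty := LR_type htop hbot hadj hdisj hX hY hx1 hx2 h13 hy1 hy2
  have hyu := hY y hy u hu
  have huy := hY u hu y hy
  have hnex1 : u ≠ x1 := fun h => (Set.disjoint_left.mp hdisj hx1) (h ▸ hu)
  have hnex2 : u ≠ x2 := fun h => (Set.disjoint_left.mp hdisj hx2) (h ▸ hu)
  rw [hadj] at hn1 hn2 hub hyu huy
  push_neg at hn1 hn2 hyu huy
  rcases hub with ⟨c1, c2⟩ | ⟨c1, c2⟩
  · -- top b < top u, bot u < bot b
    have htu : top u < top x2 := by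
      rcases lt_trichotomy (top u) (top x2) with h | h | h
      · exact h
      · exact absurd (htop h) hnex2
      · exact absurd (hn2.1 h) (not_le.2 (by linarith))
    have hbu : bot x1 ≤ bot u := hn1.1 (by linarith)
    rcases hty with ⟨d1, d2⟩ | ⟨d1, d2⟩
    · -- y L-type
      exact hyu.1 (by linarith) |>.not_gt (by linarith) |>.elim
    · -- y R-type
      exact huy.1 (by linarith) |>.not_gt (by linarith) |>.elim
  · -- top u < top b, bot b < bot u
    have htu : top x1 < top u := by
      rcases lt_trichotomy (top x1) (top u) with h | h | h
      · exact h
      · exact absurd (htop h) hnex1.symm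
      · exact absurd (hn1.2 h) (not_le.2 (by linarith))
    have hbu : bot u ≤ bot x2 := hn2.2 (by linarith)
    rcases hty with ⟨d1, d2⟩ | ⟨d1, d2⟩
    · -- y L-type
      exact hyu.1 (by linarith) |>.not_gt (by linarith) |>.elim
    · -- y R-type
      exact huy.1 (by linarith) |>.not_gt (by linarith) |>.elim

/-- order lemma, first half: uA (adjacent to x1, not x2) comes before y (adjacent to both) -/
lemma order_half {x1 x2 uA y : V}
    (hx1 : x1 ∈ X) (hx2 : x2 ∈ X) (hu : uA ∈ Y) (hy : y ∈ Y)
    (h12 : top x1 < top x2)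
    (huA : G.Adj x1 uA) (hnA : ¬G.Adj x2 uA)
    (hy1 : G.Adj x1 y) (hy2 : G.Adj x2 y) : top uA < top y := by
  have hb12 : bot x1 < bot x2 := bot_mono htop hbot hadj hdisj hX hY hx1 hx2 h12
  have hty := LR_type htop hbot hadj hdisj hX hY hx1 hx2 h12 hy1 hy2
  have hyu := hY y hy uA hu
  have hnex2 : uA ≠ x2 := fun h => (Set.disjoint_left.mp hdisj hx2) (h ▸ hu)
  have hneyu : uA ≠ y := by
    rintro rfl; exact hnA hy2
  rw [hadj] at huA hnA hyu
  push_neg at hnA hyu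
  rcases huA with ⟨c1, c2⟩ | ⟨c1, c2⟩
  · -- top x1 < top uA, bot uA < bot x1   (shape 2)
    have htu : top uA < top x2 := by
      rcases lt_trichotomy (top uA) (top x2) with h | h | h
      · exact h
      · exact absurd (htop h) hnex2
      · exact absurd (hnA.1 h) (not_le.2 (by linarith))
    rcases hty with ⟨d1, d2⟩ | ⟨d1, d2⟩
    · -- y L-type : contradiction
      exact absurd (hyu.1 (by linarith)) (not_le.2 (by linarith))
    · exact by linarith
  · -- top uA < top x1, bot x1 < bot uA   (shape 1)
    have hbu : bot uA ≤ bot x2 := hnA.2 (by linarith)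
    rcases hty with ⟨d1, d2⟩ | ⟨d1, d2⟩
    · -- y L-type
      rcases lt_trichotomy (top uA) (top y) with h | h | h
      · exact h
      · exact absurd (htop h) hneyu
      · exact absurd (hyu.1 h) (not_le.2 (by linarith))
    · exact by linarith

/-- order lemma, second half, by reflection -/
lemma order_half' {x1 x2 uB y : V}
    (hx1 : x1 ∈ X) (hx2 : x2 ∈ X) (hu : uB ∈ Y) (hy : y ∈ Y)
    (h12 : top x1 < top x2)
    (huB : G.Adj x2 uB) (hnB : ¬G.Adj x1 uB)
    (hy1 : G.Adj x1 y) (hy2 : G.Adj x2 y) : top y < top uB := by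
  have htop' : Function.Injective (fun v => -top v) := fun a b h => htop (by
    simpa using neg_injective (by simpa using h))
  have hbot' : Function.Injective (fun v => -bot v) := fun a b h => hbot (by
    simpa using neg_injective (by simpa using h))
  have hadj' : ∀ u v, G.Adj u v ↔
      ((fun v => -top v) u < (fun v => -top v) v ∧ (fun v => -bot v) v < (fun v => -bot v) u) ∨
      ((fun v => -top v) v < (fun v => -top v) u ∧ (fun v => -bot v) u < (fun v => -bot v) v) := by
    intro u v
    rw [hadj]
    simp only [neg_lt_neg_iff]
    tauto
  have := order_half htop' hbot' hadj' hdisj hX hY hx2 hx1 hu hy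
    (by simpa using h12) huB hnB hy2 hy1
  simpa using this


omit htop hbot hadj hdisj hX hY in
lemma card_three (a b c : V) : ({a, b, c} : Finset V).card ≤ 3 := by
  apply (Finset.card_insert_le _ _).trans
  have h := Finset.card_insert_le b ({c} : Finset V)
  simp at h ⊢
  omega

variable (hunion : X ∪ Y = Set.univ)

include hunion

omit htop hbot hadj hdisj hX hY in
lemma memXY (v : V) : v ∈ X ∨ v ∈ Y := by
  have : v ∈ X ∪ Y := by rw [hunion]; exact Set.mem_univ v
  exact this

omit hunion

lemma struct_core {S : Finset V} {v1 v2 v3 v4 : V}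
    (h1 : v1 ∈ X) (h2 : v2 ∈ Y) (h3 : v3 ∈ X) (h4 : v4 ∈ Y)
    (h13 : v1 ≠ v3) (h24 : v2 ≠ v4)
    (hSeq : S = {v1, v2, v3, v4})
    (a12 : G.Adj v1 v2) (a23 : G.Adj v2 v3) (a34 : G.Adj v3 v4) (a41 : G.Adj v4 v1) :
    ∃ x1 x2 y1 y2, x1 ∈ X ∧ x2 ∈ X ∧ y1 ∈ Y ∧ y2 ∈ Y ∧
      top x1 < top x2 ∧ top y1 < top y2 ∧ S = {x1, x2, y1, y2} ∧
      G.Adj x1 y1 ∧ G.Adj x1 y2 ∧ G.Adj x2 y1 ∧ G.Adj x2 y2 := by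
  have b12 : G.Adj v1 v4 := a41.symm
  have b32 : G.Adj v3 v2 := a23.symm
  have hx : top v1 < top v3 ∨ top v3 < top v1 := by
    rcases lt_trichotomy (top v1) (top v3) with h | h | h
    · exact Or.inl h
    · exact absurd (htop h) h13
    · exact Or.inr h
  have hy : top v2 < top v4 ∨ top v4 < top v2 := by
    rcases lt_trichotomy (top v2) (top v4) with h | h | h
    · exact Or.inl h
    · exact absurd (htop h) h24
    · exact Or.inr h
  rcases hx with hx | hx <;> rcases hy with hy | hy
  · exact ⟨v1, v3, v2, v4, h1, h3, h2, h4, hx, hy, by rw [hSeq]; ext w; simp; tauto,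
      a12, b12, b32, a34⟩
  · exact ⟨v1, v3, v4, v2, h1, h3, h4, h2, hx, hy, by rw [hSeq]; ext w; simp; tauto,
      b12, a12, a34, b32⟩
  · exact ⟨v3, v1, v2, v4, h3, h1, h2, h4, hx, hy, by rw [hSeq]; ext w; simp; tauto,
      b32, a34, a12, b12⟩
  · exact ⟨v3, v1, v4, v2, h3, h1, h4, h2, hx, hy, by rw [hSeq]; ext w; simp; tauto,
      a34, b32, b12, a12⟩

include hunion

lemma square_struct {S : Finset V} (hS : IsC4Square G S) :
    ∃ x1 x2 y1 y2, x1 ∈ X ∧ x2 ∈ X ∧ y1 ∈ Y ∧ y2 ∈ Y ∧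
      top x1 < top x2 ∧ top y1 < top y2 ∧ S = {x1, x2, y1, y2} ∧
      G.Adj x1 y1 ∧ G.Adj x1 y2 ∧ G.Adj x2 y1 ∧ G.Adj x2 y2 := by
  obtain ⟨v1, v2, v3, v4, hSeq, hcard, a12, a23, a34, a41, n13, n24⟩ := hS
  have h13 : v1 ≠ v3 := by
    rintro rfl
    rw [hSeq] at hcard
    have he : ({v1, v2, v1, v4} : Finset V) = {v1, v2, v4} := by ext w; simp; tauto
    rw [he] at hcard
    have := card_three (V := V) v1 v2 v4
    omega
  have h24 : v2 ≠ v4 := by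
    rintro rfl
    rw [hSeq] at hcard
    have he : ({v1, v2, v3, v2} : Finset V) = {v1, v2, v3} := by ext w; simp; tauto
    rw [he] at hcard
    have := card_three (V := V) v1 v2 v3
    omega
  rcases memXY (X := X) (Y := Y) hunion v1 with h1 | h1
  · have h2 : v2 ∈ Y := by
      rcases memXY (X := X) (Y := Y) hunion v2 with h | h
      · exact absurd a12 (hX v1 h1 v2 h)
      · exact h
    have h3 : v3 ∈ X := by
      rcases memXY (X := X) (Y := Y) hunion v3 with h | h
      · exact h
      · exact absurd a23 (hY v2 h2 v3 h)
    have h4 : v4 ∈ Y := by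
      rcases memXY (X := X) (Y := Y) hunion v4 with h | h
      · exact absurd a34 (hX v3 h3 v4 h)
      · exact h
    exact struct_core htop hbot hadj hdisj hX hY h1 h2 h3 h4 h13 h24 hSeq a12 a23 a34 a41
  · have h2 : v2 ∈ X := by
      rcases memXY (X := X) (Y := Y) hunion v2 with h | h
      · exact h
      · exact absurd a12 (hY v1 h1 v2 h)
    have h3 : v3 ∈ Y := by
      rcases memXY (X := X) (Y := Y) hunion v3 with h | h
      · exact absurd a23 (hX v2 h2 v3 h)
      · exact h
    have h4 : v4 ∈ X := by
      rcases memXY (X := X) (Y := Y) hunion v4 with h | h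
      · exact h
      · exact absurd a34 (hY v3 h3 v4 h)
    have hSeq' : S = {v2, v3, v4, v1} := by rw [hSeq]; ext w; simp; tauto
    exact struct_core htop hbot hadj hdisj hX hY h2 h3 h4 h1 h24 h13.symm hSeq' a23 a34 a41 a12

omit hunion

lemma isC4_of_nice {x1 x2 y1 y2 : V}
    (hx1 : x1 ∈ X) (hx2 : x2 ∈ X) (hy1 : y1 ∈ Y) (hy2 : y2 ∈ Y)
    (hne : x1 ≠ x2) (hneY : y1 ≠ y2)
    (a11 : G.Adj x1 y1) (a12 : G.Adj x1 y2) (a21 : G.Adj x2 y1) (a22 : G.Adj x2 y2) :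
    IsC4Square G {x1, x2, y1, y2} := by
  have d11 : x1 ≠ y1 := fun h => (Set.disjoint_left.mp hdisj hx1) (h ▸ hy1)
  have d12 : x1 ≠ y2 := fun h => (Set.disjoint_left.mp hdisj hx1) (h ▸ hy2)
  have d21 : x2 ≠ y1 := fun h => (Set.disjoint_left.mp hdisj hx2) (h ▸ hy1)
  have d22 : x2 ≠ y2 := fun h => (Set.disjoint_left.mp hdisj hx2) (h ▸ hy2)
  refine ⟨x1, y1, x2, y2, by ext w; simp; tauto, ?_, a11, a21.symm, a22, a12.symm,
    hX x1 hx1 x2 hx2, hY y1 hy1 y2 hy2⟩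
  rw [Finset.card_insert_of_notMem (by simp [hne, d11, d12]),
    Finset.card_insert_of_notMem (by simp [d21, d22]),
    Finset.card_insert_of_notMem (by simp [hneY])]
  simp

omit htop hbot hadj hX hY hunion

lemma disj4 {p1 p2 q1 q2 r1 r2 s1 s2 : V}
    (hp1 : p1 ∈ X) (hp2 : p2 ∈ X) (hq1 : q1 ∈ Y) (hq2 : q2 ∈ Y)
    (hr1 : r1 ∈ X) (hr2 : r2 ∈ X) (hs1 : s1 ∈ Y) (hs2 : s2 ∈ Y)
    (h11 : p1 ≠ r1) (h12 : p1 ≠ r2) (h21 : p2 ≠ r1) (h22 : p2 ≠ r2)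
    (g11 : q1 ≠ s1) (g12 : q1 ≠ s2) (g21 : q2 ≠ s1) (g22 : q2 ≠ s2) :
    Disjoint ({p1, p2, q1, q2} : Finset V) {r1, r2, s1, s2} := by
  rw [Finset.disjoint_left]
  intro w hw hw'
  simp only [Finset.mem_insert, Finset.mem_singleton] at hw hw'
  rcases hw with rfl | rfl | rfl | rfl <;> rcases hw' with rfl | rfl | rfl | rfl <;>
    first
      | exact h11 rfl | exact h12 rfl | exact h21 rfl | exact h22 rfl
      | exact g11 rfl | exact g12 rfl | exact g21 rfl | exact g22 rfl
      | exact Set.disjoint_left.mp hdisj hp1 hs1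
      | exact Set.disjoint_left.mp hdisj hp1 hs2
      | exact Set.disjoint_left.mp hdisj hp2 hs1
      | exact Set.disjoint_left.mp hdisj hp2 hs2
      | exact Set.disjoint_left.mp hdisj hr1 hq1
      | exact Set.disjoint_left.mp hdisj hr1 hq2
      | exact Set.disjoint_left.mp hdisj hr2 hq1
      | exact Set.disjoint_left.mp hdisj hr2 hq2

include htop hbot hadj hX hY hunion

set_option maxHeartbeats 0 in
lemma key_main {P : Finset (Finset V)} {S : Finset V} {x1 x2 y1 y2 x : V}
    (hP : IsC4Packing G P)
    (hmin : ∀ Q : Finset (Finset V), IsC4Packing G Q → Q.card = P.card →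
      PhiP X Y top P ≤ PhiP X Y top Q)
    (hSP : S ∈ P)
    (hx1 : x1 ∈ X) (hx2 : x2 ∈ X) (hy1 : y1 ∈ Y) (hy2 : y2 ∈ Y)
    (h12 : top x1 < top x2) (hy12 : top y1 < top y2)
    (hSeq : S = {x1, x2, y1, y2})
    (a11 : G.Adj x1 y1) (a12 : G.Adj x1 y2) (a21 : G.Adj x2 y1) (a22 : G.Adj x2 y2)
    (hxX : x ∈ X) (hb1 : top x1 < top x) (hb2 : top x < top x2) : False := by
  have hXnY : ∀ p, p ∈ X → p ∉ Y := fun p hp => Set.disjoint_left.mp hdisj hp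
  have hYnX : ∀ q, q ∈ Y → q ∉ X := fun q hq => Set.disjoint_right.mp hdisj hq
  have tne : ∀ {p q : V}, top p < top q → p ≠ q :=
    fun {p q} h heq => absurd (heq ▸ h) (lt_irrefl _)
  have hadjx1 : G.Adj x y1 :=
    interval htop hbot hadj hdisj hX hY hx1 hxX hx2 hy1 hb1 hb2 a11 a21
  have hadjx2 : G.Adj x y2 :=
    interval htop hbot hadj hdisj hX hY hx1 hxX hx2 hy2 hb1 hb2 a12 a22
  have hy1S : y1 ∈ S := by rw [hSeq]; simp
  have hy2S : y2 ∈ S := by rw [hSeq]; simp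
  have hy1X : y1 ∉ X := hYnX _ hy1
  have hy2X : y2 ∉ X := hYnX _ hy2
  have hx1Y : x1 ∉ Y := hXnY _ hx1
  have hx2Y : x2 ∉ Y := hXnY _ hx2
  have hxS : x ∉ S := by
    rw [hSeq]
    simp only [Finset.mem_insert, Finset.mem_singleton]
    push_neg
    refine ⟨fun h => absurd (h ▸ hb1) (lt_irrefl _), fun h => absurd (h ▸ hb2) (lt_irrefl _),
      fun h => hXnY x hxX (h ▸ hy1), fun h => hXnY x hxX (h ▸ hy2)⟩
  have hSeqY : S = {y1, y2, x1, x2} := by rw [hSeq]; ext w; simp; tauto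
  have cS1 : sqCost X top S = btwn X top x1 x2 := by
    rw [hSeq]; exact sqCost_eval X top hx1 hx2 hy1X hy2X h12
  have cS2 : sqCost Y top S = btwn Y top y1 y2 := by
    rw [hSeqY]; exact sqCost_eval Y top hy1 hy2 hx1Y hx2Y hy12
  by_cases hfree : ∀ Q ∈ P, x ∉ Q
  · -- x is not used by the packing : shrink S
    have hS'sq : IsC4Square G {x1, x, y1, y2} :=
      isC4_of_nice htop hbot hadj hdisj hX hY hx1 hxX hy1 hy2
        (fun h => absurd (h ▸ hb1) (lt_irrefl _)) (tne hy12) a11 a12 hadjx1 hadjx2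
    obtain ⟨P', hP', hcard, hsum⟩ := exchange1 hP hSP hS'sq hfree
      (by rw [hSeq]; intro w hw;
          simp only [Finset.mem_insert, Finset.mem_singleton] at hw ⊢; tauto)
      ⟨x1, by simp, by rw [hSeq]; simp⟩
    have hm := hmin P' hP' hcard
    have hs := hsum (fun A => sqCost X top A + sqCost Y top A)
    have cS'1 : sqCost X top {x1, x, y1, y2} = btwn X top x1 x :=
      sqCost_eval X top hx1 hxX hy1X hy2X hb1
    have cS'2 : sqCost Y top {x1, x, y1, y2} = btwn Y top y1 y2 := by
      rw [show ({x1, x, y1, y2} : Finset V) = {y1, y2, x1, x} by ext w; simp; tauto]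
      exact sqCost_eval Y top hy1 hy2 hx1Y (hXnY _ hxX) hy12
    have e1 : rk X top x = rk X top x1 + 1 + btwn X top x1 x := rk_eq X htop hx1 hb1
    have e2 : rk X top x2 = rk X top x1 + 1 + btwn X top x1 x2 := rk_eq X htop hx1 h12
    have e3 : rk X top x2 = rk X top x + 1 + btwn X top x x2 := rk_eq X htop hxX hb2
    unfold PhiP at hm
    simp only [cS1, cS2, cS'1, cS'2] at hs
    omega
  · -- x is in another square T of the packing
    push_neg at hfree
    obtain ⟨T, hTP, hxT⟩ := hfree
    have hST : S ≠ T := fun h => hxS (by rw [h]; exact hxT)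
    have hdST : Disjoint S T :=
      hP.2 (Finset.mem_coe.mpr hSP) (Finset.mem_coe.mpr hTP) hST
    obtain ⟨a, b, u1, u2, ha, hb, hu1, hu2, hab, hu12, hTeq, c11, c12, c21, c22⟩ :=
      square_struct htop hbot hadj hdisj hX hY hunion (hP.1 T hTP)
    have haS : a ∉ S := Finset.disjoint_right.mp hdST (by rw [hTeq]; simp)
    have hbS : b ∉ S := Finset.disjoint_right.mp hdST (by rw [hTeq]; simp)
    have hu1S : u1 ∉ S := Finset.disjoint_right.mp hdST (by rw [hTeq]; simp)
    have hu2S : u2 ∉ S := Finset.disjoint_right.mp hdST (by rw [hTeq]; simp)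
    have hu1X : u1 ∉ X := hYnX _ hu1
    have hu2X : u2 ∉ X := hYnX _ hu2
    have haY : a ∉ Y := hXnY _ ha
    have hbY : b ∉ Y := hXnY _ hb
    have hu1y1 : u1 ≠ y1 := fun h => hu1S (by rw [h, hSeq]; simp)
    have hu1y2 : u1 ≠ y2 := fun h => hu1S (by rw [h, hSeq]; simp)
    have hu2y1 : u2 ≠ y1 := fun h => hu2S (by rw [h, hSeq]; simp)
    have hu2y2 : u2 ≠ y2 := fun h => hu2S (by rw [h, hSeq]; simp)
    have hy1u1 : y1 ≠ u1 := fun h => hu1y1 h.symm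
    have hy1u2 : y1 ≠ u2 := fun h => hu2y1 h.symm
    have hy2u1 : y2 ≠ u1 := fun h => hu1y2 h.symm
    have hy2u2 : y2 ≠ u2 := fun h => hu2y2 h.symm
    have hTeqY : T = {u1, u2, a, b} := by rw [hTeq]; ext w; simp; tauto
    have cT1 : sqCost X top T = btwn X top a b := by
      rw [hTeq]; exact sqCost_eval X top ha hb hu1X hu2X hab
    have cT2 : sqCost Y top T = btwn Y top u1 u2 := by
      rw [hTeqY]; exact sqCost_eval Y top hu1 hu2 haY hbY hu12
    have hxab : x = a ∨ x = b := by
      have hx' : x ∈ T := hxT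
      rw [hTeq] at hx'
      simp only [Finset.mem_insert, Finset.mem_singleton] at hx'
      rcases hx' with rfl | rfl | rfl | rfl
      · exact Or.inl rfl
      · exact Or.inr rfl
      · exact absurd hxX hu1X
      · exact absurd hxX hu2X
    rcases lt_trichotomy (top a) (top x1) with hA | hA | hA
    · -- crossing-left : a < x1 < b < x2, with x = b
      rcases hxab with heq | heq
      · rw [heq] at hb1; exact absurd (hb1.trans hA) (lt_irrefl _)
      rw [heq] at hb1 hb2 hadjx1 hadjx2
      -- now hb1 : top x1 < top b, hb2 : top b < top x2
      have ax1u1 : G.Adj x1 u1 :=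
        interval htop hbot hadj hdisj hX hY ha hx1 hb hu1 hA hb1 c11 c21
      have ax1u2 : G.Adj x1 u2 :=
        interval htop hbot hadj hdisj hX hY ha hx1 hb hu2 hA hb1 c12 c22
      have hS'sq : IsC4Square G {a, x1, u1, u2} :=
        isC4_of_nice htop hbot hadj hdisj hX hY ha hx1 hu1 hu2 (tne hA) (tne hu12)
          c11 c12 ax1u1 ax1u2
      have hT'sq : IsC4Square G {b, x2, y1, y2} :=
        isC4_of_nice htop hbot hadj hdisj hX hY hb hx2 hy1 hy2 (tne hb2) (tne hy12)
          hadjx1 hadjx2 a21 a22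
      have hdS'T' : Disjoint ({a, x1, u1, u2} : Finset V) {b, x2, y1, y2} :=
        disj4 hdisj ha hx1 hu1 hu2 hb hx2 hy1 hy2
          (tne (hA.trans hb1)) (tne (hA.trans h12)) (tne hb1) (tne h12)
          hu1y1 hu1y2 hu2y1 hu2y2
      obtain ⟨P', hP', hcard, hsum⟩ := exchange2 hP hSP hTP hST hS'sq hT'sq
        (by rw [hSeq, hTeq]; intro w hw;
            simp only [Finset.mem_insert, Finset.mem_singleton, Finset.mem_union] at hw ⊢; tauto)
        (by rw [hSeq, hTeq]; intro w hw;
            simp only [Finset.mem_insert, Finset.mem_singleton, Finset.mem_union] at hw ⊢; tauto)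
        hdS'T' (Finset.insert_nonempty _ _) (Finset.insert_nonempty _ _)
      have hm := hmin P' hP' hcard
      have hs := hsum (fun A => sqCost X top A + sqCost Y top A)
      have cS'1 : sqCost X top {a, x1, u1, u2} = btwn X top a x1 :=
        sqCost_eval X top ha hx1 hu1X hu2X hA
      have cS'2 : sqCost Y top {a, x1, u1, u2} = btwn Y top u1 u2 := by
        rw [show ({a, x1, u1, u2} : Finset V) = {u1, u2, a, x1} by ext w; simp; tauto]
        exact sqCost_eval Y top hu1 hu2 haY hx1Y hu12
      have cT'1 : sqCost X top {b, x2, y1, y2} = btwn X top b x2 :=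
        sqCost_eval X top hb hx2 hy1X hy2X hb2
      have cT'2 : sqCost Y top {b, x2, y1, y2} = btwn Y top y1 y2 := by
        rw [show ({b, x2, y1, y2} : Finset V) = {y1, y2, b, x2} by ext w; simp; tauto]
        exact sqCost_eval Y top hy1 hy2 hbY hx2Y hy12
      have e1 : rk X top x1 = rk X top a + 1 + btwn X top a x1 := rk_eq X htop ha hA
      have e2 : rk X top x2 = rk X top b + 1 + btwn X top b x2 := rk_eq X htop hb hb2
      have e3 : rk X top x2 = rk X top x1 + 1 + btwn X top x1 x2 := rk_eq X htop hx1 h12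
      have e4 : rk X top b = rk X top a + 1 + btwn X top a b := rk_eq X htop ha hab
      have e5 : rk X top b = rk X top x1 + 1 + btwn X top x1 b := rk_eq X htop hx1 hb1
      unfold PhiP at hm
      simp only [cS1, cS2, cT1, cT2, cS'1, cS'2, cT'1, cT'2] at hs
      omega
    · exact haS (by rw [htop hA, hSeq]; simp)
    · rcases lt_trichotomy (top a) (top x2) with hB | hB | hB
      · rcases lt_trichotomy (top b) (top x2) with hC | hC | hC
        · -- nested : x1 < a < b < x2
          have aay1 : G.Adj a y1 :=
            interval htop hbot hadj hdisj hX hY hx1 ha hx2 hy1 hA hB a11 a21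
          have aay2 : G.Adj a y2 :=
            interval htop hbot hadj hdisj hX hY hx1 ha hx2 hy2 hA hB a12 a22
          have aby1 : G.Adj b y1 :=
            interval htop hbot hadj hdisj hX hY hx1 hb hx2 hy1 (hA.trans hab) hC a11 a21
          have aby2 : G.Adj b y2 :=
            interval htop hbot hadj hdisj hX hY hx1 hb hx2 hy2 (hA.trans hab) hC a12 a22
          have d1 : G.Adj x1 u1 ∨ G.Adj x2 u1 :=
            adj_one_end htop hbot hadj hdisj hX hY hx1 hb hx2 hu1 hy1
              (hA.trans hab) hC c21 a11 a21
          have d2 : G.Adj x1 u2 ∨ G.Adj x2 u2 :=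
            adj_one_end htop hbot hadj hdisj hX hY hx1 hb hx2 hu2 hy1
              (hA.trans hab) hC c22 a11 a21
          have hcase : (G.Adj x1 u1 ∧ G.Adj x1 u2) ∨ (G.Adj x2 u1 ∧ G.Adj x2 u2) ∨
              (G.Adj x1 u1 ∧ ¬G.Adj x2 u1 ∧ G.Adj x2 u2 ∧ ¬G.Adj x1 u2) ∨
              (G.Adj x1 u2 ∧ ¬G.Adj x2 u2 ∧ G.Adj x2 u1 ∧ ¬G.Adj x1 u1) := by
            rcases d1 with k1 | k1 <;> rcases d2 with k2 | k2
            · exact Or.inl ⟨k1, k2⟩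
            · by_cases m : G.Adj x2 u1
              · exact Or.inr (Or.inl ⟨m, k2⟩)
              · by_cases m2 : G.Adj x1 u2
                · exact Or.inl ⟨k1, m2⟩
                · exact Or.inr (Or.inr (Or.inl ⟨k1, m, k2, m2⟩))
            · by_cases m : G.Adj x1 u1
              · exact Or.inl ⟨m, k2⟩
              · by_cases m2 : G.Adj x2 u2
                · exact Or.inr (Or.inl ⟨k1, m2⟩)
                · exact Or.inr (Or.inr (Or.inr ⟨k2, m2, k1, m⟩))
            · exact Or.inr (Or.inl ⟨k1, k2⟩)
          have e1 : rk X top a = rk X top x1 + 1 + btwn X top x1 a := rk_eq X htop hx1 hA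
          have e2 : rk X top x2 = rk X top b + 1 + btwn X top b x2 := rk_eq X htop hb hC
          have e3 : rk X top x2 = rk X top x1 + 1 + btwn X top x1 x2 := rk_eq X htop hx1 h12
          have e4 : rk X top b = rk X top a + 1 + btwn X top a b := rk_eq X htop ha hab
          rcases hcase with ⟨h1, h2⟩ | ⟨h1, h2⟩ | ⟨h1, hn1, h2, hn2⟩ | ⟨h1, hn, h2, hn'⟩
          · -- both u adjacent to x1
            have hS'sq : IsC4Square G {x1, a, u1, u2} :=
              isC4_of_nice htop hbot hadj hdisj hX hY hx1 ha hu1 hu2 (tne hA) (tne hu12)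
                h1 h2 c11 c12
            have hT'sq : IsC4Square G {b, x2, y1, y2} :=
              isC4_of_nice htop hbot hadj hdisj hX hY hb hx2 hy1 hy2 (tne hC) (tne hy12)
                aby1 aby2 a21 a22
            have hdS'T' : Disjoint ({x1, a, u1, u2} : Finset V) {b, x2, y1, y2} :=
              disj4 hdisj hx1 ha hu1 hu2 hb hx2 hy1 hy2
                (tne (hA.trans hab)) (tne h12) (tne hab) (tne (hab.trans hC))
                hu1y1 hu1y2 hu2y1 hu2y2
            obtain ⟨P', hP', hcard, hsum⟩ := exchange2 hP hSP hTP hST hS'sq hT'sq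
              (by rw [hSeq, hTeq]; intro w hw;
                  simp only [Finset.mem_insert, Finset.mem_singleton, Finset.mem_union] at hw ⊢;
                  tauto)
              (by rw [hSeq, hTeq]; intro w hw;
                  simp only [Finset.mem_insert, Finset.mem_singleton, Finset.mem_union] at hw ⊢;
                  tauto)
              hdS'T' (Finset.insert_nonempty _ _) (Finset.insert_nonempty _ _)
            have hm := hmin P' hP' hcard
            have hs := hsum (fun A => sqCost X top A + sqCost Y top A)
            have cS'1 : sqCost X top {x1, a, u1, u2} = btwn X top x1 a :=
              sqCost_eval X top hx1 ha hu1X hu2X hA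
            have cS'2 : sqCost Y top {x1, a, u1, u2} = btwn Y top u1 u2 := by
              rw [show ({x1, a, u1, u2} : Finset V) = {u1, u2, x1, a} by ext w; simp; tauto]
              exact sqCost_eval Y top hu1 hu2 hx1Y haY hu12
            have cT'1 : sqCost X top {b, x2, y1, y2} = btwn X top b x2 :=
              sqCost_eval X top hb hx2 hy1X hy2X hC
            have cT'2 : sqCost Y top {b, x2, y1, y2} = btwn Y top y1 y2 := by
              rw [show ({b, x2, y1, y2} : Finset V) = {y1, y2, b, x2} by ext w; simp; tauto]
              exact sqCost_eval Y top hy1 hy2 hbY hx2Y hy12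
            unfold PhiP at hm
            simp only [cS1, cS2, cT1, cT2, cS'1, cS'2, cT'1, cT'2] at hs
            omega
          · -- both u adjacent to x2
            have hS'sq : IsC4Square G {x1, a, y1, y2} :=
              isC4_of_nice htop hbot hadj hdisj hX hY hx1 ha hy1 hy2 (tne hA) (tne hy12)
                a11 a12 aay1 aay2
            have hT'sq : IsC4Square G {b, x2, u1, u2} :=
              isC4_of_nice htop hbot hadj hdisj hX hY hb hx2 hu1 hu2 (tne hC) (tne hu12)
                c21 c22 h1 h2
            have hdS'T' : Disjoint ({x1, a, y1, y2} : Finset V) {b, x2, u1, u2} :=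
              disj4 hdisj hx1 ha hy1 hy2 hb hx2 hu1 hu2
                (tne (hA.trans hab)) (tne h12) (tne hab) (tne (hab.trans hC))
                hy1u1 hy1u2 hy2u1 hy2u2
            obtain ⟨P', hP', hcard, hsum⟩ := exchange2 hP hSP hTP hST hS'sq hT'sq
              (by rw [hSeq, hTeq]; intro w hw;
                  simp only [Finset.mem_insert, Finset.mem_singleton, Finset.mem_union] at hw ⊢;
                  tauto)
              (by rw [hSeq, hTeq]; intro w hw;
                  simp only [Finset.mem_insert, Finset.mem_singleton, Finset.mem_union] at hw ⊢;
                  tauto)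
              hdS'T' (Finset.insert_nonempty _ _) (Finset.insert_nonempty _ _)
            have hm := hmin P' hP' hcard
            have hs := hsum (fun A => sqCost X top A + sqCost Y top A)
            have cS'1 : sqCost X top {x1, a, y1, y2} = btwn X top x1 a :=
              sqCost_eval X top hx1 ha hy1X hy2X hA
            have cS'2 : sqCost Y top {x1, a, y1, y2} = btwn Y top y1 y2 := by
              rw [show ({x1, a, y1, y2} : Finset V) = {y1, y2, x1, a} by ext w; simp; tauto]
              exact sqCost_eval Y top hy1 hy2 hx1Y haY hy12
            have cT'1 : sqCost X top {b, x2, u1, u2} = btwn X top b x2 :=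
              sqCost_eval X top hb hx2 hu1X hu2X hC
            have cT'2 : sqCost Y top {b, x2, u1, u2} = btwn Y top u1 u2 := by
              rw [show ({b, x2, u1, u2} : Finset V) = {u1, u2, b, x2} by ext w; simp; tauto]
              exact sqCost_eval Y top hu1 hu2 hbY hx2Y hu12
            unfold PhiP at hm
            simp only [cS1, cS2, cT1, cT2, cS'1, cS'2, cT'1, cT'2] at hs
            omega
          · -- mixed : u1 with x1, u2 with x2
            have o1 : top u1 < top y1 :=
              order_half htop hbot hadj hdisj hX hY hx1 hx2 hu1 hy1 h12 h1 hn1 a11 a21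
            have o2 : top y2 < top u2 :=
              order_half' htop hbot hadj hdisj hX hY hx1 hx2 hu2 hy2 h12 h2 hn2 a12 a22
            have hS'sq : IsC4Square G {x1, a, u1, y1} :=
              isC4_of_nice htop hbot hadj hdisj hX hY hx1 ha hu1 hy1 (tne hA) (tne o1)
                h1 a11 c11 aay1
            have hT'sq : IsC4Square G {b, x2, y2, u2} :=
              isC4_of_nice htop hbot hadj hdisj hX hY hb hx2 hy2 hu2 (tne hC) (tne o2)
                aby2 c22 a22 h2
            have hdS'T' : Disjoint ({x1, a, u1, y1} : Finset V) {b, x2, y2, u2} :=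
              disj4 hdisj hx1 ha hu1 hy1 hb hx2 hy2 hu2
                (tne (hA.trans hab)) (tne h12) (tne hab) (tne (hab.trans hC))
                hu1y2 (tne hu12) (tne hy12) hy1u2
            obtain ⟨P', hP', hcard, hsum⟩ := exchange2 hP hSP hTP hST hS'sq hT'sq
              (by rw [hSeq, hTeq]; intro w hw;
                  simp only [Finset.mem_insert, Finset.mem_singleton, Finset.mem_union] at hw ⊢;
                  tauto)
              (by rw [hSeq, hTeq]; intro w hw;
                  simp only [Finset.mem_insert, Finset.mem_singleton, Finset.mem_union] at hw ⊢;
                  tauto)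
              hdS'T' (Finset.insert_nonempty _ _) (Finset.insert_nonempty _ _)
            have hm := hmin P' hP' hcard
            have hs := hsum (fun A => sqCost X top A + sqCost Y top A)
            have cS'1 : sqCost X top {x1, a, u1, y1} = btwn X top x1 a :=
              sqCost_eval X top hx1 ha hu1X hy1X hA
            have cS'2 : sqCost Y top {x1, a, u1, y1} = btwn Y top u1 y1 := by
              rw [show ({x1, a, u1, y1} : Finset V) = {u1, y1, x1, a} by ext w; simp; tauto]
              exact sqCost_eval Y top hu1 hy1 hx1Y haY o1
            have cT'1 : sqCost X top {b, x2, y2, u2} = btwn X top b x2 :=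
              sqCost_eval X top hb hx2 hy2X hu2X hC
            have cT'2 : sqCost Y top {b, x2, y2, u2} = btwn Y top y2 u2 := by
              rw [show ({b, x2, y2, u2} : Finset V) = {y2, u2, b, x2} by ext w; simp; tauto]
              exact sqCost_eval Y top hy2 hu2 hbY hx2Y o2
            have f1 : rk Y top y1 = rk Y top u1 + 1 + btwn Y top u1 y1 := rk_eq Y htop hu1 o1
            have f2 : rk Y top u2 = rk Y top y2 + 1 + btwn Y top y2 u2 := rk_eq Y htop hy2 o2
            have f3 : rk Y top y2 = rk Y top y1 + 1 + btwn Y top y1 y2 := rk_eq Y htop hy1 hy12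
            have f4 : rk Y top u2 = rk Y top u1 + 1 + btwn Y top u1 u2 := rk_eq Y htop hu1 hu12
            unfold PhiP at hm
            simp only [cS1, cS2, cT1, cT2, cS'1, cS'2, cT'1, cT'2] at hs
            omega
          · -- reversed mixed : impossible
            have o1 : top u2 < top y1 :=
              order_half htop hbot hadj hdisj hX hY hx1 hx2 hu2 hy1 h12 h1 hn a11 a21
            have o2 : top y1 < top u1 :=
              order_half' htop hbot hadj hdisj hX hY hx1 hx2 hu1 hy1 h12 h2 hn' a11 a21
            exact absurd hu12 (by linarith)
        · exact hbS (by rw [htop hC, hSeq]; simp)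
        · -- crossing-right : x1 < a < x2 < b
          have aay1 : G.Adj a y1 :=
            interval htop hbot hadj hdisj hX hY hx1 ha hx2 hy1 hA hB a11 a21
          have aay2 : G.Adj a y2 :=
            interval htop hbot hadj hdisj hX hY hx1 ha hx2 hy2 hA hB a12 a22
          have ax2u1 : G.Adj x2 u1 :=
            interval htop hbot hadj hdisj hX hY ha hx2 hb hu1 hB hC c11 c21
          have ax2u2 : G.Adj x2 u2 :=
            interval htop hbot hadj hdisj hX hY ha hx2 hb hu2 hB hC c12 c22
          have hS'sq : IsC4Square G {x1, a, y1, y2} :=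
            isC4_of_nice htop hbot hadj hdisj hX hY hx1 ha hy1 hy2 (tne hA) (tne hy12)
              a11 a12 aay1 aay2
          have hT'sq : IsC4Square G {x2, b, u1, u2} :=
            isC4_of_nice htop hbot hadj hdisj hX hY hx2 hb hu1 hu2 (tne hC) (tne hu12)
              ax2u1 ax2u2 c21 c22
          have hdS'T' : Disjoint ({x1, a, y1, y2} : Finset V) {x2, b, u1, u2} :=
            disj4 hdisj hx1 ha hy1 hy2 hx2 hb hu1 hu2
              (tne h12) (tne (h12.trans hC)) (tne hB) (tne hab)
              hy1u1 hy1u2 hy2u1 hy2u2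
          obtain ⟨P', hP', hcard, hsum⟩ := exchange2 hP hSP hTP hST hS'sq hT'sq
            (by rw [hSeq, hTeq]; intro w hw;
                simp only [Finset.mem_insert, Finset.mem_singleton, Finset.mem_union] at hw ⊢;
                tauto)
            (by rw [hSeq, hTeq]; intro w hw;
                simp only [Finset.mem_insert, Finset.mem_singleton, Finset.mem_union] at hw ⊢;
                tauto)
            hdS'T' (Finset.insert_nonempty _ _) (Finset.insert_nonempty _ _)
          have hm := hmin P' hP' hcard
          have hs := hsum (fun A => sqCost X top A + sqCost Y top A)
          have cS'1 : sqCost X top {x1, a, y1, y2} = btwn X top x1 a :=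
            sqCost_eval X top hx1 ha hy1X hy2X hA
          have cS'2 : sqCost Y top {x1, a, y1, y2} = btwn Y top y1 y2 := by
            rw [show ({x1, a, y1, y2} : Finset V) = {y1, y2, x1, a} by ext w; simp; tauto]
            exact sqCost_eval Y top hy1 hy2 hx1Y haY hy12
          have cT'1 : sqCost X top {x2, b, u1, u2} = btwn X top x2 b :=
            sqCost_eval X top hx2 hb hu1X hu2X hC
          have cT'2 : sqCost Y top {x2, b, u1, u2} = btwn Y top u1 u2 := by
            rw [show ({x2, b, u1, u2} : Finset V) = {u1, u2, x2, b} by ext w; simp; tauto]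
            exact sqCost_eval Y top hu1 hu2 hx2Y hbY hu12
          have e1 : rk X top a = rk X top x1 + 1 + btwn X top x1 a := rk_eq X htop hx1 hA
          have e2 : rk X top b = rk X top x2 + 1 + btwn X top x2 b := rk_eq X htop hx2 hC
          have e3 : rk X top x2 = rk X top x1 + 1 + btwn X top x1 x2 := rk_eq X htop hx1 h12
          have e4 : rk X top b = rk X top a + 1 + btwn X top a b := rk_eq X htop ha hab
          have e5 : rk X top x2 = rk X top a + 1 + btwn X top a x2 := rk_eq X htop ha hB
          unfold PhiP at hm
          simp only [cS1, cS2, cT1, cT2, cS'1, cS'2, cT'1, cT'2] at hs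
          omega
      · exact haS (by rw [htop hB, hSeq]; simp)
      · -- a beyond x2 : impossible since x ∈ {a,b} lies strictly inside
        rcases hxab with heq | heq
        · rw [heq] at hb2; exact absurd (hb2.trans hB) (lt_irrefl _)
        · rw [heq] at hb2; exact absurd ((hb2.trans hB).trans hab) (lt_irrefl _)

lemma key {P : Finset (Finset V)}
    (hP : IsC4Packing G P)
    (hmin : ∀ Q : Finset (Finset V), IsC4Packing G Q → Q.card = P.card →
      PhiP X Y top P ≤ PhiP X Y top Q) :
    ∀ S ∈ P, ∀ u ∈ S, ∀ v ∈ S, u ∈ X → v ∈ X → top u < top v →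
      ∀ x ∈ X, ¬(top u < top x ∧ top x < top v) := by
  intro S hSP u hu v hv huX hvX huv x hxX hbad
  obtain ⟨hb1, hb2⟩ := hbad
  have hYnX : ∀ q, q ∈ Y → q ∉ X := fun q hq => Set.disjoint_right.mp hdisj hq
  obtain ⟨x1, x2, y1, y2, hx1, hx2, hy1, hy2, h12, hy12, hSeq, a11, a12, a21, a22⟩ :=
    square_struct htop hbot hadj hdisj hX hY hunion (hP.1 S hSP)
  have hmem : ∀ w ∈ S, w ∈ X → w = x1 ∨ w = x2 := by
    intro w hw hwX
    rw [hSeq] at hw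
    simp only [Finset.mem_insert, Finset.mem_singleton] at hw
    rcases hw with rfl | rfl | rfl | rfl
    · exact Or.inl rfl
    · exact Or.inr rfl
    · exact absurd hwX (hYnX _ hy1)
    · exact absurd hwX (hYnX _ hy2)
  have hueq := hmem u hu huX
  have hveq := hmem v hv hvX
  rcases hueq with rfl | rfl
  · rcases hveq with rfl | rfl
    · exact absurd huv (lt_irrefl _)
    · exact key_main htop hbot hadj hdisj hX hY hunion hP hmin hSP hx1 hx2 hy1 hy2 h12 hy12
        hSeq a11 a12 a21 a22 hxX hb1 hb2
  · rcases hveq with rfl | rfl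
    · exact absurd (huv.trans h12) (lt_irrefl _)
    · exact absurd huv (lt_irrefl _)


end Graph

end Stmt10

open Stmt10 in
/-- Let `G` be a bipartite permutation graph with bipartition `(X, Y)`
given by a permutation diagram `top, bot`. Then there is a maximum `C4`-packing `P` such
that for every square `S ∈ P` the two vertices of `S ∩ X` are consecutive in `X` under
the ordering by `top`, and the two vertices of `S ∩ Y` are consecutive in `Y` under the
ordering by `top`. -/
theorem stmt10 {V : Type*} [Fintype V] [DecidableEq V] (G : SimpleGraph V)
    (top bot : V → ℝ) (htop : Function.Injective top) (hbot : Function.Injective bot)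
    (hadj : ∀ u v, G.Adj u v ↔
      (top u < top v ∧ bot v < bot u) ∨ (top v < top u ∧ bot u < bot v))
    (X Y : Set V) (hdisj : Disjoint X Y) (hunion : X ∪ Y = Set.univ)
    (hX : ∀ u ∈ X, ∀ v ∈ X, ¬G.Adj u v) (hY : ∀ u ∈ Y, ∀ v ∈ Y, ¬G.Adj u v) :
    ∃ P : Finset (Finset V), IsC4Packing G P ∧
      (∀ Q : Finset (Finset V), IsC4Packing G Q → Q.card ≤ P.card) ∧
      (∀ S ∈ P, ∀ u ∈ S, ∀ v ∈ S, u ∈ X → v ∈ X → top u < top v →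
        ∀ x ∈ X, ¬(top u < top x ∧ top x < top v)) ∧
      (∀ S ∈ P, ∀ u ∈ S, ∀ v ∈ S, u ∈ Y → v ∈ Y → top u < top v →
        ∀ y ∈ Y, ¬(top u < top y ∧ top y < top v)) := by
  classical
  have hpackEmpty : IsC4Packing G (∅ : Finset (Finset V)) := by
    constructor
    · intro S hS; simp at hS
    · simp
  obtain ⟨P0, hP0mem, hP0max⟩ := Finset.exists_max_image
    (Finset.univ.filter fun Q : Finset (Finset V) => IsC4Packing G Q) Finset.card
    ⟨∅, by simp [hpackEmpty]⟩
  have hP0 : IsC4Packing G P0 := (Finset.mem_filter.mp hP0mem).2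
  obtain ⟨P, hPmem, hPmin⟩ := Finset.exists_min_image
    ((Finset.univ.filter fun Q : Finset (Finset V) => IsC4Packing G Q).filter
      fun Q => Q.card = P0.card) (PhiP X Y top)
    ⟨P0, by simp [hP0]⟩
  simp only [Finset.mem_filter, Finset.mem_univ, true_and] at hPmem
  obtain ⟨hP, hPcard⟩ := hPmem
  have hmax : ∀ Q : Finset (Finset V), IsC4Packing G Q → Q.card ≤ P.card := by
    intro Q hQ
    rw [hPcard]
    exact hP0max Q (by simp [hQ])
  have hmin : ∀ Q : Finset (Finset V), IsC4Packing G Q → Q.card = P.card →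
      PhiP X Y top P ≤ PhiP X Y top Q := by
    intro Q hQ hc
    exact hPmin Q (by simp [hQ, hc.trans hPcard])
  have hminYX : ∀ Q : Finset (Finset V), IsC4Packing G Q → Q.card = P.card →
      PhiP Y X top P ≤ PhiP Y X top Q := by
    intro Q hQ hc
    rw [PhiP_comm Y X top P, PhiP_comm Y X top Q]
    exact hmin Q hQ hc
  refine ⟨P, hP, hmax, ?_, ?_⟩
  · exact key htop hbot hadj hdisj hX hY hunion hP hmin
  · exact key htop hbot hadj hdisj.symm hY hX (by rw [Set.union_comm]; exact hunion) hP hminYX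
end

section
/- Let G be a finite simple graph whose vertex set V is partitioned into three sets A1, A2, A3, each of which is a clique of G (that is, G is the complement of a 3-partite graph). Then G has a triangle partition if and only if there exists a set S ⊆ V with |S| ≤ 42 such that the subgraph of G induced on S has a triangle partition and |Ai ∖ S| ≡ 0 (mod 3) for each i ∈ {1, 2, 3}. -/
/-- A "good" family on ground set `C`. -/
def GoodOn {V : Type*} (G : SimpleGraph V) (P : Finset (Finset V)) (C : Finset V) : Prop :=
  (∀ T ∈ P, IsTriangle G T ∧ T ⊆ C) ∧
    ((↑P : Set (Finset V)).Pairwise fun S T => Disjoint S T) ∧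
    ∀ v ∈ C, ∃ T ∈ P, v ∈ T

lemma goodOn_union {V : Type*} [DecidableEq V] {G : SimpleGraph V}
    {P1 P2 : Finset (Finset V)} {C1 C2 : Finset V}
    (h1 : GoodOn G P1 C1) (h2 : GoodOn G P2 C2) (hd : Disjoint C1 C2) :
    GoodOn G (P1 ∪ P2) (C1 ∪ C2) := by
  obtain ⟨h1a, h1b, h1c⟩ := h1
  obtain ⟨h2a, h2b, h2c⟩ := h2
  refine ⟨?_, ?_, ?_⟩
  · intro T hT
    rcases Finset.mem_union.mp hT with h | h
    · exact ⟨(h1a T h).1, (h1a T h).2.trans Finset.subset_union_left⟩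
    · exact ⟨(h2a T h).1, (h2a T h).2.trans Finset.subset_union_right⟩
  · intro x hx y hy hxy
    simp only [Finset.coe_union, Set.mem_union, Finset.mem_coe] at hx hy
    rcases hx with hx | hx <;> rcases hy with hy | hy
    · exact h1b hx hy hxy
    · exact hd.mono (h1a x hx).2 (h2a y hy).2
    · exact (hd.mono (h1a y hy).2 (h2a x hx).2).symm
    · exact h2b hx hy hxy
  · intro v hv
    rcases Finset.mem_union.mp hv with h | h
    · obtain ⟨T, hT, hvT⟩ := h1c v h
      exact ⟨T, Finset.mem_union_left _ hT, hvT⟩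
    · obtain ⟨T, hT, hvT⟩ := h2c v h
      exact ⟨T, Finset.mem_union_right _ hT, hvT⟩

lemma clique_partition {V : Type*} [DecidableEq V] (G : SimpleGraph V) :
    ∀ B : Finset V, G.IsClique ↑B → B.card % 3 = 0 →
    ∃ R : Finset (Finset V), GoodOn G R B := by
  intro B
  induction B using Finset.strongInduction with
  | _ B ih =>
  intro hcl hmod
  rcases eq_or_ne B ∅ with rfl | hne
  · exact ⟨∅, by simp, by simp, by simp⟩
  · have hcard : 3 ≤ B.card := by
      have : B.card ≠ 0 := by simpa [Finset.card_eq_zero] using hne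
      omega
    obtain ⟨a, ha⟩ := Finset.card_pos.mp (show 0 < B.card by omega)
    have h2 : 0 < (B.erase a).card := by
      rw [Finset.card_erase_of_mem ha]; omega
    obtain ⟨b, hb⟩ := Finset.card_pos.mp h2
    have h3 : 0 < ((B.erase a).erase b).card := by
      rw [Finset.card_erase_of_mem hb, Finset.card_erase_of_mem ha]; omega
    obtain ⟨c, hc⟩ := Finset.card_pos.mp h3
    have hbB : b ∈ B := Finset.mem_of_mem_erase hb
    have hcB : c ∈ B := Finset.mem_of_mem_erase (Finset.mem_of_mem_erase hc)
    have hab : a ≠ b := (Finset.ne_of_mem_erase hb).symm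
    have hbc : b ≠ c := (Finset.ne_of_mem_erase hc).symm
    have hac : a ≠ c := (Finset.ne_of_mem_erase (Finset.mem_of_mem_erase hc)).symm
    set T : Finset V := {a, b, c} with hT
    have hTB : T ⊆ B := by
      intro x hx
      simp only [hT, Finset.mem_insert, Finset.mem_singleton] at hx
      rcases hx with rfl | rfl | rfl <;> assumption
    have hTcard : T.card = 3 := by
      rw [hT, Finset.card_insert_of_notMem (by simp [hab, hac]),
        Finset.card_insert_of_notMem (by simp [hbc]), Finset.card_singleton]
    have hTtri : IsTriangle G T := by
      refine ⟨hTcard, ?_⟩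
      intro x hx y hy hxy
      exact hcl (hTB (by exact_mod_cast hx)) (hTB (by exact_mod_cast hy)) hxy
    have hss : B \ T ⊂ B := Finset.sdiff_ssubset hTB ⟨a, by simp [hT]⟩
    have hmod' : (B \ T).card % 3 = 0 := by
      rw [Finset.card_sdiff_of_subset hTB, hTcard]; omega
    obtain ⟨R', hR1, hR2, hR3⟩ := ih (B \ T) hss
      (hcl.subset (by exact_mod_cast (Finset.sdiff_subset.trans subset_rfl : B \ T ⊆ B))) hmod'
    refine ⟨insert T R', ?_, ?_, ?_⟩
    · intro T' hT'
      rcases Finset.mem_insert.mp hT' with rfl | h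
      · exact ⟨hTtri, hTB⟩
      · exact ⟨(hR1 T' h).1, (hR1 T' h).2.trans Finset.sdiff_subset⟩
    · intro x hx y hy hxy
      simp only [Finset.coe_insert, Set.mem_insert_iff, Finset.mem_coe] at hx hy
      have key : ∀ U ∈ R', Disjoint T U := by
        intro U hU
        have : U ⊆ B \ T := (hR1 U hU).2
        exact Finset.disjoint_left.mpr fun v hvT hvU =>
          (Finset.mem_sdiff.mp (this hvU)).2 hvT
      rcases hx with rfl | hx <;> rcases hy with rfl | hy
      · exact absurd rfl hxy
      · exact key y hy
      · exact (key x hx).symm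
      · exact hR2 hx hy hxy
    · intro v hv
      by_cases hvT : v ∈ T
      · exact ⟨T, Finset.mem_insert_self _ _, hvT⟩
      · obtain ⟨U, hU, hvU⟩ := hR3 v (Finset.mem_sdiff.mpr ⟨hv, hvT⟩)
        exact ⟨U, Finset.mem_insert_of_mem hU, hvU⟩

lemma select_lemma {α : Type*} [DecidableEq α] (W : Finset (Fin 3 → ZMod 3))
    (g : α → Fin 3 → ZMod 3) :
    ∀ P : Finset α, (∀ T ∈ P, g T ≠ 0 → g T ∈ W) →
    ∃ Q ⊆ P, Q.card ≤ 2 * W.card ∧ ∑ T ∈ Q, g T = ∑ T ∈ P, g T := by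
  intro P
  induction P using Finset.strongInduction with
  | _ P ih =>
  intro hW
  by_cases h0 : ∃ T ∈ P, g T = 0
  · obtain ⟨T, hT, hgT⟩ := h0
    obtain ⟨Q, hQP, hcard, hsum⟩ := ih (P.erase T) (Finset.erase_ssubset hT)
      (fun T' h h' => hW T' (Finset.mem_of_mem_erase h) h')
    exact ⟨Q, hQP.trans (Finset.erase_subset _ _), hcard,
      by rw [hsum, Finset.sum_erase _ hgT]⟩
  by_cases h3 : ∃ v : Fin 3 → ZMod 3, 3 ≤ (P.filter (fun T => g T = v)).card
  · obtain ⟨v, hv⟩ := h3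
    obtain ⟨R, hR, hRcard⟩ := Finset.exists_subset_card_eq hv
    have hRP : R ⊆ P := hR.trans (Finset.filter_subset _ _)
    have hRne : R.Nonempty := Finset.card_pos.mp (by omega)
    obtain ⟨Q, hQ, hc, hs⟩ := ih (P \ R) (Finset.sdiff_ssubset hRP hRne)
      (fun T h h' => hW T (Finset.mem_sdiff.mp h).1 h')
    refine ⟨Q, hQ.trans Finset.sdiff_subset, hc, ?_⟩
    have hRsum : ∑ T ∈ R, g T = 0 := by
      rw [Finset.sum_congr rfl (fun T h => (Finset.mem_filter.mp (hR h)).2),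
        Finset.sum_const, hRcard]
      ext i
      show (3 : ℕ) • v i = 0
      rw [nsmul_eq_mul]
      have : ((3 : ℕ) : ZMod 3) = 0 := by decide
      rw [this, zero_mul]
    rw [hs, Finset.sum_sdiff_eq_sub hRP, hRsum, sub_zero]
  · push_neg at h0 h3
    refine ⟨P, subset_rfl, ?_, rfl⟩
    have hsub : P ⊆ W.biUnion (fun v => P.filter (fun T => g T = v)) := fun T hT =>
      Finset.mem_biUnion.mpr ⟨g T, hW T hT (h0 T hT), Finset.mem_filter.mpr ⟨hT, rfl⟩⟩
    calc P.card ≤ (W.biUnion (fun v => P.filter (fun T => g T = v))).card :=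
          Finset.card_le_card hsub
      _ ≤ ∑ v ∈ W, (P.filter (fun T => g T = v)).card := Finset.card_biUnion_le
      _ ≤ ∑ _v ∈ W, 2 := Finset.sum_le_sum fun v _ => by have := h3 v; omega
      _ = 2 * W.card := by rw [Finset.sum_const, smul_eq_mul, Nat.mul_comm]

/-- Let `G` be the complement of a 3-partite graph: its vertex set is
partitioned into three cliques `A 0, A 1, A 2`. Then `G` has a triangle partition iff
there is a set `S` of at most 42 vertices such that the subgraph induced on `S` has a
triangle partition and `|A i ∖ S| ≡ 0 (mod 3)` for each `i`. -/
theorem stmt14 {V : Type*} [Fintype V] [DecidableEq V] (G : SimpleGraph V)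
    (A : Fin 3 → Set V)
    (hdisj : ∀ i j, i ≠ j → Disjoint (A i) (A j))
    (hunion : A 0 ∪ A 1 ∪ A 2 = Set.univ)
    (hclique : ∀ i, G.IsClique (A i)) :
    (∃ P : Finset (Finset V), IsTrianglePartition G P) ↔
      ∃ S : Finset V, S.card ≤ 42 ∧
        (∃ P : Finset (Finset {v : V // v ∈ (S : Set V)}),
          IsTrianglePartition (G.induce (S : Set V)) P) ∧
        ∀ i : Fin 3, (A i \ (S : Set V)).ncard % 3 = 0 := by
  classical
  have hcover : ∀ v : V, ∃ i, v ∈ A i := by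
    intro v
    have : v ∈ A 0 ∪ A 1 ∪ A 2 := hunion ▸ Set.mem_univ v
    rcases this with (h | h) | h
    exacts [⟨0, h⟩, ⟨1, h⟩, ⟨2, h⟩]
  constructor
  · rintro ⟨P, ⟨htri, hdisjP⟩, hcov⟩
    set f : Finset V → Fin 3 → ℕ := fun T i => (T.filter (· ∈ A i)).card with hf
    set g : Finset V → Fin 3 → ZMod 3 := fun T i => (f T i : ZMod 3) with hg
    set W : Finset (Fin 3 → ZMod 3) := Finset.univ.filter
      (fun v => v 0 + v 1 + v 2 = 0 ∧ v ≠ 0 ∧ v ≠ fun _ => 2) with hWdef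
    have hWcard : W.card = 7 := by rw [hWdef]; decide
    -- disjointness of filters
    have hfd : ∀ (T : Finset V) (i j : Fin 3), i ≠ j →
        Disjoint (T.filter (· ∈ A i)) (T.filter (· ∈ A j)) := by
      intro T i j hij
      refine Finset.disjoint_left.mpr fun v hvi hvj => ?_
      exact Set.disjoint_left.mp (hdisj i j hij) (Finset.mem_filter.mp hvi).2
        (Finset.mem_filter.mp hvj).2
    -- counts sum to 3
    have hfsum : ∀ T ∈ P, f T 0 + f T 1 + f T 2 = 3 := by
      intro T hT
      have hsplit : (T.filter (· ∈ A 0)) ∪ (T.filter (· ∈ A 1)) ∪ (T.filter (· ∈ A 2)) = T := by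
        ext v
        simp only [Finset.mem_union, Finset.mem_filter]
        constructor
        · rintro ((⟨h, _⟩ | ⟨h, _⟩) | ⟨h, _⟩) <;> exact h
        · intro hv
          obtain ⟨i, hi⟩ := hcover v
          fin_cases i
          · exact Or.inl (Or.inl ⟨hv, hi⟩)
          · exact Or.inl (Or.inr ⟨hv, hi⟩)
          · exact Or.inr ⟨hv, hi⟩
      have hcard3 : T.card = 3 := (htri T hT).1
      calc f T 0 + f T 1 + f T 2
          = ((T.filter (· ∈ A 0)) ∪ (T.filter (· ∈ A 1)) ∪ (T.filter (· ∈ A 2))).card := by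
            rw [Finset.card_union_of_disjoint, Finset.card_union_of_disjoint]
            · exact hfd T 0 1 (by decide)
            · exact Finset.disjoint_union_left.mpr
                ⟨hfd T 0 2 (by decide), hfd T 1 2 (by decide)⟩
        _ = 3 := by rw [hsplit, hcard3]
    have hfle : ∀ (T : Finset V), T ∈ P → ∀ i, f T i ≤ 3 := by
      intro T hT i
      calc f T i ≤ T.card := Finset.card_filter_le _ _
        _ = 3 := (htri T hT).1
    -- membership in W
    have hWmem : ∀ T ∈ P, g T ≠ 0 → g T ∈ W := by
      intro T hT hne0
      rw [hWdef, Finset.mem_filter]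
      refine ⟨Finset.mem_univ _, ?_, hne0, ?_⟩
      · show ((f T 0 : ZMod 3)) + (f T 1 : ZMod 3) + (f T 2 : ZMod 3) = 0
        rw [← Nat.cast_add, ← Nat.cast_add, hfsum T hT]
        decide
      · intro h2
        have key : ∀ i : Fin 3, f T i = 2 := by
          intro i
          have : (f T i : ZMod 3) = ((2 : ℕ) : ZMod 3) := congrFun h2 i
          have hmeq := (ZMod.natCast_eq_natCast_iff _ _ _).mp this
          have := hfle T hT i
          unfold Nat.ModEq at hmeq
          omega
        have := hfsum T hT
        rw [key 0, key 1, key 2] at this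
        omega
    obtain ⟨Q, hQP, hQcard, hgsum⟩ := select_lemma W g P hWmem
    set S : Finset V := Q.biUnion (fun T => T) with hSdef
    have hTS : ∀ T ∈ Q, T ⊆ S := fun T hT => Finset.subset_biUnion_of_mem (fun T => T) hT
    have hQdisj : ∀ T₁ ∈ Q, ∀ T₂ ∈ Q, T₁ ≠ T₂ → Disjoint T₁ T₂ := by
      intro T₁ h₁ T₂ h₂ hne
      exact hdisjP (hQP h₁) (hQP h₂) hne
    have hScard : S.card ≤ 42 := by
      rw [hSdef, Finset.card_biUnion hQdisj]
      calc ∑ T ∈ Q, T.card = ∑ T ∈ Q, 3 :=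
            Finset.sum_congr rfl fun T hT => (htri T (hQP hT)).1
        _ = Q.card * 3 := by rw [Finset.sum_const, smul_eq_mul]
        _ ≤ 14 * 3 := by
            have : Q.card ≤ 14 := by rw [hWcard] at hQcard; omega
            omega
        _ = 42 := by norm_num
    refine ⟨S, hScard, ?_, ?_⟩
    · -- induced partition on S
      refine ⟨Q.image (fun T => T.subtype (fun v => v ∈ (↑S : Set V))), ⟨?_, ?_⟩, ?_⟩
      · intro T' hT'
        obtain ⟨T, hTQ, rfl⟩ := Finset.mem_image.mp hT'
        constructor
        · rw [Finset.card_subtype]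
          have : T.filter (fun v => v ∈ (↑S : Set V)) = T := by
            refine Finset.filter_true_of_mem fun v hv => ?_
            exact Finset.mem_coe.mpr (hTS T hTQ hv)
          rw [this]; exact (htri T (hQP hTQ)).1
        · intro a ha b hb hab
          rw [Finset.mem_coe, Finset.mem_subtype] at ha hb
          have : G.Adj ↑a ↑b := (htri T (hQP hTQ)).2 ha hb (fun h => hab (Subtype.ext h))
          exact this
      · intro x hx y hy hxy
        rw [Finset.mem_coe, Finset.mem_image] at hx hy
        obtain ⟨T₁, h₁, rfl⟩ := hx
        obtain ⟨T₂, h₂, rfl⟩ := hy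
        have hne : T₁ ≠ T₂ := fun h => hxy (by rw [h])
        refine Finset.disjoint_left.mpr fun a ha hb => ?_
        rw [Finset.mem_subtype] at ha hb
        exact Finset.disjoint_left.mp (hQdisj T₁ h₁ T₂ h₂ hne) ha hb
      · rintro ⟨v, hv⟩
        rw [Finset.mem_coe, hSdef, Finset.mem_biUnion] at hv
        obtain ⟨T, hTQ, hvT⟩ := hv
        exact ⟨T.subtype _, Finset.mem_image_of_mem _ hTQ, Finset.mem_subtype.mpr hvT⟩
    · -- mod-3 condition
      intro i
      set Bf : Finset V := Finset.univ.filter (· ∈ A i) with hBf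
      have hset : A i \ (↑S : Set V) = ↑(Bf \ S) := by
        ext v
        simp [hBf, Set.mem_diff]
      rw [hset, Set.ncard_coe_finset]
      have huniv : (Finset.univ : Finset V) = P.biUnion (fun T => T) := by
        ext v
        simp only [Finset.mem_univ, true_iff, Finset.mem_biUnion]
        exact hcov v
      have hbiU : ∀ (Pp : Finset (Finset V)), Pp ⊆ P →
          (Pp.biUnion (fun T => T)).filter (· ∈ A i) = Pp.biUnion (fun T => T.filter (· ∈ A i)) := by
        intro Pp _
        ext v
        simp only [Finset.mem_filter, Finset.mem_biUnion]
        tauto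
      have hcards : ∀ (Pp : Finset (Finset V)), Pp ⊆ P →
          ((Pp.biUnion (fun T => T)).filter (· ∈ A i)).card = ∑ T ∈ Pp, f T i := by
        intro Pp hPp
        rw [hbiU Pp hPp]
        exact Finset.card_biUnion fun T₁ h₁ T₂ h₂ hne =>
          (hdisjP (hPp h₁) (hPp h₂) hne).mono
            (Finset.filter_subset _ _) (Finset.filter_subset _ _)
      have h1 : Bf.card = ∑ T ∈ P, f T i := by
        rw [hBf, huniv]; exact hcards P subset_rfl
      have h2 : (Bf ∩ S).card = ∑ T ∈ Q, f T i := by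
        have : Bf ∩ S = (Q.biUnion (fun T => T)).filter (· ∈ A i) := by
          ext v
          simp only [hBf, hSdef, Finset.mem_inter, Finset.mem_filter, Finset.mem_univ,
            true_and, Finset.mem_biUnion]
          tauto
        rw [this]; exact hcards Q hQP
      have h3 : (Bf ∩ S).card + (Bf \ S).card = Bf.card := by
        rw [Finset.card_inter_add_card_sdiff]
      have hmodeq : (∑ T ∈ Q, f T i) % 3 = (∑ T ∈ P, f T i) % 3 := by
        have happ : (∑ T ∈ Q, g T) i = (∑ T ∈ P, g T) i := by rw [hgsum]
        rw [Finset.sum_apply, Finset.sum_apply] at happ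
        have : ((∑ T ∈ Q, f T i : ℕ) : ZMod 3) = ((∑ T ∈ P, f T i : ℕ) : ZMod 3) := by
          push_cast
          exact happ
        exact (ZMod.natCast_eq_natCast_iff _ _ _).mp this
      have hle : (∑ T ∈ Q, f T i) ≤ ∑ T ∈ P, f T i := Finset.sum_le_sum_of_subset hQP
      omega
  · rintro ⟨S, hScard, ⟨P', ⟨⟨htri', hdisjP'⟩, hcov'⟩⟩, hmod⟩
    -- pieces: B i := A i \ S
    set Bf : Fin 3 → Finset V := fun i => Finset.univ.filter (fun v => v ∈ A i ∧ v ∉ S)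
      with hBf
    have hBfco : ∀ i, (↑(Bf i) : Set V) = A i \ (↑S : Set V) := by
      intro i; ext v; simp [hBf, Set.mem_diff]
    have hBmod : ∀ i, (Bf i).card % 3 = 0 := by
      intro i
      have := hmod i
      rwa [← hBfco i, Set.ncard_coe_finset] at this
    have hBclique : ∀ i, G.IsClique ↑(Bf i) := by
      intro i
      refine (hclique i).subset ?_
      rw [hBfco]; exact Set.diff_subset
    have hR : ∀ i, ∃ R, GoodOn G R (Bf i) := fun i =>
      clique_partition G (Bf i) (hBclique i) (hBmod i)
    obtain ⟨R0, hR0⟩ := hR 0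
    obtain ⟨R1, hR1⟩ := hR 1
    obtain ⟨R2, hR2⟩ := hR 2
    -- lifted partition on S
    set P'' : Finset (Finset V) := P'.image (fun T => T.image Subtype.val) with hP''
    have hgood'' : GoodOn G P'' S := by
      refine ⟨?_, ?_, ?_⟩
      · intro T hT
        obtain ⟨T', hT', rfl⟩ := Finset.mem_image.mp hT
        refine ⟨⟨?_, ?_⟩, ?_⟩
        · rw [Finset.card_image_of_injective _ Subtype.val_injective]
          exact (htri' T' hT').1
        · intro x hx y hy hxy
          rw [Finset.mem_coe, Finset.mem_image] at hx hy
          obtain ⟨a, ha, rfl⟩ := hx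
          obtain ⟨b, hb, rfl⟩ := hy
          have hab : a ≠ b := fun h => hxy (by rw [h])
          exact (htri' T' hT').2 ha hb hab
        · intro v hv
          obtain ⟨a, _, rfl⟩ := Finset.mem_image.mp hv
          exact a.2
      · intro x hx y hy hxy
        rw [Finset.mem_coe, Finset.mem_image] at hx hy
        obtain ⟨T₁, h₁, rfl⟩ := hx
        obtain ⟨T₂, h₂, rfl⟩ := hy
        have hne : T₁ ≠ T₂ := fun h => hxy (by rw [h])
        refine Finset.disjoint_left.mpr fun v hv₁ hv₂ => ?_
        obtain ⟨a, ha, rfl⟩ := Finset.mem_image.mp hv₁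
        obtain ⟨b, hb, hba⟩ := Finset.mem_image.mp hv₂
        have : b = a := Subtype.ext hba
        subst this
        exact Finset.disjoint_left.mp (hdisjP' h₁ h₂ hne) ha hb
      · intro v hv
        obtain ⟨T', hT', hvT'⟩ := hcov' ⟨v, Finset.mem_coe.mpr hv⟩
        exact ⟨T'.image Subtype.val, Finset.mem_image_of_mem _ hT',
          Finset.mem_image_of_mem _ hvT'⟩
    -- combine
    have hdSB : ∀ i, Disjoint S (Bf i) := by
      intro i
      refine Finset.disjoint_left.mpr fun v hvS hvB => ?_
      exact ((Finset.mem_filter.mp hvB).2.2) hvS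
    have hdBB : ∀ i j, i ≠ j → Disjoint (Bf i) (Bf j) := by
      intro i j hij
      refine Finset.disjoint_left.mpr fun v hvi hvj => ?_
      exact Set.disjoint_left.mp (hdisj i j hij) (Finset.mem_filter.mp hvi).2.1
        (Finset.mem_filter.mp hvj).2.1
    have g01 := goodOn_union hR0 hR1 (hdBB 0 1 (by decide))
    have g012 := goodOn_union g01 hR2
      (Finset.disjoint_union_left.mpr ⟨hdBB 0 2 (by decide), hdBB 1 2 (by decide)⟩)
    have gall := goodOn_union hgood'' g012
      (Finset.disjoint_union_right.mpr ⟨Finset.disjoint_union_right.mpr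
        ⟨hdSB 0, hdSB 1⟩, hdSB 2⟩)
    obtain ⟨ga, gb, gc⟩ := gall
    refine ⟨P'' ∪ (R0 ∪ R1 ∪ R2), ⟨fun T hT => (ga T hT).1, gb⟩, ?_⟩
    intro v
    apply gc
    simp only [Finset.mem_union]
    by_cases hvS : v ∈ S
    · exact Or.inl hvS
    · obtain ⟨i, hi⟩ := hcover v
      have : v ∈ Bf i := Finset.mem_filter.mpr ⟨Finset.mem_univ _, hi, hvS⟩
      fin_cases i
      · exact Or.inr (Or.inl (Or.inl this))
      · exact Or.inr (Or.inl (Or.inr this))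
      · exact Or.inr (Or.inr this)
end
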